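/- arXiv:2403.17563 — 7 statements merged into one kernel-verified Lean document; each statement's English description precedes it below -/
import Mathlib

section
/- Let β₁, β₂ > 0 be real numbers satisfying ν₀(β₁ + β₂ν₁) ≥ sinh 1, where ν₀ = √(1 − sin²1) and ν₁ = −sin 2/(1 + cos 2). Let p be analytic on the open unit disk 𝔻 with p(0) = 1, and suppose that for every z ∈ 𝔻 the value 1 + β₁·z·p′(z) + β₂·z²·p″(z) lies in the set {1 + sin w : w ∈ 𝔻}. Then for every z ∈ 𝔻, p(z) ∈ {1 + sin w : w ∈ 𝔻}, i.e. p(z) ≺ 1 + sin z. -/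
open Metric

noncomputable def nu0 : ℝ := Real.sqrt (1 - Real.sin 1 ^ 2)

noncomputable def nu1 : ℝ := -Real.sin 2 / (1 + Real.cos 2)

open Real Complex in

-- basic constants
lemma cos1_pos : 0 < Real.cos 1 :=
  Real.cos_pos_of_mem_Ioo ⟨by linarith [Real.pi_gt_three], by linarith [Real.pi_gt_three]⟩

lemma sin1_pos : 0 < Real.sin 1 :=
  Real.sin_pos_of_pos_of_lt_pi one_pos (by linarith [Real.pi_gt_three])

lemma cos1_lt_sin1 : Real.cos 1 < Real.sin 1 := by
  rw [← Real.cos_pi_div_two_sub 1]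
  exact Real.cos_lt_cos_of_nonneg_of_le_pi (by linarith [Real.pi_gt_three])
    (by linarith [Real.pi_gt_three]) (by linarith [Real.pi_lt_d2])

lemma tan1_gt_one : 1 < Real.tan 1 :=
  Real.lt_tan one_pos (by linarith [Real.pi_gt_three])

lemma nu0_eq : nu0 = Real.cos 1 := by
  rw [nu0, show (1 : ℝ) - Real.sin 1 ^ 2 = Real.cos 1 ^ 2 by
    have := Real.sin_sq_add_cos_sq 1; linarith]
  exact Real.sqrt_sq cos1_pos.le

lemma nu1_eq : nu1 = -Real.tan 1 := by
  have h2 : (2:ℝ) = 2 * 1 := by norm_num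
  rw [nu1, h2, Real.sin_two_mul, Real.cos_two_mul, Real.tan_eq_sin_div_cos]
  have hc := cos1_pos
  field_simp
  ring


lemma sinh_sub_self_mono : Monotone (fun t : ℝ => Real.sinh t - t) := by
  have h : ∀ t : ℝ, HasDerivAt (fun t : ℝ => Real.sinh t - t) (Real.cosh t - 1) t :=
    fun t => (Real.hasDerivAt_sinh t).sub (hasDerivAt_id t)
  apply monotone_of_deriv_nonneg
  · exact fun t => ((h t).differentiableAt)
  · intro t
    rw [(h t).deriv]
    linarith [Real.one_le_cosh t]

lemma norm_sin_lt_sinh_one {w : ℂ} (hw : ‖w‖ < 1) :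
    ‖Complex.sin w‖ < Real.sinh 1 := by
  set x := w.re
  set y := w.im
  have hxy : x ^ 2 + y ^ 2 < 1 := by
    have := Complex.sq_norm w
    rw [Complex.normSq_apply] at this
    nlinarith [norm_nonneg w]
  have hsin : Complex.sin w = (↑(Real.sin x * Real.cosh y) : ℂ) +
      (↑(Real.cos x * Real.sinh y) : ℝ) * Complex.I := by
    rw [Complex.sin_eq]
    push_cast [← Complex.ofReal_sin, ← Complex.ofReal_cos, ← Complex.ofReal_sinh,
      ← Complex.ofReal_cosh]
    ring
  rw [hsin, Complex.norm_add_mul_I]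
  have hkey : (Real.sin x * Real.cosh y) ^ 2 + (Real.cos x * Real.sinh y) ^ 2
      = Real.sin x ^ 2 + Real.sinh y ^ 2 := by
    have h1 := Real.cosh_sq y
    have h2 := Real.sin_sq_add_cos_sq x
    nlinarith
  rw [hkey]
  have hy1 : |y| ≤ 1 := by nlinarith [abs_nonneg y, sq_abs y]
  have hmono := sinh_sub_self_mono hy1
  simp only at hmono
  have h3 : |Real.sinh y| = Real.sinh |y| := Real.abs_sinh y
  have h4 : |y| ≤ Real.sinh |y| := Real.self_le_sinh_iff.mpr (abs_nonneg y)
  have h5 : (1:ℝ) ≤ Real.sinh 1 := Real.self_le_sinh_iff.mpr zero_le_one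
  have hs2 : Real.sinh y ^ 2 = Real.sinh |y| ^ 2 := by rw [← h3, sq_abs]
  have hsin_le : Real.sin x ^ 2 ≤ x ^ 2 := by
    have := Real.abs_sin_le_abs (x := x)
    nlinarith [abs_nonneg (Real.sin x), sq_abs (Real.sin x), sq_abs x]
  have hlt : Real.sin x ^ 2 + Real.sinh y ^ 2 < Real.sinh 1 ^ 2 := by
    nlinarith [sq_abs y, mul_le_mul hmono (le_refl (1 + |y|)) (by linarith [abs_nonneg y]) (by linarith)]
  calc Real.sqrt (Real.sin x ^ 2 + Real.sinh y ^ 2)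
      < Real.sqrt (Real.sinh 1 ^ 2) := by
        apply Real.sqrt_lt_sqrt (by positivity) hlt
    _ = Real.sinh 1 := Real.sqrt_sq (by linarith)


open Real Complex in
-- facts about complex square root with positive real part base
lemma cpow_half_facts {x : ℂ} (hre : 0 < x.re) :
    (x ^ (1/2:ℂ)) * (x ^ (1/2:ℂ)) = x ∧ Real.sqrt x.re ≤ (x ^ (1/2:ℂ)).re := by
  have hx0 : x ≠ 0 := fun h => by simp [h] at hre
  have hmul : (x ^ (1/2:ℂ)) * (x ^ (1/2:ℂ)) = x := by
    rw [← Complex.cpow_add _ _ hx0]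
    norm_num
  refine ⟨hmul, ?_⟩
  set s := x ^ (1/2:ℂ) with hs
  have hsre0 : 0 ≤ s.re := by
    rw [hs, Complex.cpow_def_of_ne_zero hx0, Complex.exp_re]
    apply mul_nonneg (Real.exp_pos _).le
    apply Real.cos_nonneg_of_mem_Icc
    have him : (Complex.log x * (1/2)).im = x.arg * (1/2) := by
      rw [Complex.mul_im, Complex.log_im]
      norm_num
    have harg := abs_le.mp (Complex.abs_arg_le_pi_div_two_iff.mpr hre.le)
    rw [him]
    constructor <;> nlinarith [Real.pi_pos]
  have hre2 : s.re * s.re - s.im * s.im = x.re := by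
    conv_rhs => rw [← hmul]
    rw [Complex.mul_re]
  have : x.re ≤ s.re ^ 2 := by nlinarith [sq_nonneg s.im]
  calc Real.sqrt x.re ≤ Real.sqrt (s.re ^ 2) := Real.sqrt_le_sqrt this
    _ = s.re := Real.sqrt_sq hsre0

lemma exists_sin_eq {ζ : ℂ} (hζ : ‖ζ‖ < Real.cos 1) :
    ∃ w ∈ ball (0:ℂ) 1, Complex.sin w = ζ := by
  have hc1 := cos1_pos
  have hcs := cos1_lt_sin1
  have hsin1 : 0 < Real.sin 1 := lt_trans hc1 hcs
  have hζ1 : ‖ζ‖ ^ 2 < 1 / 2 := by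
    nlinarith [Real.sin_sq_add_cos_sq 1, norm_nonneg ζ]
  -- setup
  set ρ := ‖ζ‖ with hρ
  have hρ0 : 0 ≤ ρ := norm_nonneg ζ
  have hρlt : Real.sqrt (1 - ρ^2) > ρ := by
    have : ρ = Real.sqrt (ρ^2) := (Real.sqrt_sq hρ0).symm
    rw [this]
    exact Real.sqrt_lt_sqrt (sq_nonneg ρ) (by nlinarith)
  set S : ℝ → ℂ := fun t => ((1:ℂ) - ((t:ℂ)*ζ)^2) ^ ((1:ℂ)/2) with hS
  set U : ℝ → ℂ := fun t => Complex.I * ((t:ℂ)*ζ) + S t with hU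
  set h : ℝ → ℂ := fun t => -Complex.I * Complex.log (U t) with hh
  -- pointwise facts
  have hfacts : ∀ t : ℝ, t ∈ Set.uIcc (0:ℝ) 1 →
      (0 < ((1:ℂ) - ((t:ℂ)*ζ)^2).re ∧ S t * S t = (1:ℂ) - ((t:ℂ)*ζ)^2 ∧
       Real.sqrt (1 - ρ^2) ≤ (S t).re ∧ 0 < (U t).re ∧
       Real.sqrt (1 - ρ^2) ≤ ‖S t‖) := by
    intro t ht
    rw [Set.uIcc_of_le zero_le_one] at ht
    have htζ : ‖(t:ℂ)*ζ‖ ≤ ρ := by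
      rw [norm_mul, Complex.norm_real, Real.norm_eq_abs, _root_.abs_of_nonneg ht.1]
      nlinarith [ht.2]
    have hre : 1 - ρ^2 ≤ ((1:ℂ) - ((t:ℂ)*ζ)^2).re := by
      have h1 : (((t:ℂ)*ζ)^2).re ≤ ρ^2 := by
        calc (((t:ℂ)*ζ)^2).re ≤ ‖((t:ℂ)*ζ)^2‖ := Complex.re_le_norm _
          _ = (‖(t:ℂ)*ζ‖)^2 := by rw [norm_pow]
          _ ≤ ρ^2 := by nlinarith [norm_nonneg ((t:ℂ)*ζ)]
      simp only [Complex.sub_re, Complex.one_re]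
      linarith
    have hrepos : 0 < ((1:ℂ) - ((t:ℂ)*ζ)^2).re := by nlinarith [Real.sq_sqrt (by nlinarith : (0:ℝ) ≤ 1 - ρ^2), Real.sqrt_nonneg (1-ρ^2)]
    obtain ⟨hmul, hsre⟩ := cpow_half_facts hrepos
    have hsre' : Real.sqrt (1 - ρ^2) ≤ (S t).re := by
      calc Real.sqrt (1 - ρ^2) ≤ Real.sqrt ((1:ℂ) - ((t:ℂ)*ζ)^2).re := Real.sqrt_le_sqrt hre
        _ ≤ (S t).re := hsre
    have hUre : 0 < (U t).re := by
      have him : |((t:ℂ)*ζ).im| ≤ ρ := le_trans (Complex.abs_im_le_norm _) htζ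
      have : (U t).re = -((t:ℂ)*ζ).im + (S t).re := by
        simp [hU, Complex.add_re, Complex.mul_re, Complex.I_re, Complex.I_im]
      rw [this]
      cases abs_le.mp him with
      | intro h1 h2 => linarith [hρlt, hsre']
    refine ⟨hrepos, hmul, hsre', hUre, ?_⟩
    calc Real.sqrt (1 - ρ^2) ≤ (S t).re := hsre'
      _ ≤ |(S t).re| := le_abs_self _
      _ ≤ ‖S t‖ := Complex.abs_re_le_norm _
  -- derivative
  have hderiv : ∀ t : ℝ, t ∈ Set.uIcc (0:ℝ) 1 →
      HasDerivAt h (ζ * (S t)⁻¹) t := by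
    intro t ht
    obtain ⟨hrepos, hmul, hsre, hUre, hSabs⟩ := hfacts t ht
    have hx0 : ((1:ℂ) - ((t:ℂ)*ζ)^2) ≠ 0 := fun hx => by simp [hx] at hrepos
    have hS0 : S t ≠ 0 := fun hx => by
      rw [hx] at hmul; simp at hmul; exact hx0 hmul.symm
    have hU0 : U t ≠ 0 := fun hx => by simp [hx] at hUre
    have hbase : HasDerivAt (fun v : ℂ => (1:ℂ) - (v*ζ)^2) (-(2*((t:ℂ)*ζ)*ζ)) (t:ℂ) := by
      have h1 : HasDerivAt (fun v : ℂ => (v*ζ)^2) (2*((t:ℂ)*ζ)*ζ) (t:ℂ) := by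
        have := ((hasDerivAt_id (t:ℂ)).mul_const ζ).fun_pow 2
        exact this.congr_deriv (by simp only [id_eq, Nat.cast_ofNat, Nat.reduceSub, pow_one]; ring)
      have := h1.const_sub 1
      convert this using 1
      all_goals ring
    have hspow : HasDerivAt (fun v : ℂ => ((1:ℂ) - (v*ζ)^2) ^ ((1:ℂ)/2))
        ((1/2) * ((1:ℂ) - ((t:ℂ)*ζ)^2) ^ ((1:ℂ)/2 - 1) * (-(2*((t:ℂ)*ζ)*ζ))) (t:ℂ) :=
      hbase.cpow_const (Or.inl hrepos)
    have hUD : HasDerivAt (fun v : ℂ => Complex.I * (v*ζ) + ((1:ℂ) - (v*ζ)^2) ^ ((1:ℂ)/2))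
        (Complex.I * ζ + (1/2) * ((1:ℂ) - ((t:ℂ)*ζ)^2) ^ ((1:ℂ)/2 - 1) * (-(2*((t:ℂ)*ζ)*ζ))) (t:ℂ) := by
      have h2 : HasDerivAt (fun v : ℂ => Complex.I * (v*ζ)) (Complex.I * ζ) (t:ℂ) :=
        ((hasDerivAt_id (t:ℂ)).mul_const ζ).const_mul Complex.I |>.congr_deriv (by first | ring | (simp [id_eq]; try ring))
      exact h2.add hspow
    have hlog : HasDerivAt (fun v : ℂ => -Complex.I * Complex.log (Complex.I * (v*ζ) + ((1:ℂ) - (v*ζ)^2) ^ ((1:ℂ)/2)))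
        (-Complex.I * ((U t)⁻¹ * (Complex.I * ζ + (1/2) * ((1:ℂ) - ((t:ℂ)*ζ)^2) ^ ((1:ℂ)/2 - 1) * (-(2*((t:ℂ)*ζ)*ζ))))) (t:ℂ) := by
      have hUslit : U t ∈ Complex.slitPlane := Or.inl hUre
      have := (Complex.hasDerivAt_log hUslit).comp (t:ℂ) hUD
      exact this.const_mul (-Complex.I) |>.congr_deriv (by first | ring | (simp [id_eq]; try ring))
    have htot := hlog.comp_ofReal
    convert htot using 1
    -- identity: -I * (U⁻¹ * (I ζ + (1/2) X^(-1/2) (-(2 ξ ζ)))) = ζ S⁻¹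
    have hpow : ((1:ℂ) - ((t:ℂ)*ζ)^2) ^ ((1:ℂ)/2 - 1) = (S t)⁻¹ := by
      have : ((1:ℂ)/2 - 1 : ℂ) = -(1/2) := by norm_num
      rw [this, Complex.cpow_neg]
    rw [hpow]
    rw [hU] at hU0 ⊢
    field_simp
    have hXinv : (Complex.I * ((t:ℂ)*ζ) + S t) * (Complex.I * ((t:ℂ)*ζ) + S t)⁻¹ = 1 :=
      mul_inv_cancel₀ hU0
    linear_combination (ζ * S t * (Complex.I * ((t:ℂ)*ζ) + S t)⁻¹) * Complex.I_sq + (-ζ) * hXinv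
  -- h 0 = 0
  have hzero : h 0 = 0 := by
    simp only [hh, hU, hS]
    norm_num
  -- integrability of derivative
  have hcont : ContinuousOn (fun t => ζ * (S t)⁻¹) (Set.uIcc (0:ℝ) 1) := by
    intro t ht
    obtain ⟨hrepos, hmul, hsre, hUre, hSabs⟩ := hfacts t ht
    have hS0 : S t ≠ 0 := by
      intro hx
      rw [hx, norm_zero] at hSabs
      nlinarith [hρlt]
    have hSc : ContinuousAt S t := by
      have hbase : ContinuousAt (fun u : ℝ => (1:ℂ) - ((u:ℂ)*ζ)^2) t := by fun_prop
      exact ContinuousAt.comp (g := fun x : ℂ => x ^ ((1:ℂ)/2))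
        (continuousAt_cpow_const (Or.inl hrepos)) hbase
    exact (continuousAt_const.mul (hSc.inv₀ hS0)).continuousWithinAt
  have hint : IntervalIntegrable (fun t => ζ * (S t)⁻¹) MeasureTheory.volume 0 1 :=
    hcont.intervalIntegrable
  have hFTC := intervalIntegral.integral_eq_sub_of_hasDerivAt hderiv hint
  rw [hzero, sub_zero] at hFTC
  -- the bound
  have hbound : ‖h 1‖ ≤ ρ / Real.sqrt (1 - ρ^2) := by
    rw [← hFTC]
    have := intervalIntegral.norm_integral_le_of_norm_le_const (C := ρ / Real.sqrt (1 - ρ^2))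
      (f := fun t => ζ * (S t)⁻¹) (a := 0) (b := 1) ?_
    · simpa using this
    · intro t ht
      have ht' : t ∈ Set.uIcc (0:ℝ) 1 := by
        rw [Set.uIoc_of_le zero_le_one] at ht
        rw [Set.uIcc_of_le zero_le_one]
        exact ⟨ht.1.le, ht.2⟩
      obtain ⟨hrepos, hmul, hsre, hUre, hSabs⟩ := hfacts t ht'
      have hq : (0:ℝ) < Real.sqrt (1 - ρ^2) := lt_of_le_of_lt hρ0 hρlt
      rw [norm_mul, norm_inv]
      rw [div_eq_mul_inv]
      apply mul_le_mul le_rfl _ (by positivity) hρ0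
      exact inv_anti₀ hq hSabs
  -- conclude
  refine ⟨h 1, ?_, ?_⟩
  · rw [mem_ball_zero_iff]
    have h1 : Real.sin 1 < Real.sqrt (1 - ρ^2) := by
      have : Real.sin 1 = Real.sqrt (Real.sin 1 ^ 2) := (Real.sqrt_sq hsin1.le).symm
      rw [this]
      apply Real.sqrt_lt_sqrt (sq_nonneg _)
      nlinarith [Real.sin_sq_add_cos_sq 1]
    have h2 : ρ / Real.sqrt (1 - ρ^2) < 1 := by
      rw [div_lt_one (lt_trans hsin1 h1)]
      calc ρ < Real.cos 1 := hζ
        _ < Real.sin 1 := hcs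
        _ < _ := h1
    calc ‖h 1‖ = ‖h 1‖ := rfl
      _ ≤ ρ / Real.sqrt (1 - ρ^2) := hbound
      _ < 1 := h2
  · -- sin (h 1) = ζ
    have h1m : (1:ℝ) ∈ Set.uIcc (0:ℝ) 1 := Set.right_mem_uIcc
    obtain ⟨hrepos, hmul, hsre, hUre, hSabs⟩ := hfacts 1 h1m
    have hU0 : U 1 ≠ 0 := fun hx => by simp [hx] at hUre
    have hinv : (U 1)⁻¹ = S 1 - Complex.I * ζ := by
      apply inv_eq_of_mul_eq_one_left
      have : U 1 = Complex.I * ζ + S 1 := by simp [hU]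
      rw [this]
      have h12 : ((1:ℝ):ℂ) = 1 := by norm_num
      rw [h12] at hmul
      linear_combination hmul + (-ζ^2) * Complex.I_sq
    have hexp : Complex.exp (Complex.log (U 1)) = U 1 := Complex.exp_log hU0
    simp only [hh]
    rw [Complex.sin]
    have e1 : -(-Complex.I * Complex.log (U 1)) * Complex.I = -Complex.log (U 1) := by
      linear_combination Complex.log (U 1) * Complex.I_sq
    have e2 : (-Complex.I * Complex.log (U 1)) * Complex.I = Complex.log (U 1) := by
      linear_combination (-Complex.log (U 1)) * Complex.I_sq
    rw [e1, e2, Complex.exp_neg, hexp, hinv]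
    have hU1 : U 1 = Complex.I * ζ + S 1 := by simp [hU]
    rw [hU1]
    linear_combination (-ζ) * Complex.I_sq


open Real Complex in
theorem stmt7 (β₁ β₂ : ℝ) (hβ₁ : 0 < β₁) (hβ₂ : 0 < β₂)
    (hcond : nu0 * (β₁ + β₂ * nu1) ≥ Real.sinh 1)
    (p : ℂ → ℂ) (hp : AnalyticOnNhd ℂ p (ball 0 1)) (hp0 : p 0 = 1)
    (hsub : ∀ z ∈ ball (0 : ℂ) 1,
      ∃ w ∈ ball (0 : ℂ) 1, (1 + (β₁ : ℂ) * z * deriv p z + (β₂ : ℂ) * z ^ 2 * deriv (deriv p) z) = 1 + Complex.sin w) :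
    ∀ z ∈ ball (0 : ℂ) 1, ∃ w ∈ ball (0 : ℂ) 1, p z = 1 + Complex.sin w := by
  have hc1 := cos1_pos
  have hcs := cos1_lt_sin1
  have hsinh1 : (0:ℝ) < Real.sinh 1 := Real.sinh_pos_iff.mpr one_pos
  have hsin1 : 0 < Real.sin 1 := lt_trans hc1 hcs
  -- constants
  have htan : Real.cos 1 * Real.tan 1 = Real.sin 1 := by
    rw [Real.tan_eq_sin_div_cos]; field_simp
  have hkey : Real.sinh 1 + Real.sin 1 * β₂ ≤ Real.cos 1 * β₁ := by
    rw [nu0_eq, nu1_eq] at hcond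
    nlinarith [hcond]
  have hν : Real.sinh 1 < Real.cos 1 * β₁ := by nlinarith
  have hββ : β₂ < β₁ := by nlinarith [tan1_gt_one, hc1]
  set γ : ℝ := β₁ / β₂ with hγdef
  have hγ : 1 < γ := (one_lt_div hβ₂).mpr hββ
  have hγβ : γ * β₂ = β₁ := div_mul_cancel₀ _ hβ₂.ne'
  -- the function g
  set g : ℂ → ℂ := fun z => (β₁:ℂ) * z * deriv p z + (β₂:ℂ) * z^2 * deriv (deriv p) z with hg
  have hd1 : AnalyticOnNhd ℂ (deriv p) (ball 0 1) := hp.deriv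
  have hd2 : AnalyticOnNhd ℂ (deriv (deriv p)) (ball 0 1) := hd1.deriv
  have hgd : DifferentiableOn ℂ g (ball 0 1) := by
    intro z hz
    have h1 := (hd1 z hz).differentiableAt
    have h2 := (hd2 z hz).differentiableAt
    exact ((((differentiableAt_const _).mul differentiableAt_id).mul h1).add
      (((differentiableAt_const _).mul (differentiableAt_id.pow 2)).mul h2)).differentiableWithinAt
  have hg0 : g 0 = 0 := by simp [hg]
  have hmaps : Set.MapsTo g (ball 0 1) (ball (g 0) (Real.sinh 1)) := by
    intro z hz
    obtain ⟨w, hw, he⟩ := hsub z hz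
    have hgz : g z = Complex.sin w := by
      simp only [hg]
      linear_combination he
    rw [hg0, mem_ball_zero_iff, hgz]
    exact norm_sin_lt_sinh_one (mem_ball_zero_iff.mp hw)
  have hgs : ∀ z ∈ ball (0:ℂ) 1, ‖g z‖ ≤ Real.sinh 1 * ‖z‖ := by
    intro z hz
    have := Complex.dist_le_div_mul_dist_of_mapsTo_ball hgd (hmaps.mono_right ball_subset_closedBall) hz
    simpa [hg0, dist_zero_right, Complex.dist_eq] using this
  -- bound on z * deriv p z
  have hG : ∀ z ∈ ball (0:ℂ) 1, ‖z * deriv p z‖ ≤ Real.sinh 1 * ‖z‖ / β₁ := by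
    intro z hz
    have hzn : ‖z‖ < 1 := mem_ball_zero_iff.mp hz
    have hmem : ∀ t : ℝ, t ∈ Set.Icc (0:ℝ) 1 → (t:ℂ) * z ∈ ball (0:ℂ) 1 := by
      intro t ht
      rw [mem_ball_zero_iff, norm_mul, Complex.norm_real, Real.norm_eq_abs,
        _root_.abs_of_nonneg ht.1]
      calc t * ‖z‖ ≤ 1 * ‖z‖ := by
            apply mul_le_mul_of_nonneg_right ht.2 (norm_nonneg z)
        _ < 1 := by rwa [one_mul]
    set ψ : ℝ → ℂ := fun t => (t ^ γ : ℝ) • (z * deriv p ((t:ℂ)*z)) with hψ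
    set F : ℝ → ℂ := fun t => (t ^ (γ-2) / β₂ : ℝ) • g ((t:ℂ)*z) with hF
    -- continuity of ψ
    have hcder : ContinuousOn (fun t : ℝ => z * deriv p ((t:ℂ)*z)) (Set.Icc (0:ℝ) 1) := by
      apply ContinuousOn.mul continuousOn_const
      apply (hd1.continuousOn (s := ball 0 1)).comp (by fun_prop) hmem
    have hψc : ContinuousOn ψ (Set.Icc (0:ℝ) 1) := by
      exact ContinuousOn.smul (f := fun t : ℝ => t ^ γ)
        (Real.continuous_rpow_const (by linarith : (0:ℝ) ≤ γ)).continuousOn hcder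
    -- derivative
    have hder : ∀ t ∈ Set.Ioo (0:ℝ) 1, HasDerivAt ψ (F t) t := by
      intro t ht
      have htm : (t:ℂ) * z ∈ ball (0:ℂ) 1 := hmem t ⟨ht.1.le, ht.2.le⟩
      have hA : HasDerivAt (fun s : ℝ => s ^ γ) (γ * t ^ (γ-1)) t :=
        Real.hasDerivAt_rpow_const (Or.inl ht.1.ne')
      have hB : HasDerivAt (fun s : ℝ => z * deriv p ((s:ℂ)*z))
          (z * (deriv (deriv p) ((t:ℂ)*z) * z)) t := by
        have hin : HasDerivAt (fun v : ℂ => deriv p (v*z)) (deriv (deriv p) ((t:ℂ)*z) * z) (t:ℂ) := by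
          have h0 := ((hd1 _ htm).differentiableAt.hasDerivAt).comp (t:ℂ)
            ((hasDerivAt_id (t:ℂ)).mul_const z)
          exact h0.congr_deriv (by simp)
        exact (hin.comp_ofReal).const_mul z
      have := hA.smul hB
      refine this.congr_deriv ?_
      symm
      -- F t = γ t^(γ-1) • B t + t^γ • B' t
      have ht0 : (0:ℝ) < t := ht.1
      have e1 : t ^ (γ-1) = t ^ (γ-2) * t := by
        rw [show γ-1 = (γ-2)+1 by ring, Real.rpow_add_one ht0.ne']
      have e2 : t ^ γ = t ^ (γ-2) * t^2 := by
        rw [← Real.rpow_natCast t 2, ← Real.rpow_add ht0]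
        congr 1
        push_cast
        ring
      simp only [hF, hg, Complex.real_smul]
      push_cast [e1, e2]
      have hγβc : (γ:ℂ) * (β₂:ℂ) = (β₁:ℂ) := by exact_mod_cast congrArg Complex.ofReal hγβ
      have hinvc : ((β₂:ℂ))⁻¹ * (β₂:ℂ) = 1 :=
        inv_mul_cancel₀ (by exact_mod_cast hβ₂.ne' : (β₂:ℂ) ≠ 0)
      linear_combination (-((((t:ℝ) ^ (γ-2) : ℝ):ℂ) * ((β₂:ℂ))⁻¹ * ((t:ℂ) * z * deriv p ((t:ℂ)*z)))) * hγβc +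
        ((γ:ℂ) * (((t:ℝ) ^ (γ-2) : ℝ):ℂ) * ((t:ℂ) * z * deriv p ((t:ℂ)*z)) +
         (((t:ℝ) ^ (γ-2) : ℝ):ℂ) * ((t:ℂ)^2 * z^2 * deriv (deriv p) ((t:ℂ)*z))) * hinvc
    -- integrability
    have hDint : IntervalIntegrable (fun t : ℝ => Real.sinh 1 * ‖z‖ / β₂ * t ^ (γ-1))
        MeasureTheory.volume 0 1 := by
      apply ContinuousOn.intervalIntegrable
      apply ContinuousOn.mul continuousOn_const
      exact (Real.continuous_rpow_const (by linarith : (0:ℝ) ≤ γ-1)).continuousOn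
    have hFnorm : ∀ t ∈ Set.Ioc (0:ℝ) 1, ‖F t‖ ≤ Real.sinh 1 * ‖z‖ / β₂ * t ^ (γ-1) := by
      intro t ht
      have htm : (t:ℂ) * z ∈ ball (0:ℂ) 1 := hmem t ⟨ht.1.le, ht.2⟩
      have hgb := hgs _ htm
      rw [norm_mul, Complex.norm_real, Real.norm_eq_abs, _root_.abs_of_nonneg ht.1.le] at hgb
      have hpos : 0 ≤ t ^ (γ-2) / β₂ := div_nonneg (Real.rpow_nonneg ht.1.le _) hβ₂.le
      rw [hF, norm_smul, Real.norm_eq_abs, _root_.abs_of_nonneg hpos]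
      calc t ^ (γ-2) / β₂ * ‖g ((t:ℂ)*z)‖ ≤ t ^ (γ-2) / β₂ * (Real.sinh 1 * (t * ‖z‖)) := by
            apply mul_le_mul_of_nonneg_left hgb hpos
        _ = Real.sinh 1 * ‖z‖ / β₂ * (t ^ (γ-2) * t) := by ring
        _ = Real.sinh 1 * ‖z‖ / β₂ * t ^ (γ-1) := by
            rw [show γ-1 = (γ-2)+1 by ring, Real.rpow_add_one ht.1.ne']
    have hFcont : ContinuousOn F (Set.Ioc (0:ℝ) 1) := by
      refine ContinuousOn.smul (f := fun t : ℝ => t ^ (γ-2) / β₂) (g := fun t : ℝ => g ((t:ℂ)*z)) ?_ ?_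
      · apply ContinuousOn.div_const
        intro t ht
        exact ((Real.continuousAt_rpow_const t (γ-2) (Or.inl ht.1.ne'))).continuousWithinAt
      · apply ((hgd.continuousOn).comp (by fun_prop : Continuous fun t : ℝ => (t:ℂ)*z).continuousOn)
        intro t ht
        exact hmem t ⟨ht.1.le, ht.2⟩
    have hFint : IntervalIntegrable F MeasureTheory.volume 0 1 := by
      rw [intervalIntegrable_iff, Set.uIoc_of_le zero_le_one]
      apply MeasureTheory.Integrable.mono' (g := fun t => Real.sinh 1 * ‖z‖ / β₂ * t ^ (γ-1))
      · have := hDint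
        rw [intervalIntegrable_iff, Set.uIoc_of_le zero_le_one] at this
        exact this
      · exact hFcont.aestronglyMeasurable measurableSet_Ioc
      · exact MeasureTheory.ae_restrict_of_forall_mem measurableSet_Ioc hFnorm
    -- FTC
    have hFTC := intervalIntegral.integral_eq_sub_of_hasDerivAt_of_le zero_le_one hψc hder hFint
    have hψ1 : ψ 1 = z * deriv p z := by
      simp [hψ, Real.one_rpow]
    have hψ0 : ψ 0 = 0 := by
      simp [hψ, Real.zero_rpow (by linarith : γ ≠ 0)]
    rw [hψ1, hψ0, sub_zero] at hFTC
    have hrint : ∫ t in (0:ℝ)..1, t ^ (γ-1) = 1/γ := by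
      rw [integral_rpow (Or.inl (by linarith : (-1:ℝ) < γ-1))]
      rw [show γ-1+1 = γ by ring, Real.one_rpow, Real.zero_rpow (by linarith : γ ≠ 0)]
      ring
    have hval : ∫ t in (0:ℝ)..1, Real.sinh 1 * ‖z‖ / β₂ * t ^ (γ-1)
        = Real.sinh 1 * ‖z‖ / β₁ := by
      rw [intervalIntegral.integral_const_mul, hrint, ← hγβ]
      rw [div_mul_div_comm, mul_one, mul_comm β₂ γ]
    calc ‖z * deriv p z‖ = ‖∫ t in (0:ℝ)..1, F t‖ := by rw [hFTC]
      _ ≤ |∫ t in (0:ℝ)..1, Real.sinh 1 * ‖z‖ / β₂ * t ^ (γ-1)| := by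
          refine le_trans (intervalIntegral.norm_integral_le_of_norm_le zero_le_one ?_ hDint) (le_abs_self _)
          exact Filter.Eventually.of_forall hFnorm
      _ = Real.sinh 1 * ‖z‖ / β₁ := by
          rw [hval, _root_.abs_of_nonneg (by positivity)]
  -- bound on p z - 1
  have hP : ∀ z ∈ ball (0:ℂ) 1, ‖p z - 1‖ ≤ Real.sinh 1 * ‖z‖ / β₁ := by
    intro z hz
    have hzn : ‖z‖ < 1 := mem_ball_zero_iff.mp hz
    have hmem : ∀ t : ℝ, t ∈ Set.Icc (0:ℝ) 1 → (t:ℂ) * z ∈ ball (0:ℂ) 1 := by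
      intro t ht
      rw [mem_ball_zero_iff, norm_mul, Complex.norm_real, Real.norm_eq_abs,
        _root_.abs_of_nonneg ht.1]
      calc t * ‖z‖ ≤ 1 * ‖z‖ := mul_le_mul_of_nonneg_right ht.2 (norm_nonneg z)
        _ < 1 := by rwa [one_mul]
    have hder : ∀ t ∈ Set.uIcc (0:ℝ) 1, HasDerivAt (fun t : ℝ => p ((t:ℂ)*z))
        (z * deriv p ((t:ℂ)*z)) t := by
      intro t ht
      rw [Set.uIcc_of_le zero_le_one] at ht
      have htm := hmem t ht
      have hin : HasDerivAt (fun v : ℂ => p (v*z)) (deriv p ((t:ℂ)*z) * z) (t:ℂ) := by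
        have h0 := ((hp _ htm).differentiableAt.hasDerivAt).comp (t:ℂ)
          ((hasDerivAt_id (t:ℂ)).mul_const z)
        exact h0.congr_deriv (by simp)
      have := hin.comp_ofReal
      convert this using 1
      ring
    have hcont : ContinuousOn (fun t : ℝ => z * deriv p ((t:ℂ)*z)) (Set.uIcc (0:ℝ) 1) := by
      rw [Set.uIcc_of_le zero_le_one]
      apply ContinuousOn.mul continuousOn_const
      exact (hd1.continuousOn (s := ball 0 1)).comp (by fun_prop) hmem
    have hFTC := intervalIntegral.integral_eq_sub_of_hasDerivAt hder hcont.intervalIntegrable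
    have he0 : p (((0:ℝ):ℂ)*z) = 1 := by norm_num [hp0]
    have he1 : p (((1:ℝ):ℂ)*z) = p z := by norm_num
    rw [he0, he1] at hFTC
    have hbd : ∀ t ∈ Set.uIoc (0:ℝ) 1, ‖z * deriv p ((t:ℂ)*z)‖ ≤ Real.sinh 1 * ‖z‖ / β₁ := by
      intro t ht
      rw [Set.uIoc_of_le zero_le_one] at ht
      have htm := hmem t ⟨ht.1.le, ht.2⟩
      have := hG _ htm
      simp only [norm_mul, Complex.norm_real, Real.norm_eq_abs, _root_.abs_of_nonneg ht.1.le] at this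
      have h2 : ‖z‖ * ‖deriv p ((t:ℂ)*z)‖ ≤ Real.sinh 1 * ‖z‖ / β₁ := by
        have h3 : t * (‖z‖ * ‖deriv p ((t:ℂ)*z)‖)
            ≤ t * (Real.sinh 1 * ‖z‖ / β₁) := by
          calc t * (‖z‖ * ‖deriv p ((t:ℂ)*z)‖)
              = t * ‖z‖ * ‖deriv p ((t:ℂ)*z)‖ := by ring
            _ ≤ Real.sinh 1 * (t * ‖z‖) / β₁ := this
            _ = t * (Real.sinh 1 * ‖z‖ / β₁) := by ring
        exact le_of_mul_le_mul_left h3 ht.1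
      calc ‖z * deriv p ((t:ℂ)*z)‖ = ‖z‖ * ‖deriv p ((t:ℂ)*z)‖ := by
            rw [norm_mul]
        _ ≤ _ := h2
    calc ‖p z - 1‖ = ‖∫ t in (0:ℝ)..1, z * deriv p ((t:ℂ)*z)‖ := by rw [hFTC]
      _ ≤ Real.sinh 1 * ‖z‖ / β₁ * |1 - 0| :=
          intervalIntegral.norm_integral_le_of_norm_le_const hbd
      _ = Real.sinh 1 * ‖z‖ / β₁ := by norm_num
  -- conclusion
  intro z hz
  have hzn : ‖z‖ < 1 := mem_ball_zero_iff.mp hz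
  have hζ : ‖p z - 1‖ < Real.cos 1 := by
    calc ‖p z - 1‖ ≤ Real.sinh 1 * ‖z‖ / β₁ := hP z hz
      _ < Real.cos 1 := by
          rw [div_lt_iff₀ hβ₁]
          nlinarith [norm_nonneg z]
  obtain ⟨w, hw, hsin⟩ := exists_sin_eq hζ
  exact ⟨w, hw, by rw [hsin]; ring⟩
end

section
/- Let β₁, β₂ > 0 be real numbers and −1 < D < C ≤ 1 real numbers satisfying (2β₁ − β₂)(1 − D²) ≥ 2√2·(C − D)(1 + |D|). Let p be analytic on the open unit disk 𝔻 with p(0) = 1, and suppose that for every z ∈ 𝔻 the value 1 + β₁·z·p′(z) + β₂·z²·p″(z) lies in the open disk {w ∈ ℂ : |w − (1 − CD)/(1 − D²)| < (C − D)/(1 − D²)}. Then for every z ∈ 𝔻, p(z) ∈ {1 + log(w + (1 + w²)^{1/2}) : w ∈ 𝔻}, i.e. p(z) ≺ 1 + sinh⁻¹ z. -/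
open Metric

theorem aux_inv (v : ℂ) (hv : ‖v‖ ≤ 708/1000) :
    Complex.log (Complex.sinh v + (1 + Complex.sinh v ^ 2) ^ ((1:ℂ)/2)) = v := by
  have him : |v.im| ≤ 708/1000 := le_trans (Complex.abs_im_le_norm v) hv
  have hπ : (3.14 : ℝ) < Real.pi := by
    have := Real.pi_gt_d6; linarith
  have hcoshdef : Complex.cosh v = (Complex.exp v + Complex.exp (-v)) / 2 := rfl
  obtain ⟨him1, him2⟩ := abs_le.1 him
  have hre : 0 < (Complex.cosh v).re := by
    have h1 : (Complex.cosh v).re = ((Complex.exp v).re + (Complex.exp (-v)).re) / 2 := by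
      rw [hcoshdef]
      simp [Complex.add_re, Complex.div_re, Complex.normSq]
    rw [h1, Complex.exp_re, Complex.exp_re]
    have hcos : 0 < Real.cos v.im := by
      apply Real.cos_pos_of_mem_Ioo
      exact Set.mem_Ioo.2 ⟨by linarith, by linarith⟩
    simp only [Complex.neg_re, Complex.neg_im, Real.cos_neg]
    nlinarith [Real.exp_pos v.re, Real.exp_pos (-v.re)]
  have h1 : (1 : ℂ) + Complex.sinh v ^ 2 = Complex.cosh v ^ 2 := by
    rw [Complex.cosh_sq]; ring
  have h2 : (Complex.cosh v ^ 2) ^ ((1:ℂ)/2) = Complex.cosh v := by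
    rw [show (1:ℂ)/2 = (2:ℂ)⁻¹ by norm_num]
    exact Complex.sq_cpow_two_inv hre
  rw [h1, h2, Complex.sinh_add_cosh, Complex.log_exp] <;> linarith

theorem aux_sinh (v : ℂ) (hv : ‖v‖ ≤ 708/1000) :
    ‖Complex.sinh v‖ < 1 := by
  set t := ‖v‖ with htdef
  have ht0 : 0 ≤ t := norm_nonneg v
  have hv1 : ‖v‖ ≤ 1 := by linarith
  have hv1' : ‖-v‖ ≤ 1 := by rwa [norm_neg]
  have hb1 := Complex.exp_bound hv1 (n := 5) (by norm_num)
  have hb2 := Complex.exp_bound hv1' (n := 5) (by norm_num)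
  have hs1 : ∑ m ∈ Finset.range 5, v ^ m / m.factorial
      = 1 + v + v^2/2 + v^3/6 + v^4/24 := by
    simp [Finset.sum_range_succ, Nat.factorial]
    try ring
  have hs2 : ∑ m ∈ Finset.range 5, (-v) ^ m / m.factorial
      = 1 - v + v^2/2 - v^3/6 + v^4/24 := by
    simp [Finset.sum_range_succ, Nat.factorial]
    try ring
  rw [hs1] at hb1
  rw [hs2] at hb2
  have hsd : Complex.sinh v = (Complex.exp v - Complex.exp (-v)) / 2 := rfl
  have key : Complex.sinh v = v + v^3/6
      + ((Complex.exp v - (1 + v + v^2/2 + v^3/6 + v^4/24))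
        - (Complex.exp (-v) - (1 - v + v^2/2 - v^3/6 + v^4/24))) / 2 := by
    rw [hsd]; ring
  have habs : ‖Complex.sinh v‖
      ≤ t + t^3/6 + (‖Complex.exp v - (1 + v + v^2/2 + v^3/6 + v^4/24)‖
        + ‖Complex.exp (-v) - (1 - v + v^2/2 - v^3/6 + v^4/24)‖) / 2 := by
    rw [key]
    calc ‖_‖ ≤ ‖v + v^3/6‖ + ‖((Complex.exp v - (1 + v + v^2/2 + v^3/6 + v^4/24))
        - (Complex.exp (-v) - (1 - v + v^2/2 - v^3/6 + v^4/24))) / 2‖ := norm_add_le _ _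
      _ ≤ _ := by
        rw [norm_div, Complex.norm_two]
        gcongr
        · calc ‖v + v^3/6‖ ≤ ‖v‖ + ‖v^3/6‖ := norm_add_le _ _
            _ = t + t^3/6 := by rw [norm_div, norm_pow]; norm_num [htdef]
        · rw [sub_eq_add_neg]
          calc ‖_‖ ≤ _ := norm_add_le _ _
            _ = _ := by rw [norm_neg]
  rw [norm_neg] at hb2
  norm_num [Nat.factorial] at hb1 hb2
  nlinarith [pow_le_pow_left₀ ht0 hv (3), pow_le_pow_left₀ ht0 hv (5), habs, hb1, hb2]

theorem stmt9 (β₁ β₂ : ℝ) (hβ₁ : 0 < β₁) (hβ₂ : 0 < β₂)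
    (C D : ℝ) (hD : -1 < D) (hDC : D < C) (hC : C ≤ 1)
    (hcond : (2 * β₁ - β₂) * (1 - D ^ 2) ≥ 2 * Real.sqrt 2 * ((C - D) * (1 + |D|)))
    (p : ℂ → ℂ) (hp : AnalyticOnNhd ℂ p (ball 0 1)) (hp0 : p 0 = 1)
    (hsub : ∀ z ∈ ball (0 : ℂ) 1,
      ‖(1 + (β₁ : ℂ) * z * deriv p z + (β₂ : ℂ) * z ^ 2 * deriv (deriv p) z) - (((1 - C * D) / (1 - D ^ 2) : ℝ) : ℂ)‖ < (C - D) / (1 - D ^ 2)) :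
    ∀ z ∈ ball (0 : ℂ) 1, ∃ w ∈ ball (0 : ℂ) 1, p z = 1 + Complex.log (w + (1 + w ^ 2) ^ ((1 : ℂ) / 2)) := by
  have hD1 : |D| < 1 := abs_lt.2 ⟨hD, by linarith⟩
  have hD2 : (0:ℝ) < 1 - D ^ 2 := by nlinarith [abs_nonneg D, _root_.sq_abs D]
  set R' : ℝ := (C - D) * (1 + |D|) / (1 - D ^ 2) with hR'def
  have hR'pos : 0 < R' := by
    apply div_pos _ hD2
    nlinarith [abs_nonneg D]
  have hsqrt2 : Real.sqrt 2 ^ 2 = 2 := Real.sq_sqrt (by norm_num)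
  have hsqrt2pos : (1.414:ℝ) < Real.sqrt 2 := by nlinarith [Real.sqrt_nonneg 2]
  have hR'le : 2 * Real.sqrt 2 * R' ≤ 2 * β₁ - β₂ := by
    rw [hR'def]
    rw [ge_iff_le, ← div_le_iff₀ hD2] at hcond
    calc 2 * Real.sqrt 2 * ((C - D) * (1 + |D|) / (1 - D ^ 2))
        = 2 * Real.sqrt 2 * ((C - D) * (1 + |D|)) / (1 - D ^ 2) := by ring
      _ ≤ _ := hcond
  set q : ℂ → ℂ := fun w => (β₁:ℂ) * w * deriv p w + (β₂:ℂ) * w ^ 2 * deriv (deriv p) w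
    with hqdef
  have hq0 : q 0 = 0 := by simp [hqdef]
  have hp1 : AnalyticOnNhd ℂ (deriv p) (ball 0 1) := hp.deriv
  have hp2 : AnalyticOnNhd ℂ (deriv (deriv p)) (ball 0 1) := hp1.deriv
  have hqd : DifferentiableOn ℂ q (ball 0 1) := by
    intro w hw
    exact ((((differentiableAt_const _).mul differentiableAt_id).mul
      (hp1 w hw).differentiableAt).add
      (((differentiableAt_const _).mul (differentiableAt_id.pow 2)).mul
      (hp2 w hw).differentiableAt)).differentiableWithinAt
  -- bound |q| < R' on the ball
  have hqlt : ∀ w ∈ ball (0:ℂ) 1, ‖q w‖ < R' := by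
    intro w hw
    have h := hsub w hw
    have hcenter : ‖(((1 - C * D) / (1 - D ^ 2) : ℝ) : ℂ) - 1‖
        = |D| * (C - D) / (1 - D ^ 2) := by
      rw [show ((((1 - C * D) / (1 - D ^ 2) : ℝ) : ℂ)) - 1
          = (((1 - C * D) / (1 - D ^ 2) - 1 : ℝ) : ℂ) by push_cast; ring]
      rw [Complex.norm_real, Real.norm_eq_abs,
        show (1 - C * D) / (1 - D ^ 2) - 1 = D * (D - C) / (1 - D ^ 2) by
          field_simp; ring]
      rw [abs_div, abs_of_pos hD2, abs_mul, abs_of_neg (by linarith : D - C < 0)]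
      ring
    have hdecomp : q w = ((1 + (β₁:ℂ) * w * deriv p w + (β₂:ℂ) * w ^ 2 * deriv (deriv p) w)
        - (((1 - C * D) / (1 - D ^ 2) : ℝ) : ℂ))
        + ((((1 - C * D) / (1 - D ^ 2) : ℝ) : ℂ) - 1) := by
      rw [hqdef]; ring
    calc ‖q w‖ ≤ _ + _ := by rw [hdecomp]; exact norm_add_le _ _
      _ < (C - D) / (1 - D ^ 2) + |D| * (C - D) / (1 - D ^ 2) := by
          rw [hcenter]; exact add_lt_add_of_lt_of_le h le_rfl
      _ = R' := by rw [hR'def]; ring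
  -- Schwarz lemma
  have hqs : ∀ w ∈ ball (0:ℂ) 1, ‖q w‖ ≤ R' * ‖w‖ := by
    intro w hw
    have hmaps : Set.MapsTo (fun u => q u / (R' : ℂ)) (ball 0 1) (ball (0:ℂ) 1) := by
      intro u hu
      rw [mem_ball_zero_iff, norm_div, Complex.norm_real, Real.norm_eq_abs,
        abs_of_pos hR'pos, div_lt_one hR'pos]
      exact hqlt u hu
    have hd : DifferentiableOn ℂ (fun u => q u / (R' : ℂ)) (ball 0 1) :=
      hqd.div_const _
    have h0 : (fun u => q u / (R' : ℂ)) 0 = 0 := by simp [hq0]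
    have hz : ‖w‖ < 1 := by
      rw [← mem_ball_zero_iff]; exact hw
    have := Complex.norm_le_norm_of_mapsTo_ball hd (hmaps.mono_right ball_subset_closedBall) h0 hz
    rw [norm_div, Complex.norm_real, Real.norm_eq_abs, abs_of_pos hR'pos, div_le_iff₀ hR'pos] at this
    linarith [this]
  have hmem : ∀ (z : ℂ), z ∈ ball (0:ℂ) 1 → ∀ (s : ℝ), 0 ≤ s → s ≤ 1 →
      ((s:ℂ) * z) ∈ ball (0:ℂ) 1 := by
    intro z hz s h0 h1
    rw [mem_ball_zero_iff] at hz ⊢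
    rw [norm_mul, Complex.norm_real, Real.norm_eq_abs, _root_.abs_of_nonneg h0]
    calc s * ‖z‖ ≤ 1 * ‖z‖ := by
          apply mul_le_mul_of_nonneg_right h1 (norm_nonneg z)
      _ < 1 := by rwa [one_mul]
  set α : ℝ := β₁ / β₂ with hα
  have hαpos : 0 < α := div_pos hβ₁ hβ₂
  have hq1 : ∀ z ∈ ball (0:ℂ) 1, ‖z * deriv p z‖
      ≤ R' * ‖z‖ / β₁ := by
    intro z hz
    set F : ℝ → ℂ := fun s => ((s ^ α : ℝ) : ℂ) * (z * deriv p ((s:ℂ) * z)) with hF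
    set F' : ℝ → ℂ := fun s => ((s ^ (α - 2) : ℝ) : ℂ) * q ((s:ℂ) * z) / (β₂:ℂ) with hF'
    have hFderiv : ∀ s : ℝ, 0 < s → s ≤ 1 → HasDerivAt F (F' s) s := by
      intro s hs0 hs1
      have hsne : s ≠ 0 := ne_of_gt hs0
      have hw : ((s:ℂ) * z) ∈ ball (0:ℂ) 1 := hmem z hz s hs0.le hs1
      have h1 : HasDerivAt (fun u : ℝ => ((u ^ α : ℝ) : ℂ))
          ((α * s ^ (α - 1) : ℝ) : ℂ) s :=
        (Real.hasDerivAt_rpow_const (Or.inl hsne)).ofReal_comp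
      have h2c : HasDerivAt (deriv p) (deriv (deriv p) ((s:ℂ) * z)) ((s:ℂ) * z) :=
        (hp1 _ hw).differentiableAt.hasDerivAt
      have hinner : HasDerivAt (fun u : ℂ => u * z) z ((s:ℂ)) := by
        simpa using (hasDerivAt_id ((s:ℂ))).mul_const z
      have h2 : HasDerivAt (fun y : ℝ => deriv p ((y:ℂ) * z))
          (deriv (deriv p) ((s:ℂ) * z) * z) s := by
        have := (h2c.comp ((s:ℂ)) hinner).comp_ofReal
        simpa [Function.comp] using this
      have hmul := h1.mul (h2.const_mul z)
      have heq : ((α * s ^ (α - 1) : ℝ) : ℂ) * (z * deriv p ((s:ℂ) * z))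
          + ((s ^ α : ℝ) : ℂ) * (z * (deriv (deriv p) ((s:ℂ) * z) * z)) = F' s := by
        rw [hF', hqdef]
        have e1 : (s:ℝ) ^ (α - 1) = s ^ (α - 2) * s := by
          rw [show α - 1 = α - 2 + 1 by ring, Real.rpow_add_one hsne]
        have e2 : (s:ℝ) ^ α = s ^ (α - 2) * s * s := by
          rw [← Real.rpow_add_one hsne, ← Real.rpow_add_one hsne]
          congr 1
          ring
        rw [e1, e2, hα]
        have hβ₂ne : (β₂:ℂ) ≠ 0 := Complex.ofReal_ne_zero.2 (ne_of_gt hβ₂)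
        push_cast
        field_simp
      rw [← heq]
      exact hmul
    have key : ∀ ε ∈ Set.Ioo (0:ℝ) 1, ‖F 1 - F ε‖
        ≤ R' * ‖z‖ / β₁ := by
      intro ε hε
      obtain ⟨hε0, hε1⟩ := hε
      have huIcc : Set.uIcc ε 1 = Set.Icc ε 1 := Set.uIcc_of_le hε1.le
      have hderiv : ∀ t ∈ Set.uIcc ε 1, HasDerivAt F (F' t) t := by
        rw [huIcc]
        intro t ht
        exact hFderiv t (lt_of_lt_of_le hε0 ht.1) ht.2
      have hcont : ContinuousOn F' (Set.Icc ε 1) := by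
        apply ContinuousOn.div_const
        apply ContinuousOn.mul
        · intro t ht
          have ht0 : t ≠ 0 := ne_of_gt (lt_of_lt_of_le hε0 ht.1)
          exact (Complex.continuous_ofReal.continuousAt.comp
            (Real.continuousAt_rpow_const t (α - 2) (Or.inl ht0))).continuousWithinAt
        · apply (hqd.continuousOn).comp
            ((Complex.continuous_ofReal.mul continuous_const).continuousOn)
          intro t ht
          exact hmem z hz t (le_trans hε0.le ht.1) ht.2
      have hint : IntervalIntegrable F' MeasureTheory.volume ε 1 := by
        apply ContinuousOn.intervalIntegrable
        rwa [huIcc]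
      have hFTC := intervalIntegral.integral_eq_sub_of_hasDerivAt hderiv hint
      have h1le : ε ^ α ≤ 1 := Real.rpow_le_one hε0.le hε1.le hαpos.le
      have hbnd : ‖∫ t in ε..1, F' t‖
          ≤ |∫ t in ε..1, R' * ‖z‖ / β₂ * t ^ (α - 1)| := by
        apply intervalIntegral.norm_integral_le_abs_of_norm_le
        · rw [Set.uIoc_of_le hε1.le]
          filter_upwards [MeasureTheory.ae_restrict_mem measurableSet_Ioc] with t ht
          have ht0 : 0 < t := lt_trans hε0 ht.1
          have htm : ((t:ℂ) * z) ∈ ball (0:ℂ) 1 := hmem z hz t ht0.le ht.2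
          rw [hF', norm_div, norm_mul, Complex.norm_real, Real.norm_eq_abs,
            Complex.norm_real, Real.norm_eq_abs, _root_.abs_of_nonneg (Real.rpow_nonneg ht0.le _),
            _root_.abs_of_pos hβ₂]
          have hqb : ‖q ((t:ℂ) * z)‖ ≤ R' * (t * ‖z‖) := by
            have := hqs _ htm
            rwa [norm_mul, Complex.norm_real, Real.norm_eq_abs, _root_.abs_of_pos ht0] at this
          calc t ^ (α - 2) * ‖q ((t:ℂ) * z)‖ / β₂
              ≤ t ^ (α - 2) * (R' * (t * ‖z‖)) / β₂ :=
                (div_le_div_iff_of_pos_right hβ₂).2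
                  (mul_le_mul_of_nonneg_left hqb (Real.rpow_nonneg ht0.le _))
            _ = R' * ‖z‖ / β₂ * (t ^ (α - 2) * t) := by ring
            _ = R' * ‖z‖ / β₂ * t ^ (α - 1) := by
                rw [show α - 1 = α - 2 + 1 by ring, Real.rpow_add_one (ne_of_gt ht0)]
        · apply IntervalIntegrable.const_mul
          exact intervalIntegral.intervalIntegrable_rpow' (by linarith)
      have hval : (∫ t in ε..1, R' * ‖z‖ / β₂ * t ^ (α - 1))
          = R' * ‖z‖ / β₂ * ((1 - ε ^ α) / α) := by
        rw [intervalIntegral.integral_const_mul, integral_rpow (Or.inl (by linarith))]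
        rw [show α - 1 + 1 = α by ring, Real.one_rpow]
      rw [hFTC, hval, _root_.abs_of_nonneg
        (mul_nonneg (by positivity) (div_nonneg (by linarith) hαpos.le))] at hbnd
      calc ‖F 1 - F ε‖ = ‖F 1 - F ε‖ := rfl
        _ ≤ R' * ‖z‖ / β₂ * ((1 - ε ^ α) / α) := hbnd
        _ ≤ R' * ‖z‖ / β₂ * (1 / α) :=
            mul_le_mul_of_nonneg_left ((div_le_div_iff_of_pos_right hαpos).2 (by linarith [Real.rpow_nonneg hε0.le α]))
              (by positivity)
        _ = R' * ‖z‖ / β₁ := by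
            rw [hα]; field_simp
    have hFlim : Filter.Tendsto F (nhdsWithin 0 (Set.Ioi 0)) (nhds 0) := by
      have h1 : Filter.Tendsto (fun ε : ℝ => ((ε ^ α : ℝ) : ℂ))
          (nhdsWithin 0 (Set.Ioi 0)) (nhds 0) := by
        have hc : ContinuousAt (fun ε : ℝ => ((ε ^ α : ℝ) : ℂ)) 0 :=
          Complex.continuous_ofReal.continuousAt.comp
            (Real.continuousAt_rpow_const 0 α (Or.inr hαpos.le))
        have := hc.continuousWithinAt (s := Set.Ioi 0)
        simpa [ContinuousWithinAt, Real.zero_rpow (ne_of_gt hαpos)] using this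
      have h2 : Filter.Tendsto (fun ε : ℝ => z * deriv p ((ε:ℂ) * z))
          (nhdsWithin 0 (Set.Ioi 0)) (nhds (z * deriv p ((((0:ℝ)):ℂ) * z))) := by
        apply Filter.Tendsto.mono_left _ nhdsWithin_le_nhds
        have hm : ContinuousAt (fun ε : ℝ => ((ε:ℂ) * z)) 0 :=
          (Complex.continuous_ofReal.mul continuous_const).continuousAt
        have hdc : ContinuousAt (deriv p) ((((0:ℝ)):ℂ) * z) := by
          have := (hp1 0 (by simp)).continuousAt
          simpa using this
        have hcomp : ContinuousAt (fun ε : ℝ => deriv p ((ε:ℂ) * z)) 0 :=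
          ContinuousAt.comp (g := deriv p) (f := fun ε : ℝ => ((ε:ℂ) * z)) (x := (0:ℝ)) hdc hm
        exact (continuousAt_const.mul hcomp).tendsto
      have := h1.mul h2
      simpa using this
    have hF1 : F 1 = z * deriv p z := by
      rw [hF]
      norm_num
    have hev : ∀ᶠ ε in nhdsWithin (0:ℝ) (Set.Ioi 0),
        ‖F 1‖ ≤ ‖F ε‖ + R' * ‖z‖ / β₁ := by
      filter_upwards [Ioo_mem_nhdsGT_of_mem (Set.mem_Ico.2 ⟨le_refl (0:ℝ), one_pos⟩)]
        with ε hε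
      have h := key ε hε
      calc ‖F 1‖ = ‖F ε + (F 1 - F ε)‖ := by ring_nf
        _ ≤ ‖F ε‖ + ‖F 1 - F ε‖ := norm_add_le _ _
        _ ≤ _ := by linarith
    have htend : Filter.Tendsto (fun ε : ℝ => ‖F ε‖ + R' * ‖z‖ / β₁)
        (nhdsWithin 0 (Set.Ioi 0)) (nhds (0 + R' * ‖z‖ / β₁)) := by
      apply Filter.Tendsto.add_const
      have := (continuous_norm.tendsto 0).comp hFlim
      simpa [Function.comp_def] using this
    have hle := ge_of_tendsto htend hev
    rw [hF1] at hle
    simpa using hle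
  -- derivative bound everywhere on the ball
  have hp'le : ∀ w ∈ ball (0:ℂ) 1, ‖deriv p w‖ ≤ R' / β₁ := by
    have main : ∀ u ∈ ball (0:ℂ) 1, u ≠ 0 → ‖deriv p u‖ ≤ R' / β₁ := by
      intro u hu hu0
      have h := hq1 u hu
      rw [norm_mul] at h
      have hupos : 0 < ‖u‖ := norm_pos_iff.2 hu0
      have h2 : ‖deriv p u‖ * ‖u‖
          ≤ (R' / β₁) * ‖u‖ := by
        calc ‖deriv p u‖ * ‖u‖
            = ‖u‖ * ‖deriv p u‖ := by ring
          _ ≤ R' * ‖u‖ / β₁ := h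
          _ = (R' / β₁) * ‖u‖ := by ring
      exact le_of_mul_le_mul_right h2 hupos
    intro w hw
    rcases eq_or_ne w 0 with rfl | hw0
    · have hcont : Filter.Tendsto (fun u : ℂ => ‖deriv p u‖)
          (nhdsWithin 0 {(0:ℂ)}ᶜ) (nhds (‖deriv p 0‖)) := by
        apply Filter.Tendsto.mono_left _ nhdsWithin_le_nhds
        exact (continuous_norm.continuousAt.comp
          (hp1 0 hw).continuousAt).tendsto
      apply le_of_tendsto hcont
      filter_upwards [self_mem_nhdsWithin,
        mem_nhdsWithin_of_mem_nhds (ball_mem_nhds (0:ℂ) one_pos)] with u hu1 hu2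
      exact main u hu2 hu1
    · exact main w hw hw0
  -- bound |p z - 1|
  have hpz : ∀ z ∈ ball (0:ℂ) 1, ‖p z - 1‖ ≤ R' / β₁ := by
    intro z hz
    have hseg : ∀ t ∈ Set.Icc (0:ℝ) 1, HasDerivWithinAt (fun y : ℝ => p ((y:ℂ) * z))
        (deriv p ((t:ℂ) * z) * z) (Set.Icc 0 1) t := by
      intro t ht
      have hw : ((t:ℂ) * z) ∈ ball (0:ℂ) 1 := hmem z hz t ht.1 ht.2
      have hpc : HasDerivAt p (deriv p ((t:ℂ) * z)) ((t:ℂ) * z) :=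
        (hp _ hw).differentiableAt.hasDerivAt
      have hinner : HasDerivAt (fun u : ℂ => u * z) z ((t:ℂ)) := by
        simpa using (hasDerivAt_id ((t:ℂ))).mul_const z
      have h2 : HasDerivAt (fun y : ℝ => p ((y:ℂ) * z)) (deriv p ((t:ℂ) * z) * z) t := by
        simpa [Function.comp] using (hpc.comp ((t:ℂ)) hinner).comp_ofReal
      exact h2.hasDerivWithinAt
    have hbound : ∀ t ∈ Set.Ico (0:ℝ) 1, ‖deriv p ((t:ℂ) * z) * z‖ ≤ R' / β₁ := by
      intro t ht
      rw [norm_mul]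
      have h1 := hp'le _ (hmem z hz t ht.1 ht.2.le)
      have h2 : ‖z‖ ≤ 1 := le_of_lt (mem_ball_zero_iff.1 hz)
      calc ‖deriv p ((t:ℂ) * z)‖ * ‖z‖ ≤ (R' / β₁) * 1 := by
            apply mul_le_mul h1 h2 (norm_nonneg _) (by positivity)
        _ = R' / β₁ := mul_one _
    have := norm_image_sub_le_of_norm_deriv_le_segment_01' hseg hbound
    simpa [hp0] using this
  -- conclusion
  intro z hz
  set v := p z - 1 with hv
  have ht := hpz z hz
  have hsb : Real.sqrt 2 * (R' / β₁) < 1 := by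
    rw [show Real.sqrt 2 * (R' / β₁) = (2 * Real.sqrt 2 * R') / (2 * β₁) by
      field_simp]
    rw [div_lt_one (by positivity)]
    linarith
  have htle : ‖v‖ ≤ 708/1000 := by
    nlinarith [ht, hsb, hsqrt2pos, norm_nonneg v,
      (by positivity : (0:ℝ) ≤ R' / β₁)]
  refine ⟨Complex.sinh v, ?_, ?_⟩
  · rw [mem_ball_zero_iff]
    exact aux_sinh v htle
  · rw [aux_inv v htle, hv]
    ring
end

section
/- Let β₁, β₂ > 0 be real numbers satisfying 2β₁ − β₂ ≥ 2√2·r₀, where r₀ ≈ 0.546302 is the unique positive root of r² + 2·cot(1)·r − 1 = 0. Let p be analytic on the open unit disk 𝔻 with p(0) = 1, and suppose that for every z ∈ 𝔻 the value 1 + β₁·z·p′(z) + β₂·z²·p″(z) lies in the set {w ∈ ℂ : w ≠ 0, w ≠ 2, |log(w/(2 − w))| < 1} (principal branch of the complex logarithm). Then for every z ∈ 𝔻, p(z) ∈ {1 + log(w + (1 + w²)^{1/2}) : w ∈ 𝔻}, i.e. p(z) ≺ 1 + sinh⁻¹ z. -/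
open Metric Set

namespace Stmt10Helper


lemma norm_sinh_sq (w : ℂ) :
    ‖Complex.sinh w‖ ^ 2 = Real.sinh w.re ^ 2 + Real.sin w.im ^ 2 := by
  have hw : Complex.sinh w
      = ↑(Real.sinh w.re * Real.cos w.im) + ↑(Real.cosh w.re * Real.sin w.im) * Complex.I := by
    conv_lhs => rw [← Complex.re_add_im w]
    rw [Complex.sinh_add, Complex.sinh_mul_I, Complex.cosh_mul_I]
    push_cast [← Complex.ofReal_sinh, ← Complex.ofReal_cosh, ← Complex.ofReal_sin,
      ← Complex.ofReal_cos]
    ring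
  rw [hw, Complex.sq_norm, Complex.normSq_add_mul_I]
  have c1 := Real.sin_sq_add_cos_sq w.im
  have c2 := Real.cosh_sq w.re
  nlinarith

lemma cosh_expand (w : ℂ) : Complex.cosh w
    = ↑(Real.cosh w.re * Real.cos w.im) + ↑(Real.sinh w.re * Real.sin w.im) * Complex.I := by
  conv_lhs => rw [← Complex.re_add_im w]
  rw [Complex.cosh_add, Complex.sinh_mul_I, Complex.cosh_mul_I]
  push_cast [← Complex.ofReal_sinh, ← Complex.ofReal_cosh, ← Complex.ofReal_sin,
    ← Complex.ofReal_cos]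
  ring

lemma norm_cosh_sq (w : ℂ) :
    ‖Complex.cosh w‖ ^ 2 = Real.sinh w.re ^ 2 + Real.cos w.im ^ 2 := by
  rw [cosh_expand w, Complex.sq_norm, Complex.normSq_add_mul_I]
  have c1 := Real.sin_sq_add_cos_sq w.im
  have c2 := Real.cosh_sq w.re
  nlinarith

lemma cosh_re (w : ℂ) : (Complex.cosh w).re = Real.cosh w.re * Real.cos w.im := by
  rw [cosh_expand w]
  simp only [Complex.add_re, Complex.ofReal_re, Complex.mul_re, Complex.I_re, Complex.I_im,
    Complex.ofReal_im]
  ring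

lemma sinh_sq_sub_sq_mono : MonotoneOn (fun x : ℝ => Real.sinh x ^ 2 - x ^ 2) (Ici 0) := by
  have hd : ∀ x : ℝ, HasDerivAt (fun x : ℝ => Real.sinh x ^ 2 - x ^ 2)
      (2 * Real.sinh x * Real.cosh x - 2 * x) x := by
    intro x
    have h1 := ((Real.hasDerivAt_sinh x).pow 2).sub ((hasDerivAt_id x).pow 2)
    exact h1.congr_deriv (by norm_num)
  apply monotoneOn_of_deriv_nonneg (convex_Ici 0)
  · exact ((Real.continuous_sinh.pow 2).sub (continuous_pow 2)).continuousOn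
  · intro x _
    exact (hd x).differentiableAt.differentiableWithinAt
  · intro x hx
    rw [interior_Ici] at hx
    rw [(hd x).deriv]
    have h1 : x ≤ Real.sinh x := le_of_lt (Real.self_lt_sinh_iff.2 hx)
    have h2 : 1 ≤ Real.cosh x := Real.one_le_cosh x
    nlinarith [(mem_Ioi.1 hx).le]

lemma norm_sinh_le (w : ℂ) : ‖Complex.sinh w‖ ≤ Real.sinh (‖w‖) := by
  set ρ := ‖w‖ with hρ
  have hρ0 : 0 ≤ ρ := norm_nonneg w
  have hre : |w.re| ≤ ρ := Complex.abs_re_le_norm w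
  have hsum : w.re ^ 2 + w.im ^ 2 = ρ ^ 2 := by
    rw [hρ, Complex.sq_norm, Complex.normSq_apply]; ring
  have hmono := sinh_sq_sub_sq_mono (a := |w.re|) (b := ρ) (mem_Ici.2 (abs_nonneg _)) (mem_Ici.2 hρ0) hre
  simp only at hmono
  have heven : Real.sinh |w.re| ^ 2 = Real.sinh w.re ^ 2 := by
    rcases abs_choice w.re with h | h <;> rw [h] <;> simp [Real.sinh_neg]
  have hsq : ‖Complex.sinh w‖ ^ 2 ≤ Real.sinh ρ ^ 2 := by
    rw [norm_sinh_sq]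
    have h1 : Real.sin w.im ^ 2 ≤ w.im ^ 2 := Real.sin_sq_le_sq
    have h2 : |w.re| ^ 2 = w.re ^ 2 := sq_abs _
    nlinarith
  have h3 : 0 ≤ Real.sinh ρ := Real.sinh_nonneg_iff.2 hρ0
  nlinarith [norm_nonneg (Complex.sinh w)]



lemma exp_half_le : Real.exp (1/2) ≤ 1.64873 := by
  have h := Real.exp_bound' (x := 1/2) (by norm_num) (by norm_num) (n := 6) (by norm_num)
  rw [show (6:ℕ) = 5+1 by rfl] at h
  simp only [Finset.sum_range_succ, Finset.sum_range_zero] at h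
  norm_num [Nat.factorial] at h
  linarith

lemma sinh_half_le : Real.sinh (1/2) ≤ 0.5212 := by
  rw [Real.sinh_eq]
  have h1 := exp_half_le
  have h3 : Real.exp (-(1/2)) = (Real.exp (1/2))⁻¹ := by rw [← Real.exp_neg]
  rw [h3]
  have h6 : Real.exp (1/2) * (Real.exp (1/2))⁻¹ = 1 :=
    mul_inv_cancel₀ (ne_of_gt (Real.exp_pos _))
  nlinarith [Real.exp_pos (1/2), inv_pos.2 (Real.exp_pos (1/2))]

lemma cos_half_ge : (0.875:ℝ) ≤ Real.cos (1/2) := by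
  have := Real.one_sub_sq_div_two_le_cos (x := 1/2)
  norm_num at this ⊢
  linarith

lemma exp_a_le : Real.exp 0.8143 ≤ 2.26 := by
  have h := Real.exp_bound' (x := 0.8143) (by norm_num) (by norm_num) (n := 6) (by norm_num)
  rw [show (6:ℕ) = 5+1 by rfl] at h
  simp only [Finset.sum_range_succ, Finset.sum_range_zero] at h
  norm_num [Nat.factorial] at h
  linarith

lemma sinh_a_lt : Real.sinh 0.8143 < 1 := by
  rw [Real.sinh_eq]
  have h1 := exp_a_le
  have h3 : Real.exp (-0.8143) = (Real.exp 0.8143)⁻¹ := by rw [← Real.exp_neg]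
  rw [h3]
  have h6 : Real.exp 0.8143 * (Real.exp 0.8143)⁻¹ = 1 :=
    mul_inv_cancel₀ (ne_of_gt (Real.exp_pos _))
  nlinarith [Real.exp_pos (0.8143:ℝ), inv_pos.2 (Real.exp_pos (0.8143:ℝ))]

lemma cos_one_le : Real.cos 1 ≤ 53/96 := by
  have h := Real.cos_bound (x := 1) (by norm_num)
  rw [abs_le] at h
  norm_num at h ⊢
  linarith [h.2]

lemma sin_one_ge : 25/32 ≤ Real.sin 1 := by
  have h := Real.sin_bound (x := 1) (by norm_num)
  rw [abs_le] at h
  norm_num at h ⊢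
  linarith [h.1]

lemma sqrt_two_ge : (1.4142:ℝ) ≤ Real.sqrt 2 := by
  nlinarith [Real.sq_sqrt (by norm_num : (0:ℝ) ≤ 2), Real.sqrt_nonneg 2]

-- convexity of sinh on [0, 1/2]: sinh x ≤ 2 sinh(1/2) x
lemma sinh_linear {x : ℝ} (h0 : 0 ≤ x) (h1 : x ≤ 1/2) :
    Real.sinh x ≤ 2 * Real.sinh (1/2) * x := by
  have hconv : ConvexOn ℝ (Icc (0:ℝ) (1/2)) Real.sinh := by
    apply convexOn_of_deriv2_nonneg (convex_Icc 0 (1/2)) Real.continuous_sinh.continuousOn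
    · exact Real.differentiable_sinh.differentiableOn
    · rw [Real.deriv_sinh]
      exact Real.differentiable_cosh.differentiableOn
    · intro y hy
      rw [interior_Icc] at hy
      have : (deriv^[2] Real.sinh) y = Real.sinh y := by
        simp [Function.iterate_succ, Real.deriv_sinh, Real.deriv_cosh]
      rw [this]
      exact Real.sinh_nonneg_iff.2 hy.1.le
  have hm1 : (1/2:ℝ) ∈ Icc (0:ℝ) (1/2) := by norm_num
  have hm0 : (0:ℝ) ∈ Icc (0:ℝ) (1/2) := by norm_num
  have key := hconv.2 hm1 hm0 (show (0:ℝ) ≤ 2*x by linarith)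
    (show (0:ℝ) ≤ 1-2*x by linarith) (show (2*x) + (1-2*x) = 1 by ring)
  simp only [smul_eq_mul, mul_zero, add_zero, Real.sinh_zero] at key
  calc Real.sinh x = Real.sinh (2*x*(1/2) + (1-2*x)*0) := by ring_nf
    _ ≤ 2*x*Real.sinh (1/2) + (1-2*x)*0 := by simpa using key
    _ = 2 * Real.sinh (1/2) * x := by ring

lemma norm_cosh_ge (a : ℂ) (ha : ‖a‖ ≤ 1/2) :
    (0.875:ℝ) ≤ ‖Complex.cosh a‖ := by
  have him : |a.im| ≤ 1/2 := le_trans (Complex.abs_im_le_norm a) ha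
  have h1 : Real.cos (1/2) ≤ Real.cos |a.im| :=
    Real.cos_le_cos_of_nonneg_of_le_pi (abs_nonneg _)
      (by linarith [Real.pi_gt_three]) him
  have h2 : Real.cos |a.im| = Real.cos a.im := by
    rcases abs_choice a.im with h | h <;> rw [h] <;> simp [Real.cos_neg]
  have h3 : (0.875:ℝ) ≤ Real.cos a.im := by
    have := cos_half_ge
    linarith [h1, h2.symm ▸ h1]
  have h4 := norm_cosh_sq a
  nlinarith [norm_nonneg (Complex.cosh a), sq_nonneg (Real.sinh a.re)]

lemma tanh_bound {G : ℂ} {M : ℂ} (hG2 : G ≠ 2) (hM : ‖M‖ ≤ 1/2)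
    (hexp : Complex.exp (2 * M) = G / (2 - G)) :
    ‖G - 1‖ ≤ (0.5212/0.875) * (2 * ‖M‖) := by
  have hd : (2:ℂ) - G ≠ 0 := sub_ne_zero.2 (Ne.symm hG2)
  set E := Complex.exp M with hE
  have hEne : E ≠ 0 := Complex.exp_ne_zero M
  have hE2 : E^2 = G / (2-G) := by
    rw [hE, sq, ← Complex.exp_add]
    rw [← hexp]; ring_nf
  have hsinh : Complex.sinh M = (E - E⁻¹)/2 := by
    rw [Complex.sinh, Complex.exp_neg]
  have hcosh : Complex.cosh M = (E + E⁻¹)/2 := by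
    rw [Complex.cosh, Complex.exp_neg]
  have hv1 : E^2 + 1 ≠ 0 := by
    intro h
    have h1 : G / (2-G) = -1 := by rw [← hE2]; linear_combination h
    rw [div_eq_iff hd] at h1
    have h2 : (2:ℂ) = 0 := by linear_combination h1
    exact two_ne_zero h2
  have h5 : E^2 * (2-G) = G := by rw [hE2]; field_simp
  have hsinh2 : Complex.sinh M = (E^2 - 1)/(2*E) := by
    rw [hsinh]; field_simp
  have hcosh2 : Complex.cosh M = (E^2 + 1)/(2*E) := by
    rw [hcosh]; field_simp
  have hcosh_ne : Complex.cosh M ≠ 0 := by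
    rw [hcosh2]
    apply div_ne_zero hv1
    simp [hEne]
  have key : G - 1 = Complex.sinh M / Complex.cosh M := by
    rw [eq_div_iff hcosh_ne, hsinh2, hcosh2, mul_div_assoc']
    rw [div_eq_div_iff (by simp [hEne]) (by simp [hEne] : (2:ℂ)*E ≠ 0)]
    ring_nf
    linear_combination (-2*E) * h5
  have hnum : ‖Complex.sinh M‖ ≤ 0.5212 * (2 * ‖M‖) := by
    calc ‖Complex.sinh M‖ ≤ Real.sinh (‖M‖) := norm_sinh_le M
      _ ≤ 2 * Real.sinh (1/2) * ‖M‖ :=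
          sinh_linear (norm_nonneg M) hM
      _ ≤ 0.5212 * (2 * ‖M‖) := by
          nlinarith [sinh_half_le, norm_nonneg M]
  have hden := norm_cosh_ge M hM
  rw [key, norm_div]
  rw [div_le_iff₀ (by linarith)]
  have habs := norm_nonneg M
  nlinarith [norm_nonneg (Complex.sinh M)]



lemma ode_bound (β₁ β₂ C : ℝ) (hβ₁ : 0 < β₁) (hβ₂ : 0 < β₂) (hC : 0 ≤ C)
    (p : ℂ → ℂ) (hp : AnalyticOnNhd ℂ p (ball 0 1))
    (hbound : ∀ w ∈ ball (0:ℂ) 1,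
      ‖(β₁:ℂ)*w*deriv p w + (β₂:ℂ)*w^2*deriv (deriv p) w‖ ≤ C * ‖w‖)
    (z : ℂ) (hz : z ∈ ball (0:ℂ) 1) :
    ‖p z - p 0‖ ≤ C * ‖z‖ / β₁ := by
  have hzlt : ‖z‖ < 1 := mem_ball_zero_iff.1 hz
  have hp' : AnalyticOnNhd ℂ (deriv p) (ball 0 1) := hp.deriv
  have hp'' : AnalyticOnNhd ℂ (deriv (deriv p)) (ball 0 1) := hp'.deriv
  -- membership of segment
  have hmem : ∀ t : ℝ, 0 ≤ t → t ≤ 1 → ((t:ℂ)*z) ∈ ball (0:ℂ) 1 := by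
    intro t h0 h1
    rw [mem_ball_zero_iff]
    calc ‖(t:ℂ)*z‖ = |t| * ‖z‖ := by
          rw [norm_mul, Complex.norm_real, Real.norm_eq_abs]
      _ ≤ 1 * ‖z‖ := by
          apply mul_le_mul_of_nonneg_right _ (norm_nonneg z)
          rw [abs_of_nonneg h0]; exact h1
      _ < 1 := by rwa [one_mul]
  set D : ℝ → ℂ := fun t => z * deriv p ((t:ℂ)*z) with hDdef
  set D2 : ℝ → ℂ := fun t => z^2 * deriv (deriv p) ((t:ℂ)*z) with hD2def
  -- derivative of t ↦ p (t z)
  have hφd : ∀ t : ℝ, 0 ≤ t → t ≤ 1 → HasDerivAt (fun s : ℝ => p ((s:ℂ)*z)) (D t) t := by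
    intro t h0 h1
    have h1' : HasDerivAt p (deriv p ((t:ℂ)*z)) ((t:ℂ)*z) :=
      ((hp _ (hmem t h0 h1)).differentiableAt).hasDerivAt
    have h2 : HasDerivAt (fun w : ℂ => p (w*z)) (deriv p ((t:ℂ)*z) * z) (t:ℂ) := by
      simpa [Function.comp_def] using h1'.comp (t:ℂ) ((hasDerivAt_id (t:ℂ)).mul_const z)
    have h3 := h2.comp_ofReal
    simpa [hDdef, mul_comm] using h3
  have hDd : ∀ t : ℝ, 0 ≤ t → t ≤ 1 → HasDerivAt D (D2 t) t := by
    intro t h0 h1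
    have h1' : HasDerivAt (deriv p) (deriv (deriv p) ((t:ℂ)*z)) ((t:ℂ)*z) :=
      ((hp' _ (hmem t h0 h1)).differentiableAt).hasDerivAt
    have h2 : HasDerivAt (fun w : ℂ => deriv p (w*z)) (deriv (deriv p) ((t:ℂ)*z) * z) (t:ℂ) := by
      simpa [Function.comp_def] using h1'.comp (t:ℂ) ((hasDerivAt_id (t:ℂ)).mul_const z)
    have h3 := (h2.comp_ofReal).const_mul z
    simpa [hDdef, hD2def, mul_comm, mul_assoc, pow_two] using h3
  have hDcont : ContinuousOn D (Icc 0 1) := by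
    intro t ht
    exact (hDd t ht.1 ht.2).continuousAt.continuousWithinAt
  -- bound on E s
  have hEb : ∀ s : ℝ, 0 < s → s ≤ 1 →
      ‖(β₁:ℂ) • (s • D s) + (β₂:ℂ) • ((s^2 : ℝ) • D2 s)‖ ≤ C * s * ‖z‖ := by
    intro s h0 h1
    have hm := hmem s h0.le h1
    have hb := hbound _ hm
    have heq : (β₁:ℂ) • (s • D s) + (β₂:ℂ) • ((s^2 : ℝ) • D2 s)
        = (β₁:ℂ)*((s:ℂ)*z)*deriv p ((s:ℂ)*z) + (β₂:ℂ)*((s:ℂ)*z)^2*deriv (deriv p) ((s:ℂ)*z) := by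
      simp only [hDdef, hD2def, Complex.real_smul, smul_eq_mul]
      push_cast
      ring
    rw [heq]
    calc _ ≤ C * ‖(s:ℂ)*z‖ := hb
      _ = C * s * ‖z‖ := by
          rw [norm_mul, Complex.norm_real, Real.norm_eq_abs, abs_of_nonneg h0.le]; ring
  set ν : ℝ := β₁/β₂ with hνdef
  have hν : 0 < ν := div_pos hβ₁ hβ₂
  set K : ℝ := C * ‖z‖ / β₁ with hKdef
  have hK0 : 0 ≤ K := by positivity
  -- Step A : ∀ t ∈ Ioc 0 1, ‖D t‖ ≤ K
  have stepA : ∀ t : ℝ, 0 < t → t ≤ 1 → ‖D t‖ ≤ K := by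
    intro t₀ ht₀0 ht₀1
    -- compact bound for D
    obtain ⟨M, hM⟩ : ∃ M, ∀ s ∈ Icc (0:ℝ) 1, ‖D s‖ ≤ M := by
      obtain ⟨M, hM⟩ := (isCompact_Icc.image_of_continuousOn hDcont).isBounded.exists_norm_le
      exact ⟨M, fun s hs => hM _ (mem_image_of_mem D hs)⟩
    -- the ψ function
    set ψ : ℝ → ℂ := fun s => (s ^ ν : ℝ) • D s with hψdef
    have hψbound : ∀ ε : ℝ, 0 < ε → ε < t₀ → ‖ψ t₀‖ ≤ ε^ν * M + K * t₀^ν := by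
      intro ε hε0 hεt
      have hψd : ∀ s : ℝ, ε ≤ s → s ≤ t₀ → HasDerivAt ψ
          ((ν * s^(ν-1)) • D s + (s^ν : ℝ) • D2 s) s := by
        intro s hs1 hs2
        have hs0 : 0 < s := lt_of_lt_of_le hε0 hs1
        have h := (Real.hasDerivAt_rpow_const (p := ν) (Or.inl hs0.ne')).smul
          (hDd s hs0.le (le_trans hs2 ht₀1))
        exact h.congr_deriv (add_comm _ _)
      have hψ'b : ∀ s : ℝ, ε ≤ s → s < t₀ →
          ‖(ν * s^(ν-1)) • D s + (s^ν : ℝ) • D2 s‖ ≤ (C * ‖z‖ / β₂) * s^(ν-1) := by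
        intro s hs1 hs2
        have hs0 : 0 < s := lt_of_lt_of_le hε0 hs1
        have hs3 : s ≤ 1 := le_trans hs2.le ht₀1
        have e1 : s * s^(ν-1) = s^ν := by
          have h := (Real.rpow_add hs0 1 (ν-1)).symm
          rw [Real.rpow_one] at h
          rw [h]; congr 1; ring
        have e2 : s^(ν-1) * s^(2:ℕ) = s * s^ν := by
          have h2 : (s:ℝ)^(2:ℕ) = s * s := sq s
          rw [h2, ← mul_assoc, mul_comm (s^(ν-1)) s, e1]
          ring
        have hνβ : ν * β₂ = β₁ := by
          rw [hνdef]; field_simp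
        have hid : ((β₂ * s : ℝ)) • ((ν * s^(ν-1)) • D s + (s^ν : ℝ) • D2 s)
            = ((s^(ν-1) : ℝ)) • ((β₁:ℂ) • (s • D s) + (β₂:ℂ) • ((s^2 : ℝ) • D2 s)) := by
          simp only [Complex.real_smul, smul_eq_mul]
          push_cast
          have e1c : (s:ℂ) * (s^(ν-1) : ℝ) = ((s^ν : ℝ) : ℂ) := by exact_mod_cast congrArg Complex.ofReal e1
          have e2c : ((s^(ν-1) : ℝ) : ℂ) * (s:ℂ)^2 = (s:ℂ) * ((s^ν : ℝ) : ℂ) := by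
            exact_mod_cast congrArg Complex.ofReal e2
          have hνβc : (ν:ℂ) * (β₂:ℂ) = (β₁:ℂ) := by exact_mod_cast congrArg Complex.ofReal hνβ
          linear_combination ((s:ℂ) * D s * ((s^(ν-1):ℝ):ℂ)) * hνβc - (β₂:ℂ) * D2 s * e2c
        have hnorm := congrArg (fun v : ℂ => ‖v‖) hid
        simp only [norm_smul, Real.norm_eq_abs] at hnorm
        rw [abs_of_pos (by positivity : (0:ℝ) < β₂ * s),
            abs_of_pos (Real.rpow_pos_of_pos hs0 _)] at hnorm
        have hE := hEb s hs0 hs3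
        have hrp : (0:ℝ) < s^(ν-1) := Real.rpow_pos_of_pos hs0 _
        rw [show C * ‖z‖ / β₂ * s^(ν-1) = (C * ‖z‖ * s^(ν-1))/β₂ by ring, le_div_iff₀ hβ₂]
        calc ‖(ν * s^(ν-1)) • D s + (s^ν : ℝ) • D2 s‖ * β₂
            = (β₂ * s) * ‖(ν * s^(ν-1)) • D s + (s^ν : ℝ) • D2 s‖ / s := by
              field_simp
          _ = s^(ν-1) * ‖(β₁:ℂ) • (s • D s) + (β₂:ℂ) • ((s^2 : ℝ) • D2 s)‖ / s := by rw [hnorm]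
          _ ≤ s^(ν-1) * (C * s * ‖z‖) / s :=
              (div_le_div_iff_of_pos_right hs0).2 (mul_le_mul_of_nonneg_left hE hrp.le)
          _ = C * ‖z‖ * s^(ν-1) := by field_simp
      -- apply the fencing theorem on [ε, t₀]
      have hεle : ε ≤ t₀ := hεt.le
      have main := image_norm_le_of_norm_deriv_right_le_deriv_boundary'
        (f := ψ) (a := ε) (b := t₀)
        (f' := fun s => (ν * s^(ν-1)) • D s + (s^ν : ℝ) • D2 s)
        (fun s hs => ((hψd s hs.1 hs.2).continuousAt).continuousWithinAt)
        (fun s hs => (hψd s hs.1 hs.2.le).hasDerivWithinAt)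
        (B := fun s => ‖ψ ε‖ + (C * ‖z‖ / β₂) * ((s^ν - ε^ν)/ν))
        (B' := fun s => (C * ‖z‖ / β₂) * s^(ν-1))
        (by simp)
        (by
          apply ContinuousOn.add continuousOn_const
          apply ContinuousOn.mul continuousOn_const
          apply ContinuousOn.div_const
          apply ContinuousOn.sub _ continuousOn_const
          intro s hs
          exact (Real.continuousAt_rpow_const s ν
            (Or.inl (lt_of_lt_of_le hε0 hs.1).ne')).continuousWithinAt)
        (fun s hs => by
          have hs0 : 0 < s := lt_of_lt_of_le hε0 hs.1
          have hd : HasDerivAt (fun s : ℝ => ‖ψ ε‖ + (C * ‖z‖ / β₂) * ((s^ν - ε^ν)/ν))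
              ((C * ‖z‖ / β₂) * s^(ν-1)) s := by
            have h1 := (((Real.hasDerivAt_rpow_const (p := ν)
              (Or.inl hs0.ne')).sub_const (ε^ν)).div_const ν).const_mul (C * ‖z‖ / β₂)
            have h2 := h1.const_add ‖ψ ε‖
            refine h2.congr_deriv ?_
            field_simp
          exact hd.hasDerivWithinAt)
        (fun s hs => hψ'b s hs.1 hs.2)
      have hfin := main (right_mem_Icc.2 hεle)
      have hψε : ‖ψ ε‖ ≤ ε^ν * M := by
        have h1 : ‖ψ ε‖ = ε^ν * ‖D ε‖ := by
          simp only [hψdef, norm_smul, Real.norm_eq_abs,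
            abs_of_pos (Real.rpow_pos_of_pos hε0 ν)]
        rw [h1]
        exact mul_le_mul_of_nonneg_left (hM ε ⟨hε0.le, le_trans hεt.le ht₀1⟩)
          (Real.rpow_pos_of_pos hε0 ν).le
      have hKν : (C * ‖z‖ / β₂) / ν = K := by
        rw [hKdef, hνdef]; field_simp; try ring
      have ht₀ν : (0:ℝ) < t₀^ν := Real.rpow_pos_of_pos ht₀0 _
      have hεν : (0:ℝ) < ε^ν := Real.rpow_pos_of_pos hε0 _
      calc ‖ψ t₀‖ ≤ ‖ψ ε‖ + (C * ‖z‖ / β₂) * ((t₀^ν - ε^ν)/ν) := hfin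
        _ ≤ ε^ν * M + (C * ‖z‖ / β₂) * (t₀^ν/ν) := by
            apply add_le_add hψε
            exact mul_le_mul_of_nonneg_left
              ((div_le_div_iff_of_pos_right hν).2 (by linarith)) (by positivity)
        _ = ε^ν * M + K * t₀^ν := by
            rw [hKdef, hνdef]; field_simp
    -- take ε → 0
    have hψt₀ : ‖ψ t₀‖ ≤ K * t₀^ν := by
      have hlim : Filter.Tendsto (fun ε : ℝ => ε^ν * M + K * t₀^ν)
          (nhdsWithin 0 (Ioi 0)) (nhds (0^ν * M + K * t₀^ν)) := by
        apply Filter.Tendsto.add _ tendsto_const_nhds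
        apply Filter.Tendsto.mul_const M
        exact ((Real.continuousAt_rpow_const 0 ν (Or.inr hν.le)).tendsto).mono_left
          nhdsWithin_le_nhds
      rw [Real.zero_rpow hν.ne', zero_mul, zero_add] at hlim
      apply ge_of_tendsto hlim
      filter_upwards [Ioo_mem_nhdsGT_of_mem (by constructor <;> [exact le_refl 0; exact ht₀0])]
        with ε hε
      exact hψbound ε hε.1 hε.2
    have ht₀ν : (0:ℝ) < t₀^ν := Real.rpow_pos_of_pos ht₀0 _
    have : t₀^ν * ‖D t₀‖ ≤ t₀^ν * K := by
      rw [mul_comm (t₀^ν) K]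
      calc t₀^ν * ‖D t₀‖ = ‖ψ t₀‖ := by
            rw [hψdef]
            simp only [norm_smul, Real.norm_eq_abs, abs_of_pos ht₀ν]
        _ ≤ K * t₀^ν := hψt₀
    exact le_of_mul_le_mul_left this ht₀ν
  -- Step B : bound at 0
  have hD0 : ‖D 0‖ ≤ K := by
    have hcw : ContinuousWithinAt D (Ioc (0:ℝ) 1) 0 :=
      (hDcont 0 ⟨le_refl 0, zero_le_one⟩).mono Ioc_subset_Icc_self
    have hne : (nhdsWithin (0:ℝ) (Ioc 0 1)).NeBot := by
      rw [← mem_closure_iff_nhdsWithin_neBot, closure_Ioc (one_ne_zero : (1:ℝ) ≠ 0).symm]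
      exact ⟨le_refl 0, zero_le_one⟩
    apply le_of_tendsto hcw.tendsto.norm
    filter_upwards [eventually_mem_nhdsWithin] with t ht
    exact stepA t ht.1 ht.2
  -- Step C : mean value on [0,1]
  have main := norm_image_sub_le_of_norm_deriv_right_le_segment
    (f := fun s : ℝ => p ((s:ℂ)*z)) (a := 0) (b := 1) (f' := D) (C := K)
    (fun t ht => (hφd t ht.1 ht.2).continuousAt.continuousWithinAt)
    (fun t ht => (hφd t ht.1 ht.2.le).hasDerivWithinAt)
    (fun t ht => by
      rcases eq_or_lt_of_le ht.1 with h | h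
      · rw [← h]; exact hD0
      · exact stepA t h ht.2.le)
    1 (right_mem_Icc.2 zero_le_one)
  simp only [Complex.ofReal_one, one_mul, Complex.ofReal_zero, zero_mul, sub_zero, mul_one] at main
  exact main


end Stmt10Helper

open Stmt10Helper

theorem stmt10 (β₁ β₂ : ℝ) (hβ₁ : 0 < β₁) (hβ₂ : 0 < β₂)
    (r₀ : ℝ) (hr₀pos : 0 < r₀)
    (hr₀ : r₀ ^ 2 + 2 * (Real.cos 1 / Real.sin 1) * r₀ - 1 = 0)
    (hcond : (2 * β₁ - β₂) ≥ 2 * Real.sqrt 2 * r₀)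
    (p : ℂ → ℂ) (hp : AnalyticOnNhd ℂ p (ball 0 1)) (hp0 : p 0 = 1)
    (hsub : ∀ z ∈ ball (0 : ℂ) 1,
      (1 + (β₁ : ℂ) * z * deriv p z + (β₂ : ℂ) * z ^ 2 * deriv (deriv p) z) ≠ 0 ∧ (1 + (β₁ : ℂ) * z * deriv p z + (β₂ : ℂ) * z ^ 2 * deriv (deriv p) z) ≠ 2 ∧
        ‖Complex.log ((1 + (β₁ : ℂ) * z * deriv p z + (β₂ : ℂ) * z ^ 2 * deriv (deriv p) z) / (2 - (1 + (β₁ : ℂ) * z * deriv p z + (β₂ : ℂ) * z ^ 2 * deriv (deriv p) z)))‖ < 1) :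
    ∀ z ∈ ball (0 : ℂ) 1, ∃ w ∈ ball (0 : ℂ) 1, p z = 1 + Complex.log (w + (1 + w ^ 2) ^ ((1 : ℂ) / 2)) := by
  intro z hz
  -- the operator function g
  set g : ℂ → ℂ := fun w => 1 + (β₁ : ℂ) * w * deriv p w + (β₂ : ℂ) * w ^ 2 * deriv (deriv p) w
    with hgdef
  -- its differentiability
  have hp' : AnalyticOnNhd ℂ (deriv p) (ball 0 1) := hp.deriv
  have hp'' : AnalyticOnNhd ℂ (deriv (deriv p)) (ball 0 1) := hp'.deriv
  have hgdiff : ∀ w ∈ ball (0:ℂ) 1, DifferentiableAt ℂ g w := by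
    intro w hw
    have h1 : DifferentiableAt ℂ (deriv p) w := (hp' w hw).differentiableAt
    have h2 : DifferentiableAt ℂ (deriv (deriv p)) w := (hp'' w hw).differentiableAt
    apply DifferentiableAt.add
    apply DifferentiableAt.add (differentiableAt_const _)
    · exact ((differentiableAt_const _).mul differentiableAt_id).mul h1
    · exact ((differentiableAt_const _).mul (differentiableAt_id.pow 2)).mul h2
  -- basic nonvanishing facts
  have hden : ∀ w ∈ ball (0:ℂ) 1, (2:ℂ) - g w ≠ 0 := by
    intro w hw
    exact sub_ne_zero.2 (Ne.symm (hsub w hw).2.1)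
  have hv0 : ∀ w ∈ ball (0:ℂ) 1, g w / (2 - g w) ≠ 0 := by
    intro w hw
    exact div_ne_zero (hsub w hw).1 (hden w hw)
  -- L function
  set L : ℂ → ℂ := fun w => Complex.log (g w / (2 - g w)) with hLdef
  have hL1 : ∀ w ∈ ball (0:ℂ) 1, ‖L w‖ < 1 := by
    intro w hw
    exact (hsub w hw).2.2
  have hslit : ∀ w ∈ ball (0:ℂ) 1, g w / (2 - g w) ∈ Complex.slitPlane := by
    intro w hw
    by_contra hcon
    rw [Complex.mem_slitPlane_iff] at hcon
    push_neg at hcon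
    have hre : (g w / (2 - g w)).re < 0 := by
      rcases lt_or_eq_of_le hcon.1 with h | h
      · exact h
      · exfalso
        apply hv0 w hw
        apply Complex.ext
        · simpa using h
        · simpa using hcon.2
    have harg : (g w / (2 - g w)).arg = Real.pi := Complex.arg_eq_pi_iff.2 ⟨hre, hcon.2⟩
    have him2 : |(L w).im| ≤ ‖L w‖ := Complex.abs_im_le_norm _
    have harg2 : (L w).im = Real.pi := by
      have h5 : (L w).im = (g w / (2 - g w)).arg := Complex.log_im _
      rw [h5, harg]
    rw [harg2, abs_of_pos Real.pi_pos] at him2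
    linarith [hL1 w hw, Real.pi_gt_three]
  have hLdiff : DifferentiableOn ℂ L (ball 0 1) := by
    intro w hw
    apply DifferentiableAt.differentiableWithinAt
    apply DifferentiableAt.comp (𝕜 := ℂ) w (Complex.differentiableAt_log (hslit w hw))
    exact (hgdiff w hw).div ((differentiableAt_const _).sub (hgdiff w hw)) (hden w hw)
  have hg0 : g 0 = 1 := by
    simp only [hgdef]
    simp
  have hL0 : L 0 = 0 := by
    simp only [hLdef]
    rw [hg0]
    norm_num
  have hmaps : Set.MapsTo L (ball (0:ℂ) 1) (ball (0:ℂ) 1) := by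
    intro w hw
    rw [mem_ball_zero_iff]
    exact hL1 w hw
  -- Schwarz
  have hSchwarz : ∀ w ∈ ball (0:ℂ) 1, ‖L w‖ ≤ ‖w‖ := by
    intro w hw
    exact Complex.norm_le_norm_of_mapsTo_ball hLdiff (hmaps.mono_right ball_subset_closedBall) hL0 (mem_ball_zero_iff.1 hw)
  -- main bound on g - 1
  have hbound : ∀ w ∈ ball (0:ℂ) 1,
      ‖(β₁:ℂ)*w*deriv p w + (β₂:ℂ)*w^2*deriv (deriv p) w‖ ≤ (0.5212/0.875) * ‖w‖ := by
    intro w hw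
    have hexp : Complex.exp (2 * (L w / 2)) = g w / (2 - g w) := by
      rw [show (2:ℂ) * (L w / 2) = L w by ring]
      exact Complex.exp_log (hv0 w hw)
    have hM : ‖L w / 2‖ ≤ 1/2 := by
      rw [norm_div, Complex.norm_two]
      have h1 := (hSchwarz w hw).trans (mem_ball_zero_iff.1 hw).le
      linarith
    have h2 := tanh_bound (hsub w hw).2.1 hM hexp
    have h3 : (2 : ℝ) * ‖L w / 2‖ = ‖L w‖ := by
      rw [norm_div, Complex.norm_two]; ring
    rw [h3] at h2
    have h4 : g w - 1 = (β₁:ℂ)*w*deriv p w + (β₂:ℂ)*w^2*deriv (deriv p) w := by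
      rw [hgdef]; ring
    rw [← h4]
    calc ‖g w - 1‖ ≤ 0.5212/0.875 * ‖L w‖ := h2
      _ ≤ 0.5212/0.875 * ‖w‖ := by
          apply mul_le_mul_of_nonneg_left (hSchwarz w hw) (by norm_num)
      _ = 0.5212/0.875 * ‖w‖ := rfl
  -- the ODE bound
  have hode := ode_bound β₁ β₂ (0.5212/0.875) hβ₁ hβ₂ (by norm_num) p hp hbound z hz
  rw [hp0] at hode
  -- numeric lower bound on β₁
  have hc_le : Real.cos 1 / Real.sin 1 ≤ 53/75 := by
    have h := div_le_div₀ (by norm_num : (0:ℝ) ≤ 53/96) cos_one_le (by norm_num : (0:ℝ) < 25/32)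
      sin_one_ge
    calc Real.cos 1 / Real.sin 1 ≤ (53/96)/(25/32) := h
      _ = 53/75 := by norm_num
  have hc0 : 0 ≤ Real.cos 1 / Real.sin 1 := by
    apply div_nonneg Real.cos_one_pos.le
    linarith [sin_one_ge]
  have hr₀lb : (0.5178:ℝ) ≤ r₀ := by
    by_contra hcon
    push_neg at hcon
    nlinarith [mul_le_mul_of_nonneg_right hc_le hr₀pos.le, hr₀pos]
  have hβ₁lb : (0.732:ℝ) ≤ β₁ := by
    have h1 : Real.sqrt 2 * r₀ ≤ β₁ := by nlinarith [Real.sqrt_nonneg 2]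
    nlinarith [sqrt_two_ge, hr₀pos, hr₀lb]
  -- final bound on q = p z - 1
  have hq : ‖p z - 1‖ ≤ 0.8143 := by
    have h1 : ‖z‖ ≤ 1 := (mem_ball_zero_iff.1 hz).le
    have h2 : (0.5212/0.875 : ℝ) * ‖z‖ / β₁ ≤ (0.5212/0.875) / 0.732 := by
      apply div_le_div₀ (by norm_num) _ (by norm_num) hβ₁lb
      nlinarith [norm_nonneg z]
    calc ‖p z - 1‖ ≤ 0.5212/0.875 * ‖z‖ / β₁ := hode
      _ ≤ (0.5212/0.875) / 0.732 := h2
      _ ≤ 0.8143 := by norm_num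
  set q : ℂ := p z - 1 with hqdef
  refine ⟨Complex.sinh q, ?_, ?_⟩
  · -- |sinh q| < 1
    rw [mem_ball_zero_iff]
    calc ‖Complex.sinh q‖ ≤ Real.sinh (‖q‖) := norm_sinh_le q
      _ ≤ Real.sinh 0.8143 := by
          rw [Real.sinh_le_sinh]
          exact hq
      _ < 1 := sinh_a_lt
  · -- the identity
    have hqa : ‖q‖ ≤ 0.8143 := by exact hq
    have him : |q.im| ≤ 0.8143 := le_trans (Complex.abs_im_le_norm q) hqa
    have hpi : (3:ℝ) < Real.pi := Real.pi_gt_three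
    have hcosre : 0 < (Complex.cosh q).re := by
      rw [cosh_re]
      apply mul_pos (Real.cosh_pos _)
      apply Real.cos_pos_of_mem_Ioo
      constructor
      · have := abs_le.1 him
        linarith [this.1]
      · have := abs_le.1 him
        linarith [this.2]
    have hsq : 1 + Complex.sinh q ^ 2 = Complex.cosh q ^ 2 := by
      rw [Complex.cosh_sq]; ring
    have hpow : (1 + Complex.sinh q ^ 2) ^ ((1:ℂ)/2) = Complex.cosh q := by
      rw [hsq, show (1:ℂ)/2 = (2:ℂ)⁻¹ by norm_num]
      exact Complex.sq_cpow_two_inv hcosre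
    rw [hpow, Complex.sinh_add_cosh]
    rw [Complex.log_exp]
    · rw [hqdef]; ring
    · have := abs_le.1 him
      linarith [this.1]
    · have := abs_le.1 him
      linarith [this.2]
end

section
/- Let β₁, β₂ > 0 be real numbers satisfying 2β₁ − β₂ ≥ 4. Let p be analytic on the open unit disk 𝔻 with p(0) = 1, and suppose that for every z ∈ 𝔻 the value 1 + β₁·z·p′(z) + β₂·z²·p″(z) lies in the set {w ∈ ℂ : |w² − 1| < 2|w|}. Then for every z ∈ 𝔻, p(z) ∈ {1 + log(w + (1 + w²)^{1/2}) : w ∈ 𝔻}, i.e. p(z) ≺ 1 + sinh⁻¹ z. -/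
open Metric

section StmtAux
open intervalIntegral
lemma sq_abs_lt {w v : ℂ} (h : ‖w‖ < ‖v‖) : Complex.normSq w < Complex.normSq v := by
  rw [← Complex.sq_norm, ← Complex.sq_norm]
  nlinarith [norm_nonneg w, norm_nonneg v]

lemma lune_re_ne (w : ℂ) (h : ‖w^2 - 1‖ < 2 * ‖w‖) : w.re ≠ 0 := by
  intro h0
  have h2 : Complex.normSq (w^2-1) < Complex.normSq (2*w) := by
    apply sq_abs_lt; rwa [norm_mul, Complex.norm_two]
  simp only [Complex.normSq_apply, Complex.sub_re, Complex.sub_im, Complex.one_re, Complex.one_im,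
    Complex.mul_re, Complex.mul_im, pow_two, Complex.re_ofNat, Complex.im_ofNat] at h2
  set x := w.re; set y := w.im
  nlinarith [sq_nonneg (y^2-1), sq_nonneg y, sq_nonneg x]

lemma lune_close (w : ℂ) (h : ‖w^2 - 1‖ < 2 * ‖w‖) (hre : 0 < w.re) :
    ‖w - 1‖ < Real.sqrt 2 := by
  have h2 : Complex.normSq (w^2-1) < Complex.normSq (2*w) := by
    apply sq_abs_lt; rwa [norm_mul, Complex.norm_two]
  have key : ‖w-1‖^2 < 2 := by
    rw [Complex.sq_norm]
    simp only [Complex.normSq_apply, Complex.sub_re, Complex.sub_im, Complex.one_re, Complex.one_im,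
      Complex.mul_re, Complex.mul_im, pow_two, Complex.re_ofNat, Complex.im_ofNat] at h2 ⊢
    set x := w.re; set y := w.im
    nlinarith [sq_nonneg (x*x+y*y-1-2*x), sq_nonneg (x*x+y*y-1+2*x), sq_nonneg y, hre]
  nlinarith [Real.sq_sqrt (by norm_num : (2:ℝ) ≥ 0), Real.sqrt_nonneg 2, norm_nonneg (w-1)]
lemma abs_cosh_le (z : ℂ) : ‖Complex.cosh z‖ ≤ Real.cosh (‖z‖) := by
  have h1 : Complex.cosh z = (Complex.exp z + Complex.exp (-z)) / 2 := by rw [Complex.cosh]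
  rw [h1]
  have h2 : ‖(Complex.exp z + Complex.exp (-z)) / 2‖
      ≤ (Real.exp z.re + Real.exp (-z.re)) / 2 := by
    rw [norm_div, Complex.norm_two]
    gcongr
    calc ‖Complex.exp z + Complex.exp (-z)‖
        ≤ ‖Complex.exp z‖ + ‖Complex.exp (-z)‖ := norm_add_le _ _
      _ = Real.exp z.re + Real.exp (-z.re) := by rw [Complex.norm_exp, Complex.norm_exp]; simp
  refine h2.trans ?_
  rw [← Real.cosh_eq, Real.cosh_le_cosh, _root_.abs_of_nonneg (norm_nonneg z)]
  exact Complex.abs_re_le_norm z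

lemma abs_sinh_le (u : ℂ) : ‖Complex.sinh u‖ ≤ ‖u‖ * Real.cosh (‖u‖) := by
  have key : Complex.sinh u = ∫ t in (0:ℝ)..1, u * Complex.cosh ((t:ℂ) * u) := by
    have h : ∀ t ∈ Set.uIcc (0:ℝ) 1,
        HasDerivAt (fun s : ℝ => Complex.sinh ((s:ℂ)*u)) (u * Complex.cosh ((t:ℂ)*u)) t := by
      intro t _
      have inner : HasDerivAt (fun s : ℝ => (s:ℂ) * u) u t := by
        simpa using (Complex.ofRealCLM.hasDerivAt (x := t)).mul_const u
      have outer : HasDerivAt Complex.sinh (Complex.cosh ((t:ℂ)*u)) ((t:ℂ)*u) :=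
        Complex.hasDerivAt_sinh _
      simpa [Function.comp_def, smul_eq_mul] using (outer.scomp t inner)
    have hint : IntervalIntegrable (fun t : ℝ => u * Complex.cosh ((t:ℂ)*u)) MeasureTheory.volume 0 1 := by
      apply Continuous.intervalIntegrable; continuity
    have h2 := intervalIntegral.integral_eq_sub_of_hasDerivAt h hint
    simp only [Complex.ofReal_one, Complex.ofReal_zero, one_mul, zero_mul, Complex.sinh_zero,
      sub_zero] at h2
    exact h2.symm
  rw [key]
  have hb := intervalIntegral.norm_integral_le_of_norm_le_const
    (C := ‖u‖ * Real.cosh (‖u‖))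
    (f := fun t : ℝ => u * Complex.cosh ((t:ℂ) * u)) (a := 0) (b := 1) ?_
  · simpa using hb
  · intro t ht
    rw [Set.uIoc_of_le (by norm_num : (0:ℝ) ≤ 1)] at ht
    have h1 : ‖u * Complex.cosh ((t:ℂ)*u)‖ = ‖u‖ * ‖Complex.cosh ((t:ℂ)*u)‖ := by
      simp
    rw [h1]
    gcongr
    refine (abs_cosh_le _).trans ?_
    rw [Real.cosh_le_cosh, _root_.abs_of_nonneg (norm_nonneg _),
      _root_.abs_of_nonneg (norm_nonneg _), norm_mul]
    calc ‖(t:ℂ)‖ * ‖u‖ ≤ 1 * ‖u‖ := by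
          gcongr
          rw [Complex.norm_real, Real.norm_eq_abs, _root_.abs_of_nonneg ht.1.le]
          exact ht.2
      _ = ‖u‖ := one_mul _
lemma numeric_cosh : (0.708 : ℝ) * Real.cosh 0.708 < 1 := by
  have h1 : Real.exp 0.0885 ≤ 1 / (1 - 0.0885) := by
    have h := Real.add_one_le_exp (-0.0885 : ℝ)
    rw [Real.exp_neg] at h
    rw [le_div_iff₀ (by norm_num : (0:ℝ) < 1 - 0.0885)]
    nlinarith [Real.exp_pos (0.0885:ℝ), mul_inv_cancel₀ (Real.exp_ne_zero (0.0885:ℝ))]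
  have h2 : Real.exp 0.708 ≤ (1 / (1 - 0.0885))^8 := by
    have he : (0.708 : ℝ) = (8:ℕ) * 0.0885 := by norm_num
    rw [he, Real.exp_nat_mul]
    gcongr
  have h3 : Real.exp (-0.708) ≤ 1 / 1.708 := by
    have h := Real.add_one_le_exp (0.708 : ℝ)
    rw [Real.exp_neg]
    rw [inv_le_comm₀ (Real.exp_pos _) (by norm_num : (0:ℝ) < 1/1.708)]
    calc (1 / 1.708 : ℝ)⁻¹ = 1.708 := by norm_num
      _ ≤ Real.exp 0.708 := by linarith
  rw [Real.cosh_eq]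
  nlinarith [Real.exp_pos (-0.708:ℝ)]
lemma branch_eq (u : ℂ) (hu : ‖u‖ ≤ 0.708) :
    Complex.log (Complex.sinh u + (1 + Complex.sinh u ^ 2) ^ ((1:ℂ)/2)) = u := by
  have him : |u.im| ≤ 0.708 := le_trans (Complex.abs_im_le_norm u) hu
  have hpi : (0.708:ℝ) < Real.pi/2 := by nlinarith [Real.pi_gt_three]
  have him' := abs_le.1 him
  have hcos : 0 < Real.cos u.im := by
    apply Real.cos_pos_of_mem_Ioo
    constructor <;> [linarith; linarith]
  have hre : 0 < (Complex.cosh u).re := by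
    have hc : Complex.cosh u = (Complex.exp u + Complex.exp (-u))/2 := by rw [Complex.cosh]
    rw [hc]
    have : ((Complex.exp u + Complex.exp (-u))/2).re = ((Complex.exp u).re + (Complex.exp (-u)).re)/2 := by
      simp [Complex.div_re, Complex.add_re]
    rw [this, Complex.exp_re, Complex.exp_re]
    simp only [Complex.neg_re, Complex.neg_im, Real.cos_neg]
    nlinarith [Real.exp_pos u.re, Real.exp_pos (-u.re)]
  have hc_ne : Complex.cosh u ≠ 0 := by
    intro h; rw [h] at hre; simp at hre
  have hsq : 1 + Complex.sinh u ^ 2 = Complex.cosh u ^ 2 := by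
    linear_combination -(Complex.cosh_sq_sub_sinh_sq u)
  rw [hsq]
  have h2 : (Complex.cosh u ^ 2 : ℂ) ≠ 0 := pow_ne_zero _ hc_ne
  have hcpow : (Complex.cosh u ^ 2) ^ ((1:ℂ)/2) = Complex.cosh u := by
    rw [Complex.cpow_def_of_ne_zero h2]
    set L := Complex.log (Complex.cosh u ^ 2) with hL
    set E := Complex.exp (L * (1/2)) with hE
    have hE2 : E ^ 2 = Complex.cosh u ^ 2 := by
      rw [hE, ← Complex.exp_nat_mul]
      have hh : ((2:ℕ):ℂ) * (L * (1/2)) = L := by push_cast; ring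
      rw [hh, hL, Complex.exp_log h2]
    have hfac : (E - Complex.cosh u) * (E + Complex.cosh u) = 0 := by linear_combination hE2
    rcases mul_eq_zero.1 hfac with h | h
    · exact sub_eq_zero.1 h
    · exfalso
      have hEre : 0 ≤ E.re := by
        rw [hE, Complex.exp_re]
        apply mul_nonneg (Real.exp_pos _).le
        apply Real.cos_nonneg_of_mem_Icc
        have : (L * (1/2)).im = L.im / 2 := by
          simp [Complex.mul_im]
          ring
        rw [this, hL, Complex.log_im]
        constructor
        · have := Complex.neg_pi_lt_arg (Complex.cosh u ^ 2); linarith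
        · have := Complex.arg_le_pi (Complex.cosh u ^ 2); linarith
      have hEeq : E = -Complex.cosh u := by linear_combination h
      rw [hEeq] at hEre
      simp only [Complex.neg_re] at hEre
      linarith
  rw [hcpow, Complex.sinh_add_cosh]
  apply Complex.log_exp
  · nlinarith [Real.pi_gt_three]
  · nlinarith [Real.pi_gt_three]

lemma ode_bound (β₁ β₂ : ℝ) (hβ₁ : 0 < β₁) (hβ₂ : 0 < β₂) (p : ℂ → ℂ)
    (hp : AnalyticOnNhd ℂ p (ball 0 1)) (z₀ : ℂ) (hz₀ : z₀ ∈ ball (0:ℂ) 1) (C : ℝ) (hC : 0 ≤ C)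
    (hq : ∀ z ∈ ball (0:ℂ) 1,
      ‖(β₁:ℂ)*z*deriv p z + (β₂:ℂ)*z^2*deriv (deriv p) z‖ ≤ C * ‖z‖) :
    ‖p z₀ - p 0‖ ≤ C / β₁ := by
  have hp1 : AnalyticOnNhd ℂ (deriv p) (ball 0 1) := hp.deriv
  have hp2 : AnalyticOnNhd ℂ (deriv (deriv p)) (ball 0 1) := hp1.deriv
  set k : ℝ := β₁ / β₂ with hkdef
  have hk : 0 < k := div_pos hβ₁ hβ₂
  have hz₀1 : ‖z₀‖ < 1 := by rwa [mem_ball, Complex.dist_eq, sub_zero] at hz₀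
  set u₁ : ℝ → ℂ := fun t => z₀ * deriv p ((t:ℂ) * z₀) with hu₁def
  set u₂ : ℝ → ℂ := fun t => z₀^2 * deriv (deriv p) ((t:ℂ) * z₀) with hu₂def
  have hmem : ∀ t : ℝ, |t| ≤ 1 → ((t:ℂ) * z₀) ∈ ball (0:ℂ) 1 := by
    intro t ht
    rw [mem_ball, Complex.dist_eq, sub_zero, norm_mul, Complex.norm_real, Real.norm_eq_abs]
    nlinarith [norm_nonneg z₀, hz₀1]
  have hinner : ∀ t : ℝ, HasDerivAt (fun s : ℝ => (s:ℂ) * z₀) z₀ t := by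
    intro t
    simpa using (Complex.ofRealCLM.hasDerivAt (x := t)).mul_const z₀
  have hd1 : ∀ t : ℝ, |t| ≤ 1 → HasDerivAt (fun s : ℝ => p ((s:ℂ) * z₀)) (u₁ t) t := by
    intro t ht
    have h := ((hp _ (hmem t ht)).differentiableAt.hasDerivAt).scomp t (hinner t)
    simpa [Function.comp_def, smul_eq_mul, hu₁def] using h
  have hd2 : ∀ t : ℝ, |t| ≤ 1 → HasDerivAt u₁ (u₂ t) t := by
    intro t ht
    have h := (((hp1 _ (hmem t ht)).differentiableAt.hasDerivAt).scomp t (hinner t)).const_mul z₀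
    simpa [Function.comp_def, smul_eq_mul, hu₁def, hu₂def, pow_two, mul_assoc] using h
  have hu₁cont : ContinuousOn u₁ (Set.Icc (-1) 1) := by
    intro t ht
    have : |t| ≤ 1 := abs_le.2 ⟨ht.1, ht.2⟩
    exact ((hd2 t this).continuousAt).continuousWithinAt
  have hu₂cont : ContinuousOn u₂ (Set.Icc (-1) 1) := by
    apply ContinuousOn.mul continuousOn_const
    apply hp2.continuousOn.comp
    · exact Continuous.continuousOn (by continuity)
    · intro t ht
      exact hmem t (abs_le.2 ⟨ht.1, ht.2⟩)
  -- bound for u₁ on (0,1]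
  have hclaim : ∀ t ∈ Set.Ioc (0:ℝ) 1, ‖u₁ t‖ ≤ C / β₁ := by
    intro t ⟨ht0, ht1⟩
    obtain ⟨M, hM⟩ := (isCompact_Icc (a := (-1:ℝ)) (b := 1)).exists_bound_of_continuousOn hu₁cont
    -- for each ε ∈ (0, t], bound ‖w t‖
    have hεbound : ∀ ε ∈ Set.Ioc (0:ℝ) t,
        t ^ k * ‖u₁ t‖ ≤ ε ^ k * M + C / β₁ * t ^ k := by
      intro ε ⟨hε0, hεt⟩
      set g : ℝ → ℂ := fun s => ((k * s^(k-1) : ℝ) : ℂ) * u₁ s + ((s^k : ℝ) : ℂ) * u₂ s with hgdef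
      have hsub1 : Set.Icc ε t ⊆ Set.Icc (-1:ℝ) 1 := by
        intro s hs; constructor <;> [linarith [hs.1]; linarith [hs.2]]
      have hw : ∀ s ∈ Set.uIcc ε t,
          HasDerivAt (fun x : ℝ => ((x ^ k : ℝ) : ℂ) * u₁ x) (g s) s := by
        intro s hs
        rw [Set.uIcc_of_le hεt] at hs
        have hs0 : 0 < s := lt_of_lt_of_le hε0 hs.1
        have hsabs : |s| ≤ 1 := by rw [abs_of_pos hs0]; linarith [hs.2]
        have hr : HasDerivAt (fun x : ℝ => x ^ k) (k * s^(k-1)) s :=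
          Real.hasDerivAt_rpow_const (Or.inl hs0.ne')
        exact (hr.ofReal_comp).mul (hd2 s hsabs)
      have hgint : IntervalIntegrable g MeasureTheory.volume ε t := by
        apply ContinuousOn.intervalIntegrable
        rw [Set.uIcc_of_le hεt]
        apply ContinuousOn.add
        · apply ContinuousOn.mul
          · apply Complex.continuous_ofReal.comp_continuousOn
            apply ContinuousOn.mul continuousOn_const
            apply ContinuousOn.rpow_const continuousOn_id
            intro s hs; exact Or.inl (lt_of_lt_of_le hε0 hs.1).ne'
          · exact hu₁cont.mono hsub1
        · apply ContinuousOn.mul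
          · apply Complex.continuous_ofReal.comp_continuousOn
            apply ContinuousOn.rpow_const continuousOn_id
            intro s hs; exact Or.inl (lt_of_lt_of_le hε0 hs.1).ne'
          · exact hu₂cont.mono hsub1
      have hftc := intervalIntegral.integral_eq_sub_of_hasDerivAt hw hgint
      -- pointwise bound on g
      have hgbd : ∀ s ∈ Set.Ioc ε t, ‖g s‖ ≤ C / β₂ * s ^ (k-1) := by
        intro s hs
        have hs0 : 0 < s := lt_of_lt_of_le hε0 hs.1.le
        have hsabs : |s| ≤ 1 := by rw [abs_of_pos hs0]; linarith [hs.2]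
        have e1 : s ^ (k-1) = s ^ (k-2) * s := by
          rw [show k-1 = (k-2)+1 by ring, Real.rpow_add hs0, Real.rpow_one]
        have e2 : s ^ k = s ^ (k-2) * s^2 := by
          rw [show k = (k-2)+2 by ring, Real.rpow_add hs0]
          norm_num [Real.rpow_two]
        have hkey : g s = ((s^(k-2)/β₂ : ℝ) : ℂ) *
            ((β₁:ℂ) * ((s:ℂ)*z₀) * deriv p ((s:ℂ)*z₀)
              + (β₂:ℂ) * ((s:ℂ)*z₀)^2 * deriv (deriv p) ((s:ℂ)*z₀)) := by
          rw [hgdef]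
          simp only [hu₁def, hu₂def]
          have e3 : k * s ^ (k-1) = s^(k-2)/β₂ * (β₁ * s) := by
            rw [e1, hkdef]; field_simp
          rw [e3, e2]
          have hb : (β₂:ℂ) ≠ 0 := by exact_mod_cast hβ₂.ne'
          push_cast
          field_simp [hb]
        rw [hkey]
        rw [norm_mul]
        have habs1 : ‖((s^(k-2)/β₂ : ℝ) : ℂ)‖ = s^(k-2)/β₂ := by
          rw [Complex.norm_real, Real.norm_eq_abs, abs_of_nonneg]
          positivity
        rw [habs1]
        have hF := hq ((s:ℂ)*z₀) (hmem s hsabs)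
        have : C * ‖(s:ℂ)*z₀‖ ≤ C * s := by
          rw [norm_mul, Complex.norm_real, Real.norm_eq_abs, abs_of_pos hs0]
          nlinarith [norm_nonneg z₀, hz₀1.le, mul_nonneg hC hs0.le]
        have hFs : ‖(β₁:ℂ) * ((s:ℂ)*z₀) * deriv p ((s:ℂ)*z₀)
              + (β₂:ℂ) * ((s:ℂ)*z₀)^2 * deriv (deriv p) ((s:ℂ)*z₀)‖ ≤ C * s := le_trans hF this
        have hnn : (0:ℝ) ≤ s^(k-2)/β₂ := by positivity
        calc s^(k-2)/β₂ * ‖(β₁:ℂ) * ((s:ℂ)*z₀) * deriv p ((s:ℂ)*z₀)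
              + (β₂:ℂ) * ((s:ℂ)*z₀)^2 * deriv (deriv p) ((s:ℂ)*z₀)‖
            ≤ s^(k-2)/β₂ * (C * s) := mul_le_mul_of_nonneg_left hFs hnn
          _ = C / β₂ * s ^ (k-1) := by rw [e1]; field_simp
      -- integrate the bound
      have hg0int : IntervalIntegrable (fun s : ℝ => C/β₂ * s^(k-1)) MeasureTheory.volume ε t := by
        apply ContinuousOn.intervalIntegrable
        rw [Set.uIcc_of_le hεt]
        apply ContinuousOn.mul continuousOn_const
        apply ContinuousOn.rpow_const continuousOn_id
        intro s hs; exact Or.inl (lt_of_lt_of_le hε0 hs.1).ne'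
      have hIbound : ‖∫ s in ε..t, g s‖ ≤ |∫ s in ε..t, C/β₂ * s^(k-1)| := by
        apply intervalIntegral.norm_integral_le_abs_of_norm_le ?_ hg0int
        refine (MeasureTheory.ae_restrict_iff' measurableSet_uIoc).2 (MeasureTheory.ae_of_all _ ?_)
        intro s hs
        exact hgbd s (by rwa [Set.uIoc_of_le hεt] at hs)
      have hIeval : (∫ s in ε..t, C/β₂ * s^(k-1)) = C/β₂ * ((t^k - ε^k)/k) := by
        rw [intervalIntegral.integral_const_mul,
          integral_rpow (Or.inl (by linarith : (-1:ℝ) < k-1))]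
        congr 1
        rw [show k - 1 + 1 = k by ring]
      have hIle : |∫ s in ε..t, C/β₂ * s^(k-1)| ≤ C / β₁ * t ^ k := by
        rw [hIeval]
        have hεk : (0:ℝ) ≤ ε ^ k := (Real.rpow_pos_of_pos hε0 k).le
        have htεk : ε ^ k ≤ t ^ k := Real.rpow_le_rpow hε0.le hεt hk.le
        have h1 : (0:ℝ) ≤ C/β₂ * ((t^k - ε^k)/k) := by
          apply mul_nonneg (div_nonneg hC hβ₂.le)
          apply div_nonneg _ hk.le
          linarith
        rw [abs_of_nonneg h1, hkdef]
        rw [show C / β₂ * ((t^(β₁/β₂) - ε^(β₁/β₂))/(β₁/β₂))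
            = C / β₁ * (t^(β₁/β₂) - ε^(β₁/β₂)) by field_simp]
        nlinarith [div_nonneg hC hβ₁.le]
      have heq : ((t^k : ℝ):ℂ) * u₁ t = (∫ s in ε..t, g s) + ((ε^k : ℝ):ℂ) * u₁ ε := by
        rw [hftc]; ring
      have htknn : (0:ℝ) ≤ t ^ k := (Real.rpow_pos_of_pos ht0 k).le
      have hεknn : (0:ℝ) ≤ ε ^ k := (Real.rpow_pos_of_pos hε0 k).le
      have hεIcc : ε ∈ Set.Icc (-1:ℝ) 1 := ⟨by linarith, by linarith⟩
      calc t ^ k * ‖u₁ t‖ = ‖((t^k : ℝ):ℂ) * u₁ t‖ := by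
            rw [norm_mul ((t^k : ℝ):ℂ) (u₁ t), Complex.norm_real, Real.norm_eq_abs, abs_of_nonneg htknn]
        _ = ‖(∫ s in ε..t, g s) + ((ε^k : ℝ):ℂ) * u₁ ε‖ := by rw [heq]
        _ ≤ ‖∫ s in ε..t, g s‖ + ‖((ε^k : ℝ):ℂ) * u₁ ε‖ := norm_add_le _ _
        _ ≤ C / β₁ * t ^ k + ε ^ k * M := by
            have h2 : ‖((ε^k : ℝ):ℂ) * u₁ ε‖ ≤ ε ^ k * M := by
              rw [norm_mul, Complex.norm_real, Real.norm_eq_abs, abs_of_nonneg hεknn]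
              exact mul_le_mul_of_nonneg_left (hM ε hεIcc) hεknn
            have h3 := hIbound.trans hIle
            linarith
        _ = ε ^ k * M + C / β₁ * t ^ k := by ring
    -- let ε → 0
    have h0 : Filter.Tendsto (fun ε : ℝ => ε ^ k) (nhdsWithin 0 (Set.Ioi 0)) (nhds 0) := by
      have hcont := (Real.continuousAt_rpow_const 0 k (Or.inr hk.le)).tendsto
      rw [Real.zero_rpow hk.ne'] at hcont
      exact hcont.mono_left nhdsWithin_le_nhds
    have hlim : Filter.Tendsto (fun ε : ℝ => ε ^ k * M + C / β₁ * t ^ k)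
        (nhdsWithin 0 (Set.Ioi 0)) (nhds (C / β₁ * t ^ k)) := by
      have := (h0.mul_const M).add (tendsto_const_nhds (x := C / β₁ * t ^ k))
      simpa using this
    have hfin : t ^ k * ‖u₁ t‖ ≤ C / β₁ * t ^ k := by
      apply ge_of_tendsto hlim
      filter_upwards [Ioc_mem_nhdsGT ht0] with ε hε
      exact hεbound ε hε
    have htk : 0 < t ^ k := Real.rpow_pos_of_pos ht0 k
    by_contra hcon
    push_neg at hcon
    nlinarith [htk, hfin]
  -- final FTC on [0,1]
  have hint1 : IntervalIntegrable u₁ MeasureTheory.volume 0 1 := by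
    apply ContinuousOn.intervalIntegrable
    rw [Set.uIcc_of_le (by norm_num : (0:ℝ) ≤ 1)]
    exact hu₁cont.mono (fun x hx => ⟨by linarith [hx.1], hx.2⟩)
  have hftc2 := intervalIntegral.integral_eq_sub_of_hasDerivAt (f := fun s : ℝ => p ((s:ℂ) * z₀))
    (fun s hs => by
      rw [Set.uIcc_of_le (by norm_num : (0:ℝ) ≤ 1)] at hs
      exact hd1 s (abs_le.2 ⟨by linarith [hs.1], hs.2⟩)) hint1
  simp only [Complex.ofReal_one, Complex.ofReal_zero, one_mul, zero_mul] at hftc2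
  have hbnd := intervalIntegral.norm_integral_le_of_norm_le_const
    (C := C / β₁) (f := u₁) (a := 0) (b := 1) (fun s hs => by
      rw [Set.uIoc_of_le (by norm_num : (0:ℝ) ≤ 1)] at hs
      exact hclaim s hs)
  rw [hftc2] at hbnd
  simpa using hbnd

end StmtAux

theorem stmt11 (β₁ β₂ : ℝ) (hβ₁ : 0 < β₁) (hβ₂ : 0 < β₂)
    (hcond : (2 * β₁ - β₂) ≥ 4)
    (p : ℂ → ℂ) (hp : AnalyticOnNhd ℂ p (ball 0 1)) (hp0 : p 0 = 1)
    (hsub : ∀ z ∈ ball (0 : ℂ) 1,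
      ‖(1 + (β₁ : ℂ) * z * deriv p z + (β₂ : ℂ) * z ^ 2 * deriv (deriv p) z) ^ 2 - 1‖ < 2 * ‖1 + (β₁ : ℂ) * z * deriv p z + (β₂ : ℂ) * z ^ 2 * deriv (deriv p) z‖) :
    ∀ z ∈ ball (0 : ℂ) 1, ∃ w ∈ ball (0 : ℂ) 1, p z = 1 + Complex.log (w + (1 + w ^ 2) ^ ((1 : ℂ) / 2)) := by
  intro z₀ hz₀
  set q : ℂ → ℂ := fun z => 1 + (β₁:ℂ) * z * deriv p z + (β₂:ℂ) * z^2 * deriv (deriv p) z with hqdef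
  have hp1 : AnalyticOnNhd ℂ (deriv p) (ball 0 1) := hp.deriv
  have hp2 : AnalyticOnNhd ℂ (deriv (deriv p)) (ball 0 1) := hp1.deriv
  have hqd : DifferentiableOn ℂ q (ball 0 1) := by
    apply DifferentiableOn.add
    apply DifferentiableOn.add
    · exact differentiableOn_const _
    · exact ((differentiableOn_const _).mul differentiableOn_id).mul hp1.differentiableOn
    · exact ((differentiableOn_const _).mul (differentiableOn_id.pow 2)).mul hp2.differentiableOn
  have hqc : ContinuousOn q (ball 0 1) := hqd.continuousOn
  have hq0 : q 0 = 1 := by simp [hqdef]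
  have hlune : ∀ z ∈ ball (0:ℂ) 1, ‖q z ^ 2 - 1‖ < 2 * ‖q z‖ :=
    fun z hz => hsub z hz
  -- real part of q is positive
  have hne : ∀ z ∈ ball (0:ℂ) 1, (q z).re ≠ 0 := fun z hz => lune_re_ne _ (hlune z hz)
  have hrepos : ∀ z ∈ ball (0:ℂ) 1, 0 < (q z).re := by
    by_contra hcon
    push_neg at hcon
    obtain ⟨z₁, hz₁, hle⟩ := hcon
    have hlt : (q z₁).re < 0 := lt_of_le_of_ne hle (hne z₁ hz₁)
    have hpre : IsPreconnected (q '' (ball (0:ℂ) 1)) :=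
      ((convex_ball (0:ℂ) 1).isPreconnected).image q hqc
    have hnonempty := hpre {w : ℂ | 0 < w.re} {w : ℂ | w.re < 0}
      (isOpen_lt continuous_const Complex.continuous_re)
      (isOpen_lt Complex.continuous_re continuous_const)
      (by
        rintro w ⟨z, hz, rfl⟩
        rcases (hne z hz).lt_or_gt with h | h
        · exact Or.inr h
        · exact Or.inl h)
      ⟨1, ⟨0, mem_ball_self one_pos, hq0⟩, by norm_num⟩
      ⟨q z₁, ⟨z₁, hz₁, rfl⟩, hlt⟩
    obtain ⟨w, _, hw1, hw2⟩ := hnonempty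
    simp only [Set.mem_setOf_eq] at hw1 hw2
    linarith
  -- Schwarz lemma
  have hmaps : Set.MapsTo q (ball (0:ℂ) 1) (ball (q 0) (Real.sqrt 2)) := by
    intro x hx
    rw [mem_ball, hq0, Complex.dist_eq]
    exact lune_close _ (hlune x hx) (hrepos x hx)
  have hschwarz : ∀ z ∈ ball (0:ℂ) 1, ‖q z - 1‖ ≤ Real.sqrt 2 * ‖z‖ := by
    intro z hz
    have h := Complex.dist_le_div_mul_dist_of_mapsTo_ball hqd (hmaps.mono_right ball_subset_closedBall) hz
    rw [hq0, Complex.dist_eq, Complex.dist_eq, sub_zero, div_one] at h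
    exact h
  -- ODE bound
  have hC : (0:ℝ) ≤ Real.sqrt 2 := Real.sqrt_nonneg 2
  have hode := ode_bound β₁ β₂ hβ₁ hβ₂ p hp z₀ hz₀ (Real.sqrt 2) hC (by
    intro z hz
    have h := hschwarz z hz
    have : q z - 1 = (β₁:ℂ)*z*deriv p z + (β₂:ℂ)*z^2*deriv (deriv p) z := by
      rw [hqdef]; ring
    rwa [this] at h)
  rw [hp0] at hode
  -- numeric: sqrt 2 / β₁ ≤ 0.708
  have hβ₁2 : (2:ℝ) ≤ β₁ := by linarith
  have hsqrt : Real.sqrt 2 ≤ 1.416 := by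
    rw [show (1.416:ℝ) = Real.sqrt (1.416^2) from (Real.sqrt_sq (by norm_num)).symm]
    apply Real.sqrt_le_sqrt
    norm_num
  have hu : ‖p z₀ - 1‖ ≤ 0.708 := by
    refine hode.trans ?_
    rw [div_le_iff₀ (by linarith : (0:ℝ) < β₁)]
    nlinarith
  -- assemble
  refine ⟨Complex.sinh (p z₀ - 1), ?_, ?_⟩
  · rw [mem_ball, Complex.dist_eq, sub_zero]
    have h1 := abs_sinh_le (p z₀ - 1)
    have h2 : ‖p z₀ - 1‖ * Real.cosh (‖p z₀ - 1‖)
        ≤ 0.708 * Real.cosh 0.708 := by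
      apply mul_le_mul hu
      · rw [Real.cosh_le_cosh]
        rw [_root_.abs_of_nonneg (norm_nonneg _)]
        rw [_root_.abs_of_nonneg (by norm_num : (0:ℝ) ≤ 0.708)]
        exact hu
      · positivity
      · norm_num
    calc ‖Complex.sinh (p z₀ - 1)‖ ≤ _ := h1
      _ ≤ 0.708 * Real.cosh 0.708 := h2
      _ < 1 := numeric_cosh
  · rw [branch_eq _ hu]
    ring
end

section
/- Let β₁, β₂ > 0 be real numbers satisfying 2β₁ − β₂ ≥ 2√2·sinh 1. Let p be analytic on the open unit disk 𝔻 with p(0) = 1, and suppose that for every z ∈ 𝔻 the value 1 + β₁·z·p′(z) + β₂·z²·p″(z) lies in the set {1 + sin w : w ∈ 𝔻}. Then for every z ∈ 𝔻, p(z) ∈ {1 + log(w + (1 + w²)^{1/2}) : w ∈ 𝔻}, i.e. p(z) ≺ 1 + sinh⁻¹ z. -/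
open Metric Set Filter

noncomputable section

namespace Stmt12Aux

lemma abs_cos_le (w : ℂ) : ‖Complex.cos w‖ ≤ Real.cosh ‖w‖ := by
  have h1 : Complex.cos w = (Complex.exp (w * Complex.I) + Complex.exp (-w * Complex.I)) / 2 := rfl
  rw [h1, norm_div]
  simp only [Complex.norm_ofNat]
  have h2 : ‖Complex.exp (w * Complex.I) + Complex.exp (-w * Complex.I)‖
      ≤ Real.exp (-w.im) + Real.exp (w.im) := by
    refine (norm_add_le _ _).trans ?_
    rw [Complex.norm_exp, Complex.norm_exp]
    simp [Complex.mul_re]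
  have h3 : Real.cosh (w.im) ≤ Real.cosh ‖w‖ := by
    rw [← Real.cosh_abs (w.im), ← Real.cosh_abs ‖w‖]
    exact Real.cosh_le_cosh.2 (by simpa using Complex.abs_im_le_norm w)
  calc ‖Complex.exp (w * Complex.I) + Complex.exp (-w * Complex.I)‖ / 2
      ≤ (Real.exp (-w.im) + Real.exp (w.im)) / 2 := by linarith
    _ = Real.cosh (w.im) := by rw [Real.cosh_eq]; ring
    _ ≤ Real.cosh ‖w‖ := h3

lemma abs_cosh_le (w : ℂ) : ‖Complex.cosh w‖ ≤ Real.cosh ‖w‖ := by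
  have h1 : Complex.cosh w = (Complex.exp w + Complex.exp (-w)) / 2 := rfl
  rw [h1, norm_div]
  simp only [Complex.norm_ofNat]
  have h2 : ‖Complex.exp w + Complex.exp (-w)‖
      ≤ Real.exp (w.re) + Real.exp (-w.re) := by
    refine (norm_add_le _ _).trans ?_
    rw [Complex.norm_exp, Complex.norm_exp]
    simp
  have h3 : Real.cosh (w.re) ≤ Real.cosh ‖w‖ := by
    rw [← Real.cosh_abs (w.re), ← Real.cosh_abs ‖w‖]
    exact Real.cosh_le_cosh.2 (by simpa using Complex.abs_re_le_norm w)
  calc ‖Complex.exp w + Complex.exp (-w)‖ / 2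
      ≤ (Real.exp w.re + Real.exp (-w.re)) / 2 := by linarith
    _ = Real.cosh (w.re) := (Real.cosh_eq _).symm
    _ ≤ Real.cosh ‖w‖ := h3




lemma sinh_growth (F G : ℂ → ℂ) (hF : ∀ x, HasDerivAt F (G x) x) (hF0 : F 0 = 0)
    (hG : ∀ x, ‖G x‖ ≤ Real.cosh ‖x‖)
    (hGcont : Continuous G) (v : ℂ) :
    ‖F v‖ ≤ Real.sinh ‖v‖ := by
  set a := ‖v‖ with ha
  have ha0 : 0 ≤ a := norm_nonneg v
  have hf : ∀ s ∈ uIcc (0:ℝ) 1, HasDerivAt (fun s : ℝ => F ((s:ℂ)*v)) (v * G ((s:ℂ)*v)) s := by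
    intro s _
    have h1 : HasDerivAt (fun y : ℂ => F (y*v)) (G ((s:ℂ)*v) * v) (s:ℂ) :=
      (hF _).comp _ (hasDerivAt_mul_const v)
    simpa [mul_comm] using h1.comp_ofReal
  have hint : IntervalIntegrable (fun s : ℝ => v * G ((s:ℂ)*v)) MeasureTheory.volume 0 1 :=
    Continuous.intervalIntegrable (by continuity) 0 1
  have heq : ∫ s in (0:ℝ)..1, v * G ((s:ℂ)*v) = F v - F 0 := by
    simpa using intervalIntegral.integral_eq_sub_of_hasDerivAt hf hint
  have hbd : ∀ᵐ (s : ℝ) ∂MeasureTheory.volume.restrict (Set.uIoc (0:ℝ) 1),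
      ‖v * G ((s:ℂ)*v)‖ ≤ a * Real.cosh (s * a) := by
    rw [MeasureTheory.ae_restrict_iff' measurableSet_uIoc]
    refine MeasureTheory.ae_of_all _ (fun s hs => ?_)
    rw [Set.uIoc_of_le (by norm_num : (0:ℝ) ≤ 1)] at hs
    have hs' : 0 < s ∧ s ≤ 1 := ⟨hs.1, hs.2⟩
    have h1 : ‖(s:ℂ)*v‖ = s * a := by
      rw [norm_mul, Complex.norm_real, Real.norm_eq_abs, _root_.abs_of_nonneg hs'.1.le]
    calc ‖v * G ((s:ℂ)*v)‖ = a * ‖G ((s:ℂ)*v)‖ := by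
          rw [norm_mul, ha]
      _ ≤ a * Real.cosh (s * a) := by
          refine mul_le_mul_of_nonneg_left ?_ ha0
          have := hG ((s:ℂ)*v); rwa [h1] at this
  have hintb : IntervalIntegrable (fun s : ℝ => a * Real.cosh (s * a)) MeasureTheory.volume 0 1 :=
    Continuous.intervalIntegrable (by continuity) 0 1
  have hnorm : ‖∫ s in (0:ℝ)..1, v * G ((s:ℂ)*v)‖ ≤ |∫ s in (0:ℝ)..1, a * Real.cosh (s * a)| :=
    intervalIntegral.norm_integral_le_abs_of_norm_le hbd hintb
  have hcalc : ∫ s in (0:ℝ)..1, a * Real.cosh (s * a) = Real.sinh a := by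
    have hd : ∀ s ∈ uIcc (0:ℝ) 1, HasDerivAt (fun s : ℝ => Real.sinh (s * a))
        (a * Real.cosh (s * a)) s := by
      intro s _
      have := (Real.hasDerivAt_sinh (s*a)).comp s (hasDerivAt_mul_const a)
      exact this.congr_deriv (mul_comm _ _)
    rw [intervalIntegral.integral_eq_sub_of_hasDerivAt hd hintb]
    simp
  rw [heq, hcalc] at hnorm
  rw [hF0, sub_zero] at hnorm
  exact hnorm.trans_eq (abs_of_nonneg (Real.sinh_nonneg_iff.2 ha0))


lemma abs_sin_le (v : ℂ) : ‖Complex.sin v‖ ≤ Real.sinh ‖v‖ :=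
  sinh_growth Complex.sin Complex.cos (fun x => Complex.hasDerivAt_sin x) Complex.sin_zero
    abs_cos_le Complex.continuous_cos v

lemma abs_sinh_le (v : ℂ) : ‖Complex.sinh v‖ ≤ Real.sinh ‖v‖ :=
  sinh_growth Complex.sinh Complex.cosh (fun x => Complex.hasDerivAt_sinh x) Complex.sinh_zero
    abs_cosh_le Complex.continuous_cosh v


lemma exp_34_lt : Real.exp (3/4) < 2.29 := by
  have h4 : Real.exp (3/4) ^ (4:ℕ) = Real.exp 3 := by
    rw [← Real.exp_nat_mul]; norm_num
  have h3 : Real.exp 3 = Real.exp 1 ^ (3:ℕ) := by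
    rw [← Real.exp_nat_mul]; norm_num
  have he : Real.exp 1 < 2.7182818286 := Real.exp_one_lt_d9
  have hpow : Real.exp (3/4) ^ (4:ℕ) < 2.29 ^ (4:ℕ) := by
    rw [h4, h3]
    calc Real.exp 1 ^ (3:ℕ) < 2.7182818286 ^ (3:ℕ) := by
          exact pow_lt_pow_left₀ he (Real.exp_pos 1).le (by norm_num)
      _ < 2.29 ^ (4:ℕ) := by norm_num
  exact lt_of_pow_lt_pow_left₀ 4 (by norm_num) hpow

lemma sinh_lt_one {t : ℝ} (ht : t < 0.7072) : Real.sinh t < 1 := by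
  have h1 : 1 - t ≤ Real.exp (-t) := by
    have := Real.add_one_le_exp (-t); linarith
  have h2 : Real.exp t < 2.29 :=
    lt_trans (Real.exp_lt_exp.2 (by norm_num [ht]; linarith)) exp_34_lt
  rw [Real.sinh_eq]; norm_num; linarith

lemma inv_sqrt_two_lt : 1 / Real.sqrt 2 < 0.7072 := by
  have h : (1.4142 : ℝ) < Real.sqrt 2 := by
    nlinarith [Real.sqrt_nonneg 2, Real.sq_sqrt (show (0:ℝ) ≤ 2 by norm_num)]
  rw [div_lt_iff₀ (by positivity)]
  nlinarith [Real.sqrt_nonneg 2]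

lemma final_step (u : ℂ) (hu : ‖u‖ < 0.7072) :
    ∃ w ∈ ball (0:ℂ) 1, (1 : ℂ) + u = 1 + Complex.log (w + (1 + w ^ 2) ^ ((1 : ℂ) / 2)) := by
  have him : |u.im| < 0.7072 := lt_of_le_of_lt (Complex.abs_im_le_norm u) hu
  have him' := abs_lt.1 him
  have hpi3 := Real.pi_gt_three
  refine ⟨Complex.sinh u, ?_, ?_⟩
  · rw [mem_ball, dist_zero_right]
    calc ‖Complex.sinh u‖ ≤ Real.sinh ‖u‖ := abs_sinh_le u
      _ < 1 := sinh_lt_one hu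
  · have hcos : 0 < Real.cos u.im :=
      Real.cos_pos_of_mem_Ioo ⟨by linarith, by linarith⟩
    have hre : 0 < (Complex.cosh u).re := by
      have h1 : Complex.cosh u = (Complex.exp u + Complex.exp (-u)) / 2 := rfl
      have h2 : (Complex.cosh u).re
          = (Real.exp u.re * Real.cos u.im + Real.exp (-u.re) * Real.cos u.im) / 2 := by
        rw [h1]
        simp [Complex.div_re, Complex.add_re, Complex.exp_re, Complex.neg_re, Complex.neg_im,
          Real.cos_neg, Complex.normSq]
      rw [h2]
      have := Real.exp_pos u.re
      have := Real.exp_pos (-u.re)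
      positivity
    have hne : Complex.cosh u ≠ 0 := by
      intro h; rw [h] at hre; simp at hre
    have harg : |Complex.arg (Complex.cosh u)| < Real.pi / 2 :=
      Complex.abs_arg_lt_pi_div_two_iff.2 (Or.inl hre)
    have harg' := abs_lt.1 harg
    have hsq : (1 : ℂ) + Complex.sinh u ^ 2 = Complex.cosh u ^ 2 := by
      rw [Complex.cosh_sq]; ring
    have hpow : (Complex.cosh u ^ 2) ^ ((1:ℂ)/2) = Complex.cosh u := by
      have he : Complex.cosh u ^ 2 = Complex.exp (2 * Complex.log (Complex.cosh u)) := by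
        rw [two_mul, Complex.exp_add, Complex.exp_log hne]; ring
      have him2 : (2 * Complex.log (Complex.cosh u)).im = 2 * Complex.arg (Complex.cosh u) := by
        simp [Complex.log_im]
      rw [he, Complex.cpow_def_of_ne_zero (Complex.exp_ne_zero _), Complex.log_exp
        (by rw [him2]; linarith [Real.pi_pos]) (by rw [him2]; linarith)]
      rw [show (2 * Complex.log (Complex.cosh u)) * ((1:ℂ)/2) = Complex.log (Complex.cosh u) by
        ring, Complex.exp_log hne]
    have hexp : Complex.sinh u + Complex.cosh u = Complex.exp u := Complex.sinh_add_cosh u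
    have hlog : Complex.log (Complex.exp u) = u :=
      Complex.log_exp (by linarith) (by linarith)
    rw [hsq, hpow, hexp, hlog]


end Stmt12Aux

open Stmt12Aux

set_option maxHeartbeats 2000000 in
theorem stmt12 (β₁ β₂ : ℝ) (hβ₁ : 0 < β₁) (hβ₂ : 0 < β₂)
    (hcond : (2 * β₁ - β₂) ≥ 2 * Real.sqrt 2 * Real.sinh 1)
    (p : ℂ → ℂ) (hp : AnalyticOnNhd ℂ p (ball 0 1)) (hp0 : p 0 = 1)
    (hsub : ∀ z ∈ ball (0 : ℂ) 1,
      ∃ w ∈ ball (0 : ℂ) 1, (1 + (β₁ : ℂ) * z * deriv p z + (β₂ : ℂ) * z ^ 2 * deriv (deriv p) z) = 1 + Complex.sin w) :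
    ∀ z ∈ ball (0 : ℂ) 1, ∃ w ∈ ball (0 : ℂ) 1, p z = 1 + Complex.log (w + (1 + w ^ 2) ^ ((1 : ℂ) / 2)) := by
  have hsinh1 : 0 < Real.sinh 1 := Real.sinh_pos_iff.2 one_pos
  have hsqrt2 : (0:ℝ) < Real.sqrt 2 := Real.sqrt_pos.2 (by norm_num)
  have hβ : Real.sqrt 2 * Real.sinh 1 < β₁ := by nlinarith
  set C : ℝ := Real.sinh 1 / β₁ with hC
  have hCpos : 0 < C := div_pos hsinh1 hβ₁
  have hClt : C < 1 / Real.sqrt 2 := by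
    rw [hC, div_lt_div_iff₀ hβ₁ hsqrt2]
    nlinarith
  have hball0 : (0:ℂ) ∈ ball (0:ℂ) 1 := mem_ball_self one_pos
  have hp' : AnalyticOnNhd ℂ (deriv p) (ball 0 1) := hp.deriv
  have hp'' : AnalyticOnNhd ℂ (deriv (deriv p)) (ball 0 1) := hp'.deriv
  set h : ℂ → ℂ := fun ζ => (β₁:ℂ) * ζ * deriv p ζ + (β₂:ℂ) * ζ^2 * deriv (deriv p) ζ with hhdef
  have hh0 : h 0 = 0 := by simp [hhdef]
  have hhdiff : DifferentiableOn ℂ h (ball 0 1) := by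
    apply DifferentiableOn.add
    · exact ((differentiableOn_const _).mul differentiableOn_id).mul hp'.differentiableOn
    · exact ((differentiableOn_const _).mul (differentiableOn_id.pow 2)).mul hp''.differentiableOn
  have hmaps : MapsTo h (ball 0 1) (ball (h 0) (Real.sinh 1)) := by
    intro ζ hζ
    rw [hh0, mem_ball, dist_zero_right]
    obtain ⟨w, hw, hwe⟩ := hsub ζ hζ
    have heq : h ζ = Complex.sin w := by
      simp only [hhdef]; linear_combination hwe
    rw [heq]
    calc ‖Complex.sin w‖ ≤ Real.sinh ‖w‖ := abs_sin_le w
      _ < Real.sinh 1 := Real.sinh_lt_sinh.2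
          (by simpa [mem_ball, dist_zero_right] using hw)
  have hschwarz : ∀ ζ ∈ ball (0:ℂ) 1, ‖h ζ‖ ≤ Real.sinh 1 * ‖ζ‖ := by
    intro ζ hζ
    have := Complex.dist_le_div_mul_dist_of_mapsTo_ball hhdiff (hmaps.mono_right ball_subset_closedBall) hζ
    simpa [hh0, dist_zero_right, div_one, Complex.dist_eq] using this
  have hζball : ∀ (ζ : ℂ), ζ ∈ ball (0:ℂ) 1 → ∀ s : ℝ, 0 ≤ s → s ≤ 1 →
      (s:ℂ) * ζ ∈ ball (0:ℂ) 1 := by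
    intro ζ hζ s hs0 hs1
    rw [mem_ball, dist_zero_right] at *
    rw [norm_mul, Complex.norm_real, Real.norm_eq_abs, _root_.abs_of_nonneg hs0]
    nlinarith [norm_nonneg ζ]
  -- key derivative bound away from 0
  have hgbound : ∀ ζ ∈ ball (0:ℂ) 1, ζ ≠ 0 → ‖deriv p ζ‖ ≤ C := by
    intro ζ hζ hζ0
    set γ : ℝ := (β₁ - β₂)/β₂ with hγdef
    have hγsum : γ + 1 = β₁ / β₂ := by rw [hγdef]; field_simp; ring
    have hγ1 : 0 < γ + 1 := by rw [hγsum]; positivity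
    have hγ1' : -1 < γ := by linarith
    have hgd : ∀ w ∈ ball (0:ℂ) 1, HasDerivAt (fun y : ℂ => y * deriv p y)
        (deriv p w + w * deriv (deriv p) w) w := by
      intro w hw
      have h1 : HasDerivAt (deriv p) (deriv (deriv p) w) w := (hp' w hw).differentiableAt.hasDerivAt
      simpa using (hasDerivAt_id' w).fun_mul h1
    set g : ℂ → ℂ := fun w => w * deriv p w with hgdef
    set G : ℝ → ℂ := fun s => ((s ^ γ : ℝ) : ℂ) * g ((s:ℂ) * ζ) with hGdef
    have hγc : (γ:ℂ) = ((β₁:ℂ) - β₂)/β₂ := by rw [hγdef]; push_cast; ring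
    have hβ₂c : (β₂:ℂ) ≠ 0 := by exact_mod_cast hβ₂.ne'
    have hmain : ∀ ε : ℝ, 0 < ε → ε < 1 → ‖G 1 - G ε‖ ≤ Real.sinh 1 * ‖ζ‖ / β₁ := by
      intro ε hε hε1
      have hGderiv : ∀ s ∈ uIcc ε 1, HasDerivAt G
          (((s ^ (γ - 1) / β₂ : ℝ) : ℂ) * h ((s:ℂ) * ζ)) s := by
        intro s hs
        rw [uIcc_of_le hε1.le] at hs
        have hs0 : 0 < s := lt_of_lt_of_le hε hs.1
        have hmem : (s:ℂ) * ζ ∈ ball (0:ℂ) 1 := hζball ζ hζ s hs0.le hs.2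
        have hA : HasDerivAt (fun s : ℝ => ((s ^ γ : ℝ) : ℂ)) ((γ * s ^ (γ-1) : ℝ) : ℂ) s :=
          (Real.hasDerivAt_rpow_const (Or.inl hs0.ne')).ofReal_comp
        have hB : HasDerivAt (fun s : ℝ => g ((s:ℂ) * ζ))
            (ζ * (deriv p ((s:ℂ)*ζ) + (s:ℂ)*ζ * deriv (deriv p) ((s:ℂ)*ζ))) s := by
          have h1 : HasDerivAt (fun y : ℂ => g (y * ζ))
              ((deriv p ((s:ℂ)*ζ) + (s:ℂ)*ζ * deriv (deriv p) ((s:ℂ)*ζ)) * ζ) (s:ℂ) :=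
            by exact (hgd ((s:ℂ)*ζ) hmem).comp (s:ℂ) (hasDerivAt_mul_const ζ)
          simpa [mul_comm] using h1.comp_ofReal
        have hAB := hA.fun_mul hB
        convert hAB using 1
        · rfl
        have hsγ : (s:ℝ) ^ γ = s ^ (γ - 1) * s := by
          rw [Real.rpow_sub_one hs0.ne']; field_simp
        simp only [hhdef, hsγ]
        push_cast
        rw [hγc]
        field_simp
        ring
      have hcont : ContinuousOn (fun s : ℝ => ((s ^ (γ-1) / β₂ : ℝ) : ℂ) * h ((s:ℂ)*ζ))
          (uIcc ε 1) := by
        rw [uIcc_of_le hε1.le]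
        apply ContinuousOn.mul
        · apply Complex.continuous_ofReal.comp_continuousOn
          apply ContinuousOn.div_const
          intro s hs
          exact (Real.continuousAt_rpow_const s (γ-1)
            (Or.inl (ne_of_gt (lt_of_lt_of_le hε hs.1)))).continuousWithinAt
        · apply hhdiff.continuousOn.comp
          · exact (Complex.continuous_ofReal.mul continuous_const).continuousOn
          · intro s hs
            exact hζball ζ hζ s (le_of_lt (lt_of_lt_of_le hε hs.1)) hs.2
      have hint : IntervalIntegrable (fun s : ℝ => ((s ^ (γ-1) / β₂ : ℝ) : ℂ) * h ((s:ℂ)*ζ))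
          MeasureTheory.volume ε 1 := hcont.intervalIntegrable
      have heq := intervalIntegral.integral_eq_sub_of_hasDerivAt hGderiv hint
      have hbd : ∀ᵐ (s : ℝ) ∂MeasureTheory.volume.restrict (Set.uIoc ε 1),
          ‖((s ^ (γ-1) / β₂ : ℝ) : ℂ) * h ((s:ℂ)*ζ)‖ ≤ (Real.sinh 1 * ‖ζ‖ / β₂) * s ^ γ := by
        rw [MeasureTheory.ae_restrict_iff' measurableSet_uIoc]
        refine MeasureTheory.ae_of_all _ (fun s hs => ?_)
        rw [Set.uIoc_of_le hε1.le] at hs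
        have hs0 : 0 < s := lt_trans hε hs.1
        have hmem : (s:ℂ) * ζ ∈ ball (0:ℂ) 1 := hζball ζ hζ s hs0.le hs.2
        have h1 : ‖h ((s:ℂ)*ζ)‖ ≤ Real.sinh 1 * (s * ‖ζ‖) := by
          have := hschwarz _ hmem
          rwa [norm_mul, Complex.norm_real, Real.norm_eq_abs, _root_.abs_of_nonneg hs0.le]
            at this
        have h2 : ‖((s ^ (γ-1) / β₂ : ℝ) : ℂ)‖ = s ^ (γ-1) / β₂ := by
          rw [Complex.norm_real, Real.norm_eq_abs, _root_.abs_of_nonneg]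
          positivity
        rw [norm_mul, h2]
        have hsγ : (s:ℝ) ^ γ = s ^ (γ - 1) * s := by
          rw [Real.rpow_sub_one hs0.ne']; field_simp
        rw [hsγ]
        have h3 : (0:ℝ) ≤ s ^ (γ-1) / β₂ := by positivity
        calc s ^ (γ-1) / β₂ * ‖h ((s:ℂ)*ζ)‖ ≤ s ^ (γ-1) / β₂ * (Real.sinh 1 * (s * ‖ζ‖)) :=
              mul_le_mul_of_nonneg_left h1 h3
          _ = Real.sinh 1 * ‖ζ‖ / β₂ * (s ^ (γ-1) * s) := by ring
      have hintb : IntervalIntegrable (fun s : ℝ => (Real.sinh 1 * ‖ζ‖ / β₂) * s ^ γ)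
          MeasureTheory.volume ε 1 := by
        apply ContinuousOn.intervalIntegrable
        rw [uIcc_of_le hε1.le]
        refine ContinuousOn.mul continuousOn_const (fun s hs => ?_)
        exact (Real.continuousAt_rpow_const s γ
          (Or.inl (ne_of_gt (lt_of_lt_of_le hε hs.1)))).continuousWithinAt
      have hnorm := intervalIntegral.norm_integral_le_abs_of_norm_le hbd hintb
      rw [heq] at hnorm
      have hval : ∫ s in ε..1, (Real.sinh 1 * ‖ζ‖ / β₂) * s ^ γ
          = (Real.sinh 1 * ‖ζ‖ / β₂) * ((1 - ε ^ (γ+1))/(γ+1)) := by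
        rw [intervalIntegral.integral_const_mul, integral_rpow (Or.inl hγ1'), Real.one_rpow]
      rw [hval] at hnorm
      have hεpos : (0:ℝ) ≤ ε ^ (γ+1) := Real.rpow_nonneg hε.le _
      have hεle : ε ^ (γ+1) ≤ 1 := Real.rpow_le_one hε.le hε1.le hγ1.le
      have hK : (0:ℝ) ≤ Real.sinh 1 * ‖ζ‖ / β₂ := by positivity
      have habs2 : |(Real.sinh 1 * ‖ζ‖ / β₂) * ((1 - ε ^ (γ+1))/(γ+1))|
          = (Real.sinh 1 * ‖ζ‖ / β₂) * ((1 - ε ^ (γ+1))/(γ+1)) :=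
        _root_.abs_of_nonneg (mul_nonneg hK (div_nonneg (by linarith) hγ1.le))
      rw [habs2] at hnorm
      have h5 : (1 - ε ^ (γ+1))/(γ+1) ≤ 1/(γ+1) := by gcongr; linarith
      have h6 : (Real.sinh 1 * ‖ζ‖ / β₂) * (1/(γ+1)) = Real.sinh 1 * ‖ζ‖ / β₁ := by
        rw [hγsum]; field_simp
      calc ‖G 1 - G ε‖ ≤ (Real.sinh 1 * ‖ζ‖ / β₂) * ((1 - ε ^ (γ+1))/(γ+1)) := hnorm
        _ ≤ (Real.sinh 1 * ‖ζ‖ / β₂) * (1/(γ+1)) := mul_le_mul_of_nonneg_left h5 hK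
        _ = Real.sinh 1 * ‖ζ‖ / β₁ := h6
    have hG1 : G 1 = ζ * deriv p ζ := by
      simp only [hGdef, hgdef, Complex.ofReal_one, one_mul, Real.one_rpow]
    have hcont0 : ContinuousAt (deriv p) 0 := (hp' 0 hball0).continuousAt
    have hF1 : Tendsto (fun ε : ℝ => ((ε ^ (γ+1) : ℝ) : ℂ)) (nhdsWithin 0 (Ioi 0)) (nhds 0) := by
      have h1 : ContinuousAt (fun ε : ℝ => ε ^ (γ+1)) 0 :=
        Real.continuousAt_rpow_const 0 (γ+1) (Or.inr hγ1.le)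
      have h2 := h1.tendsto
      rw [Real.zero_rpow hγ1.ne'] at h2
      have h3 := (Complex.continuous_ofReal.tendsto 0).comp h2
      rw [Complex.ofReal_zero] at h3
      exact h3.mono_left nhdsWithin_le_nhds
    have hF2 : Tendsto (fun ε : ℝ => ζ * deriv p ((ε:ℂ) * ζ)) (nhdsWithin 0 (Ioi 0))
        (nhds (ζ * deriv p 0)) := by
      have h0 : (((0:ℝ)):ℂ) * ζ = 0 := by simp
      have hg2 : ContinuousAt (fun ε : ℝ => (ε:ℂ) * ζ) 0 :=
        (Complex.continuous_ofReal.mul continuous_const).continuousAt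
      have hc' : ContinuousAt (deriv p) (((0:ℝ):ℂ) * ζ) := by rw [h0]; exact hcont0
      have h1 : ContinuousAt (fun ε : ℝ => deriv p ((ε:ℂ) * ζ)) 0 :=
        ContinuousAt.comp (f := fun ε : ℝ => (ε:ℂ) * ζ) (x := (0:ℝ)) hc' hg2
      have h2 : ContinuousAt (fun ε : ℝ => ζ * deriv p ((ε:ℂ) * ζ)) 0 :=
        ContinuousAt.mul continuousAt_const h1
      have h3 := h2.tendsto
      rw [h0] at h3
      exact h3.mono_left nhdsWithin_le_nhds
    have hGlim : Tendsto (fun ε : ℝ => G ε) (nhdsWithin 0 (Ioi 0)) (nhds 0) := by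
      have heq' : ∀ ε ∈ Ioi (0:ℝ),
          ((ε ^ (γ+1):ℝ):ℂ) * (ζ * deriv p ((ε:ℂ)*ζ)) = G ε := by
        intro ε hε
        simp only [hGdef, hgdef]
        rw [Real.rpow_add_one (ne_of_gt hε) γ]
        push_cast
        ring
      have h3 := hF1.mul hF2
      rw [zero_mul] at h3
      exact Tendsto.congr' (eventuallyEq_of_mem self_mem_nhdsWithin heq') h3
    have hfinal : ‖ζ * deriv p ζ‖ ≤ Real.sinh 1 * ‖ζ‖ / β₁ := by
      rw [← hG1]
      have hev : ∀ᶠ ε in nhdsWithin (0:ℝ) (Ioi 0),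
          ‖G 1‖ ≤ ‖G ε‖ + Real.sinh 1 * ‖ζ‖ / β₁ := by
        filter_upwards [Ioo_mem_nhdsGT (zero_lt_one (α := ℝ))] with ε hε
        have h1 := hmain ε hε.1 hε.2
        have h2 : ‖G 1‖ ≤ ‖G 1 - G ε‖ + ‖G ε‖ := by
          simpa using norm_add_le (G 1 - G ε) (G ε)
        linarith
      have hlim2 := (hGlim.norm).add
        (tendsto_const_nhds (x := Real.sinh 1 * ‖ζ‖ / β₁)
          (f := nhdsWithin (0:ℝ) (Ioi 0)))
      rw [norm_zero] at hlim2
      have := ge_of_tendsto hlim2 hev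
      linarith [this]
    have hζn : 0 < ‖ζ‖ := norm_pos_iff.2 hζ0
    rw [norm_mul] at hfinal
    by_contra hcon
    push_neg at hcon
    have h9 : ‖ζ‖ * C < ‖ζ‖ * ‖deriv p ζ‖ := mul_lt_mul_of_pos_left hcon hζn
    have h10 : ‖ζ‖ * C = Real.sinh 1 * ‖ζ‖ / β₁ := by rw [hC]; ring
    linarith
  -- conclusion
  intro z hz
  have hz1 : ‖z‖ < 1 := by simpa [mem_ball, dist_zero_right] using hz
  have habs : ‖p z - 1‖ < 0.7072 := by
    by_cases hz0 : z = 0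
    · subst hz0
      rw [hp0]
      norm_num
    · have hkey : ∀ ε : ℝ, 0 < ε → ε < 1 → ‖p z - p ((ε:ℂ)*z)‖ ≤ C * ‖z‖ := by
        intro ε hε hε1
        have hderiv : ∀ s ∈ uIcc ε 1, HasDerivAt (fun s : ℝ => p ((s:ℂ)*z))
            (z * deriv p ((s:ℂ)*z)) s := by
          intro s hs
          rw [uIcc_of_le hε1.le] at hs
          have hmem := hζball z hz s (le_of_lt (lt_of_lt_of_le hε hs.1)) hs.2
          have h1 : HasDerivAt (fun y:ℂ => p (y*z)) (deriv p ((s:ℂ)*z) * z) (s:ℂ) :=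
            ((hp _ hmem).differentiableAt.hasDerivAt).comp (s:ℂ) (hasDerivAt_mul_const z)
          simpa [mul_comm] using h1.comp_ofReal
        have hcont2 : ContinuousOn (fun s : ℝ => z * deriv p ((s:ℂ)*z)) (uIcc ε 1) := by
          rw [uIcc_of_le hε1.le]
          apply ContinuousOn.mul continuousOn_const
          apply (hp'.continuousOn).comp
          · exact (Complex.continuous_ofReal.mul continuous_const).continuousOn
          · intro s hs
            exact hζball z hz s (le_of_lt (lt_of_lt_of_le hε hs.1)) hs.2
        have hint2 := hcont2.intervalIntegrable (μ := MeasureTheory.volume)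
        have heq2 := intervalIntegral.integral_eq_sub_of_hasDerivAt hderiv hint2
        have hb : ∀ s ∈ Set.uIoc ε 1, ‖z * deriv p ((s:ℂ)*z)‖ ≤ ‖z‖ * C := by
          intro s hs
          rw [Set.uIoc_of_le hε1.le] at hs
          have hs0 : 0 < s := lt_trans hε hs.1
          have hmem := hζball z hz s hs0.le hs.2
          have hne : (s:ℂ) * z ≠ 0 :=
            mul_ne_zero (by exact_mod_cast hs0.ne') hz0
          rw [norm_mul]
          exact mul_le_mul_of_nonneg_left (hgbound _ hmem hne) (norm_nonneg z)
        have hnorm2 := intervalIntegral.norm_integral_le_of_norm_le_const hb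
        rw [heq2] at hnorm2
        have habs1 : |1 - ε| ≤ 1 := by rw [abs_of_nonneg (by linarith)]; linarith
        simp only [Complex.ofReal_one, one_mul] at hnorm2
        calc ‖p z - p ((ε:ℂ)*z)‖ ≤ ‖z‖ * C * |1 - ε| := hnorm2
          _ ≤ ‖z‖ * C * 1 := mul_le_mul_of_nonneg_left habs1 (by positivity)
          _ = C * ‖z‖ := by ring
      have hev : ∀ᶠ ε : ℝ in nhdsWithin (0:ℝ) (Ioi (0:ℝ)),
          ‖p z - 1‖ ≤ ‖p ((ε:ℂ)*z) - 1‖ + C * ‖z‖ := by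
        filter_upwards [Ioo_mem_nhdsGT (zero_lt_one (α := ℝ))] with ε hε
        have h1 := hkey ε hε.1 hε.2
        have h2 : ‖p z - 1‖ ≤ ‖p z - p ((ε:ℂ)*z)‖ + ‖p ((ε:ℂ)*z) - 1‖ := by
          simpa using norm_add_le (p z - p ((ε:ℂ)*z)) (p ((ε:ℂ)*z) - 1)
        linarith
      have hlim3 : Tendsto (fun ε : ℝ => ‖p ((ε:ℂ)*z) - 1‖ + C * ‖z‖)
          (nhdsWithin (0:ℝ) (Ioi (0:ℝ))) (nhds (0 + C * ‖z‖)) := by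
        apply Tendsto.add _ tendsto_const_nhds
        have h0 : (((0:ℝ)):ℂ) * z = 0 := by simp
        have hpc : ContinuousAt p 0 := (hp 0 hball0).continuousAt
        have hg2 : ContinuousAt (fun ε : ℝ => (ε:ℂ) * z) 0 :=
          (Complex.continuous_ofReal.mul continuous_const).continuousAt
        have hpc' : ContinuousAt p (((0:ℝ):ℂ) * z) := by rw [h0]; exact hpc
        have h1 : ContinuousAt (fun ε : ℝ => p ((ε:ℂ)*z)) 0 :=
          ContinuousAt.comp (f := fun ε : ℝ => (ε:ℂ) * z) (x := (0:ℝ)) hpc' hg2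
        have h2 := (h1.tendsto.sub (tendsto_const_nhds (x := (1:ℂ))))
        rw [h0, hp0, sub_self] at h2
        have h3 := h2.norm
        rw [norm_zero] at h3
        exact h3.mono_left nhdsWithin_le_nhds
      have hle := ge_of_tendsto hlim3 hev
      rw [zero_add] at hle
      have : C * ‖z‖ < 0.7072 := by
        have h7 : C * ‖z‖ < C := by nlinarith [norm_nonneg z, norm_pos_iff.2 hz0]
        have h8 := inv_sqrt_two_lt
        linarith
      calc ‖p z - 1‖ = ‖p z - 1‖ := rfl
        _ ≤ C * ‖z‖ := hle
        _ < 0.7072 := this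
  obtain ⟨w, hw, hwe⟩ := final_step (p z - 1) habs
  refine ⟨w, hw, ?_⟩
  have hre : (1:ℂ) + (p z - 1) = p z := by ring
  rw [hre] at hwe
  exact hwe


end
end

section
/- Let β₁, β₂ > 0 be real numbers satisfying 2β₁ − β₂ ≥ 2√2·e. Let p be analytic on the open unit disk 𝔻 with p(0) = 1, and suppose that for every z ∈ 𝔻 the value 1 + β₁·z·p′(z) + β₂·z²·p″(z) lies in the set {1 + w·e^w : w ∈ 𝔻}. Then for every z ∈ 𝔻, p(z) ∈ {1 + log(w + (1 + w²)^{1/2}) : w ∈ 𝔻}, i.e. p(z) ≺ 1 + sinh⁻¹ z. -/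
open Metric Set Filter



lemma aux_norm_cosh_le (w : ℂ) : ‖Complex.cosh w‖ ≤ Real.cosh ‖w‖ := by
  have h1 : ‖Complex.cosh w‖ ≤ (Real.exp w.re + Real.exp (-w.re)) / 2 := by
    rw [Complex.cosh]
    calc ‖(Complex.exp w + Complex.exp (-w)) / 2‖
        ≤ (‖Complex.exp w‖ + ‖Complex.exp (-w)‖) / 2 := by
          rw [norm_div]
          have := norm_add_le (Complex.exp w) (Complex.exp (-w))
          have h2 : ‖(2:ℂ)‖ = 2 := by norm_num
          rw [h2]
          linarith
      _ = (Real.exp w.re + Real.exp (-w.re)) / 2 := by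
          rw [Complex.norm_exp, Complex.norm_exp,
            Complex.neg_re]
  have h2 : (Real.exp w.re + Real.exp (-w.re)) / 2 = Real.cosh w.re := (Real.cosh_eq _).symm
  rw [h2] at h1
  refine h1.trans ?_
  rw [← Real.cosh_abs]
  refine (Real.cosh_le_cosh).2 ?_
  rw [abs_abs, abs_of_nonneg (norm_nonneg w)]
  exact Complex.abs_re_le_norm w

lemma aux_norm_sinh_le (ζ : ℂ) : ‖Complex.sinh ζ‖ ≤ Real.sinh ‖ζ‖ := by
  set r := ‖ζ‖ with hr
  have hr0 : 0 ≤ r := norm_nonneg _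
  have key : ∀ x ∈ Icc (0:ℝ) 1, ‖Complex.sinh ((x:ℂ) * ζ)‖ ≤ Real.sinh (x * r) := by
    refine image_norm_le_of_norm_deriv_right_le_deriv_boundary
      (f := fun t : ℝ => Complex.sinh ((t:ℂ) * ζ))
      (f' := fun t : ℝ => Complex.cosh ((t:ℂ) * ζ) * ζ)
      (B := fun t : ℝ => Real.sinh (t * r)) (B' := fun t : ℝ => Real.cosh (t * r) * r)
      ?_ ?_ ?_ ?_ ?_
    · apply Continuous.continuousOn
      continuity
    · intro x hx
      have h1 : HasDerivAt (fun w : ℂ => Complex.sinh (w * ζ))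
          (Complex.cosh ((x:ℂ) * ζ) * (1 * ζ)) (x:ℂ) :=
        (Complex.hasDerivAt_sinh _).comp _ ((hasDerivAt_id _).mul_const ζ)
      have h2 := h1.comp_ofReal (z := x)
      simpa [one_mul] using h2.hasDerivWithinAt
    · simp
    · intro x
      have h1 : HasDerivAt (fun t : ℝ => Real.sinh (t * r)) (Real.cosh (x * r) * (1 * r)) x :=
        (Real.hasDerivAt_sinh _).comp _ ((hasDerivAt_id _).mul_const r)
      simpa [one_mul] using h1
    · intro x hx
      rw [norm_mul]
      have hc : ‖Complex.cosh ((x:ℂ) * ζ)‖ ≤ Real.cosh (x * r) := by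
        refine (aux_norm_cosh_le _).trans ?_
        have hn : ‖(x:ℂ) * ζ‖ = x * r := by
          rw [norm_mul, Complex.norm_real, Real.norm_eq_abs, abs_of_nonneg hx.1, hr]
        rw [hn]
      calc ‖Complex.cosh ((x:ℂ) * ζ)‖ * ‖ζ‖ ≤ Real.cosh (x * r) * r := by
            apply mul_le_mul hc le_rfl (norm_nonneg _)
            positivity
      _ = Real.cosh (x * r) * r := rfl
  have := key 1 (by norm_num)
  simpa using this


lemma aux_sqrt2_div2 : Real.sqrt 2 / 2 < 3/4 := by
  nlinarith [Real.sq_sqrt (by norm_num : (2:ℝ) ≥ 0), Real.sqrt_nonneg 2]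

lemma aux_sinh_lt_one : Real.sinh (Real.sqrt 2 / 2) < 1 := by
  set r : ℝ := Real.sqrt 2 / 2 with hr
  have hr0 : 0 ≤ r := by positivity
  have hr34 : r < 3/4 := aux_sqrt2_div2
  have hexp3 : Real.exp (3/4) ^ 4 = Real.exp 3 := by
    rw [← Real.exp_nat_mul]; norm_num
  have hexp1 : Real.exp 3 < 2.72 ^ 3 := by
    have h := Real.exp_one_lt_d9
    have h0 := Real.exp_pos 1
    calc Real.exp 3 = Real.exp 1 ^ 3 := by rw [← Real.exp_nat_mul]; norm_num
    _ < 2.72 ^ 3 := by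
        have h1 : Real.exp 1 < 2.72 := by linarith [Real.exp_one_lt_d9]
        exact pow_lt_pow_left₀ h1 h0.le (by norm_num)
  have h34 : Real.exp (3/4) < 2.12 := by
    by_contra hc
    push_neg at hc
    have h4 : (2.12:ℝ)^4 ≤ Real.exp (3/4) ^ 4 :=
      pow_le_pow_left₀ (by norm_num) hc 4
    rw [hexp3] at h4
    have : (2.72:ℝ)^3 < 2.12^4 := by norm_num
    linarith
  have hlow : (1:ℝ)/4 < Real.exp (-r) := by
    have : (1:ℝ) - r ≤ Real.exp (-r) := by
      have := Real.add_one_le_exp (-r); linarith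
    linarith
  have hup : Real.exp r < 2.12 := by
    calc Real.exp r ≤ Real.exp (3/4) := Real.exp_le_exp.2 (le_of_lt hr34)
    _ < 2.12 := h34
  rw [Real.sinh_eq]
  linarith


lemma aux_key (β₁ β₂ : ℝ) (hβ₁ : 0 < β₁) (hβ₂ : 0 < β₂) (p : ℂ → ℂ)
    (hp : AnalyticOnNhd ℂ p (ball 0 1))
    (hS : ∀ w ∈ ball (0:ℂ) 1,
      ‖(β₁:ℂ) * w * deriv p w + (β₂:ℂ) * w ^ 2 * deriv (deriv p) w‖ ≤ Real.exp 1 * ‖w‖) :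
    ∀ z ∈ ball (0:ℂ) 1, ‖z * deriv p z‖ ≤ Real.exp 1 / β₁ * ‖z‖ := by
  intro z hz
  set E := Real.exp 1 with hE
  have hE0 : 0 < E := Real.exp_pos 1
  have hp1 : AnalyticOnNhd ℂ (deriv p) (ball 0 1) := hp.deriv
  have hp2 : AnalyticOnNhd ℂ (deriv (deriv p)) (ball 0 1) := hp1.deriv
  set b : ℝ := β₁ / β₂ with hb
  have hb0 : 0 < b := div_pos hβ₁ hβ₂
  have hzn : ‖z‖ < 1 := by simpa [mem_ball, dist_eq_norm] using hz
  have hmem : ∀ t : ℝ, 0 ≤ t → t ≤ 1 → ((t:ℂ) * z) ∈ ball (0:ℂ) 1 := by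
    intro t ht0 ht1
    simp only [mem_ball, dist_eq_norm, sub_zero, norm_mul, Complex.norm_real,
      Real.norm_eq_abs, abs_of_nonneg ht0]
    calc t * ‖z‖ ≤ 1 * ‖z‖ := by gcongr
    _ < 1 := by simpa using hzn
  set F : ℝ → ℂ := fun t => (t ^ b : ℝ) • (z * deriv p ((t:ℂ) * z)) with hF
  set c : ℝ := E * ‖z‖ / β₁ with hc
  have hc0 : 0 ≤ c := by positivity
  -- derivative of F on (0, 1]
  have hFd : ∀ t : ℝ, 0 < t → t ≤ 1 →
      HasDerivAt F ((t ^ (b-2) / β₂ : ℝ) •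
        ((β₁:ℂ) * ((t:ℂ)*z) * deriv p ((t:ℂ)*z) + (β₂:ℂ) * ((t:ℂ)*z)^2 * deriv (deriv p) ((t:ℂ)*z))) t := by
    intro t ht0 ht1
    have htz := hmem t ht0.le ht1
    have hrp : HasDerivAt (fun s : ℝ => s ^ b) (b * t ^ (b-1)) t :=
      Real.hasDerivAt_rpow_const (Or.inl ht0.ne')
    have hinner : HasDerivAt (fun w : ℂ => z * deriv p (w * z))
        (z * (deriv (deriv p) ((t:ℂ)*z) * (1 * z))) (t:ℂ) := by
      have hd2 : HasDerivAt (deriv p) (deriv (deriv p) ((t:ℂ)*z)) ((t:ℂ)*z) :=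
        (hp1 _ htz).differentiableAt.hasDerivAt
      have hmul : HasDerivAt (fun w : ℂ => w * z) z (t:ℂ) := hasDerivAt_mul_const z
      have := (hd2.comp (t:ℂ) hmul).const_mul z
      simpa [Function.comp] using this
    have hg : HasDerivAt (fun s : ℝ => z * deriv p ((s:ℂ) * z))
        (z * (deriv (deriv p) ((t:ℂ)*z) * (1 * z))) t := hinner.comp_ofReal
    have := hrp.smul hg
    refine this.congr_deriv (Eq.symm ?_)
    -- scalar algebra
    have ht0' : (0:ℝ) < t := ht0
    have e1 : t ^ (b-2) / β₂ * (β₁ * t) = b * t ^ (b-1) := by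
      rw [show b - 1 = (b-2) + 1 by ring, Real.rpow_add ht0', Real.rpow_one]
      rw [hb]
      field_simp
    have e2 : t ^ (b-2) / β₂ * (β₂ * (t*t)) = t ^ b := by
      rw [show b = (b-2) + 2 by ring, Real.rpow_add ht0']
      rw [show ((2:ℝ)) = ((2:ℕ):ℝ) by norm_num, Real.rpow_natCast]
      field_simp
      ring
    simp only [Complex.real_smul]
    push_cast [← e1, ← e2]
    ring
  -- bound on the derivative
  have hFb : ∀ t : ℝ, 0 < t → t ≤ 1 →
      ‖(t ^ (b-2) / β₂ : ℝ) •
        ((β₁:ℂ) * ((t:ℂ)*z) * deriv p ((t:ℂ)*z) + (β₂:ℂ) * ((t:ℂ)*z)^2 * deriv (deriv p) ((t:ℂ)*z))‖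
      ≤ (E * ‖z‖ / β₂) * t ^ (b-1) := by
    intro t ht0 ht1
    have htz := hmem t ht0.le ht1
    rw [norm_smul, Real.norm_eq_abs, abs_of_nonneg (by positivity)]
    have h1 := hS _ htz
    have h2 : ‖(t:ℂ) * z‖ = t * ‖z‖ := by
      rw [norm_mul, Complex.norm_real, Real.norm_eq_abs, abs_of_nonneg ht0.le]
    calc t ^ (b-2) / β₂ * ‖(β₁:ℂ) * ((t:ℂ)*z) * deriv p ((t:ℂ)*z) + (β₂:ℂ) * ((t:ℂ)*z)^2 * deriv (deriv p) ((t:ℂ)*z)‖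
        ≤ t ^ (b-2) / β₂ * (E * (t * ‖z‖)) := by
          refine mul_le_mul_of_nonneg_left ?_ (by positivity)
          rw [← h2]; exact h1
      _ = (E * ‖z‖ / β₂) * (t ^ (b-2) * t) := by ring
      _ = (E * ‖z‖ / β₂) * t ^ (b-1) := by
          rw [show b - 1 = (b-2) + 1 by ring, Real.rpow_add ht0, Real.rpow_one]
  -- apply the fencing lemma on [ε, 1]
  have main : ∀ ε : ℝ, 0 < ε → ε < 1 → ‖F 1‖ ≤ ‖F ε‖ + c := by
    intro ε hε0 hε1
    have key := image_norm_le_of_norm_deriv_right_le_deriv_boundary'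
      (a := ε) (b := 1) (f := F)
      (f' := fun t => (t ^ (b-2) / β₂ : ℝ) •
        ((β₁:ℂ) * ((t:ℂ)*z) * deriv p ((t:ℂ)*z) + (β₂:ℂ) * ((t:ℂ)*z)^2 * deriv (deriv p) ((t:ℂ)*z)))
      (B := fun t => ‖F ε‖ + c * (t ^ b - ε ^ b))
      (B' := fun t => (E * ‖z‖ / β₂) * t ^ (b-1))
      (fun t ht => ((hFd t (lt_of_lt_of_le hε0 ht.1) ht.2).continuousAt).continuousWithinAt)
      (fun t ht => (hFd t (lt_of_lt_of_le hε0 ht.1) ht.2.le).hasDerivWithinAt)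
      (by simp)
      (by
        apply ContinuousOn.add continuousOn_const
        apply ContinuousOn.mul continuousOn_const
        apply ContinuousOn.sub ?_ continuousOn_const
        intro t ht
        exact (Real.continuousAt_rpow_const t b (Or.inl (lt_of_lt_of_le hε0 ht.1).ne')).continuousWithinAt)
      (fun t ht => by
        have ht0 : 0 < t := lt_of_lt_of_le hε0 ht.1
        have hrp : HasDerivAt (fun s : ℝ => s ^ b) (b * t ^ (b-1)) t :=
          Real.hasDerivAt_rpow_const (Or.inl ht0.ne')
        have hB : HasDerivAt (fun s : ℝ => ‖F ε‖ + c * (s ^ b - ε ^ b))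
            (c * (b * t ^ (b-1))) t := by
          have := ((hrp.sub_const (ε ^ b)).const_mul c).const_add (‖F ε‖)
          simpa using this
        have hcb : c * b = E * ‖z‖ / β₂ := by
          rw [hc, hb]; field_simp; try ring
        have h2 : c * (b * t ^ (b-1)) = (E * ‖z‖ / β₂) * t ^ (b-1) := by
          rw [← hcb]; ring
        rw [h2] at hB
        exact hB.hasDerivWithinAt)
      (fun t ht => hFb t (lt_of_lt_of_le hε0 ht.1) ht.2.le)
    have h1 := key (right_mem_Icc.2 hε1.le)
    have hεb : 0 ≤ ε ^ b := Real.rpow_nonneg hε0.le b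
    have h1' : ‖F 1‖ ≤ ‖F ε‖ + c * (1 - ε ^ b) := by simpa [Real.one_rpow] using h1
    nlinarith
  -- take the limit ε → 0⁺
  have hF1 : F 1 = z * deriv p z := by
    simp [hF, Real.one_rpow]
  have hlim : Tendsto (fun ε : ℝ => ‖F ε‖ + c) (nhdsWithin 0 (Ioi 0)) (nhds c) := by
    have t1 : Tendsto (fun ε : ℝ => ε ^ b) (nhdsWithin 0 (Ioi 0)) (nhds 0) := by
      have h := (Real.continuousAt_rpow_const 0 b (Or.inr hb0.le)).continuousWithinAt
        (s := Ioi (0:ℝ))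
      have h2 := h.tendsto
      rwa [Real.zero_rpow hb0.ne'] at h2
    have hcont : ContinuousAt (fun ε : ℝ => ‖z * deriv p ((ε:ℂ) * z)‖) 0 := by
      have h0b : (0:ℂ) ∈ ball (0:ℂ) 1 := by simp
      have hd := (hp1 0 h0b).continuousAt
      have hm : ContinuousAt (fun ε : ℝ => ((ε:ℂ) * z)) 0 :=
        (Complex.continuous_ofReal.continuousAt).mul continuousAt_const
      have hd' : ContinuousAt (deriv p) (((0:ℝ):ℂ) * z) := by simpa using hd
      have hcomp := ContinuousAt.comp (x := (0:ℝ)) hd' hm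
      exact (continuousAt_const.mul hcomp).norm
    have t2 : Tendsto (fun ε : ℝ => ‖z * deriv p ((ε:ℂ) * z)‖) (nhdsWithin 0 (Ioi 0))
        (nhds ‖z * deriv p (((0:ℝ):ℂ) * z)‖) :=
      (hcont.tendsto).mono_left nhdsWithin_le_nhds
    have t3 : Tendsto (fun ε : ℝ => ‖F ε‖) (nhdsWithin 0 (Ioi 0)) (nhds 0) := by
      have heq : ∀ᶠ (ε : ℝ) in nhdsWithin (0:ℝ) (Ioi (0:ℝ)),
          ε ^ b * ‖z * deriv p ((ε:ℂ) * z)‖ = ‖F ε‖ := by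
        filter_upwards [self_mem_nhdsWithin] with ε hε
        rw [hF]
        simp only [norm_smul, Real.norm_eq_abs]
        rw [abs_of_nonneg (Real.rpow_nonneg (le_of_lt hε) b)]
      have hmul := t1.mul t2
      rw [zero_mul] at hmul
      exact hmul.congr' heq
    simpa using t3.add tendsto_const_nhds
  have hev : ∀ᶠ ε in nhdsWithin (0:ℝ) (Ioi 0), ‖F 1‖ ≤ ‖F ε‖ + c := by
    filter_upwards [Ioo_mem_nhdsGT_of_mem (Set.mem_Ico.2 ⟨le_refl 0, zero_lt_one⟩)] with ε hε
    exact main ε hε.1 hε.2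
  have : ‖F 1‖ ≤ c := ge_of_tendsto hlim hev
  rw [hF1] at this
  calc ‖z * deriv p z‖ ≤ c := this
  _ = Real.exp 1 / β₁ * ‖z‖ := by rw [hc, hE]; ring
theorem stmt13 (β₁ β₂ : ℝ) (hβ₁ : 0 < β₁) (hβ₂ : 0 < β₂)
    (hcond : (2 * β₁ - β₂) ≥ 2 * Real.sqrt 2 * Real.exp 1)
    (p : ℂ → ℂ) (hp : AnalyticOnNhd ℂ p (ball 0 1)) (hp0 : p 0 = 1)
    (hsub : ∀ z ∈ ball (0 : ℂ) 1,
      ∃ w ∈ ball (0 : ℂ) 1, (1 + (β₁ : ℂ) * z * deriv p z + (β₂ : ℂ) * z ^ 2 * deriv (deriv p) z) = 1 + w * Complex.exp w) :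
    ∀ z ∈ ball (0 : ℂ) 1, ∃ w ∈ ball (0 : ℂ) 1, p z = 1 + Complex.log (w + (1 + w ^ 2) ^ ((1 : ℂ) / 2)) := by
  set E := Real.exp 1 with hE
  have hE0 : 0 < E := Real.exp_pos 1
  have hs2 : Real.sqrt 2 * Real.sqrt 2 = 2 := Real.mul_self_sqrt (by norm_num)
  have hs2n : 0 ≤ Real.sqrt 2 := Real.sqrt_nonneg 2
  have hβ₁' : Real.sqrt 2 * E ≤ β₁ := by nlinarith
  set h : ℂ → ℂ := fun w => (β₁:ℂ) * w * deriv p w + (β₂:ℂ) * w ^ 2 * deriv (deriv p) w with hh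
  have hp1 : AnalyticOnNhd ℂ (deriv p) (ball 0 1) := hp.deriv
  have hp2 : AnalyticOnNhd ℂ (deriv (deriv p)) (ball 0 1) := hp1.deriv
  have hA : AnalyticOnNhd ℂ h (ball 0 1) := by
    apply AnalyticOnNhd.add
    · exact (analyticOnNhd_const.mul analyticOnNhd_id).mul hp1
    · exact (analyticOnNhd_const.mul (analyticOnNhd_id.pow 2)).mul hp2
  have hd : DifferentiableOn ℂ h (ball 0 1) := hA.differentiableOn
  have h0 : h 0 = 0 := by simp [hh]
  have hmaps : Set.MapsTo h (ball 0 1) (ball (h 0) E) := by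
    intro w hw
    obtain ⟨w', hw', heq⟩ := hsub w hw
    have hww : h w = w' * Complex.exp w' := by rw [hh]; linear_combination heq
    have hw'n : ‖w'‖ < 1 := by simpa [mem_ball, dist_eq_norm] using hw'
    have hre : w'.re < 1 := by
      calc w'.re ≤ |w'.re| := le_abs_self _
      _ ≤ ‖w'‖ := Complex.abs_re_le_norm w'
      _ < 1 := hw'n
    have : ‖h w‖ < E := by
      rw [hww, norm_mul, Complex.norm_exp]
      calc ‖w'‖ * Real.exp w'.re < 1 * E := by
            apply mul_lt_mul'' hw'n _ (norm_nonneg _) (Real.exp_pos _).le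
            exact Real.exp_lt_exp.2 hre
      _ = E := one_mul E
    simpa [h0, mem_ball, dist_eq_norm] using this
  have hS : ∀ w ∈ ball (0:ℂ) 1, ‖h w‖ ≤ E * ‖w‖ := by
    intro w hw
    have := Complex.dist_le_div_mul_dist_of_mapsTo_ball hd (hmaps.mono_right ball_subset_closedBall) hw
    simpa [h0, dist_eq_norm, div_one] using this
  have key := aux_key β₁ β₂ hβ₁ hβ₂ p hp (by simpa [hh] using hS)
  -- derivative bound everywhere on the ball
  have key2 : ∀ w ∈ ball (0:ℂ) 1, ‖deriv p w‖ ≤ E / β₁ := by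
    intro w hw
    rcases eq_or_ne w 0 with rfl | hw0
    · -- at zero, by continuity
      have hcont : ContinuousAt (fun w => ‖deriv p w‖) 0 := (hp1 0 hw).continuousAt.norm
      have hev : ∀ᶠ u in nhdsWithin (0:ℂ) {0}ᶜ, ‖deriv p u‖ ≤ E / β₁ := by
        have hball : ball (0:ℂ) 1 ∈ nhdsWithin (0:ℂ) {0}ᶜ :=
          nhdsWithin_le_nhds (isOpen_ball.mem_nhds hw)
        filter_upwards [hball, self_mem_nhdsWithin] with u hu hu0
        have hk := key u hu
        rw [norm_mul] at hk
        have hun : 0 < ‖u‖ := norm_pos_iff.2 hu0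
        have : ‖u‖ * ‖deriv p u‖ ≤ ‖u‖ * (E / β₁) := by
          calc ‖u‖ * ‖deriv p u‖ ≤ E / β₁ * ‖u‖ := hk
          _ = ‖u‖ * (E / β₁) := by ring
        exact le_of_mul_le_mul_left this hun
      exact le_of_tendsto (hcont.tendsto.mono_left nhdsWithin_le_nhds) hev
    · have hk := key w hw
      rw [norm_mul] at hk
      have hun : 0 < ‖w‖ := norm_pos_iff.2 hw0
      have : ‖w‖ * ‖deriv p w‖ ≤ ‖w‖ * (E / β₁) := by
        calc ‖w‖ * ‖deriv p w‖ ≤ E / β₁ * ‖w‖ := hk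
        _ = ‖w‖ * (E / β₁) := by ring
      exact le_of_mul_le_mul_left this hun
  -- bound on p z - 1
  intro z hz
  have hzn : ‖z‖ < 1 := by simpa [mem_ball, dist_eq_norm] using hz
  have hmem : ∀ t : ℝ, t ∈ Icc (0:ℝ) 1 → ((t:ℂ) * z) ∈ ball (0:ℂ) 1 := by
    intro t ht
    simp only [mem_ball, dist_eq_norm, sub_zero, norm_mul, Complex.norm_real,
      Real.norm_eq_abs, abs_of_nonneg ht.1]
    calc t * ‖z‖ ≤ 1 * ‖z‖ := by
          apply mul_le_mul_of_nonneg_right ht.2 (norm_nonneg z)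
    _ < 1 := by simpa using hzn
  have key3 : ‖p z - 1‖ ≤ E / β₁ * ‖z‖ := by
    have hmvt := norm_image_sub_le_of_norm_deriv_le_segment'
      (f := fun t : ℝ => p ((t:ℂ) * z))
      (f' := fun t : ℝ => deriv p ((t:ℂ) * z) * z)
      (a := 0) (b := 1) (C := E / β₁ * ‖z‖)
      (fun t ht => by
        have htz := hmem t ht
        have hdp : HasDerivAt p (deriv p ((t:ℂ)*z)) ((t:ℂ)*z) :=
          (hp _ htz).differentiableAt.hasDerivAt
        have hmul : HasDerivAt (fun w : ℂ => w * z) z (t:ℂ) := hasDerivAt_mul_const z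
        have hcomp := (hdp.comp (t:ℂ) hmul).comp_ofReal
        exact (by simpa [Function.comp] using hcomp : HasDerivAt (fun t : ℝ => p ((t:ℂ)*z))
          (deriv p ((t:ℂ)*z) * z) t).hasDerivWithinAt)
      (fun t ht => by
        rw [norm_mul]
        have := key2 _ (hmem t ⟨ht.1, ht.2.le⟩)
        apply mul_le_mul_of_nonneg_right this (norm_nonneg z))
    have := hmvt 1 (right_mem_Icc.2 zero_le_one)
    simpa [hp0] using this
  have hbound : ‖p z - 1‖ ≤ Real.sqrt 2 / 2 := by
    have h1 : E / β₁ * ‖z‖ ≤ E / β₁ * 1 := by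
      apply mul_le_mul_of_nonneg_left hzn.le (by positivity)
    have h2 : E / β₁ ≤ Real.sqrt 2 / 2 := by
      rw [div_le_div_iff₀ hβ₁ (by norm_num : (0:ℝ) < 2)]
      nlinarith
    calc ‖p z - 1‖ ≤ E / β₁ * ‖z‖ := key3
    _ ≤ E / β₁ := by simpa using h1
    _ ≤ Real.sqrt 2 / 2 := h2
  -- construct the witness
  set ζ : ℂ := p z - 1 with hζdef
  refine ⟨Complex.sinh ζ, ?_, ?_⟩
  · -- in the unit ball
    have := aux_norm_sinh_le ζ
    have h2 : Real.sinh ‖ζ‖ ≤ Real.sinh (Real.sqrt 2 / 2) := Real.sinh_le_sinh.2 hbound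
    have h3 : ‖Complex.sinh ζ‖ < 1 := lt_of_le_of_lt (this.trans h2) aux_sinh_lt_one
    simpa [mem_ball, dist_eq_norm] using h3
  · -- the identity
    have him : |ζ.im| ≤ Real.sqrt 2 / 2 := by
      calc |ζ.im| ≤ ‖ζ‖ := Complex.abs_im_le_norm ζ
      _ = ‖ζ‖ := rfl
      _ ≤ Real.sqrt 2 / 2 := hbound
    have hs34 : Real.sqrt 2 / 2 < 3/4 := aux_sqrt2_div2
    have hpi : (3:ℝ) < Real.pi := Real.pi_gt_three
    have hre : 0 < (Complex.cosh ζ).re := by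
      have hcosh : (Complex.cosh ζ).re = Real.cos ζ.im * Real.cosh ζ.re := by
        rw [Complex.cosh]
        rw [show ((2:ℂ)) = ((2:ℝ):ℂ) by norm_num]
        rw [Complex.div_ofReal_re, Complex.add_re, Complex.exp_re, Complex.exp_re,
          Complex.neg_re, Complex.neg_im, Real.cos_neg, Real.cosh_eq]
        ring
      rw [hcosh]
      apply mul_pos _ (Real.cosh_pos _)
      apply Real.cos_pos_of_mem_Ioo
      constructor
      · nlinarith [abs_le.1 him]
      · nlinarith [abs_le.1 him]
    have h1 : (1:ℂ) + Complex.sinh ζ ^ 2 = Complex.cosh ζ ^ 2 := by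
      rw [Complex.cosh_sq]; ring
    have h2 : (Complex.cosh ζ ^ 2 : ℂ) ^ ((1:ℂ)/2) = Complex.cosh ζ := by
      rw [one_div]
      exact Complex.sq_cpow_two_inv hre
    have h3 : Complex.sinh ζ + Complex.cosh ζ = Complex.exp ζ := Complex.sinh_add_cosh ζ
    have h4 : Complex.log (Complex.exp ζ) = ζ := by
      apply Complex.log_exp
      · nlinarith [abs_le.1 him]
      · nlinarith [abs_le.1 him]
    rw [h1, h2, h3, h4, hζdef]
    ring
end

section
/- Let β₁, β₂ > 0 be real numbers satisfying 2β₁ − β₂ ≥ 2√2·(e − 1). Let p be analytic on the open unit disk 𝔻 with p(0) = 1, and suppose that for every z ∈ 𝔻 the value 1 + β₁·z·p′(z) + β₂·z²·p″(z) lies in the set {w ∈ ℂ : w ≠ 0, |log w| < 1} (principal branch of the complex logarithm). Then for every z ∈ 𝔻, p(z) ∈ {1 + log(w + (1 + w²)^{1/2}) : w ∈ 𝔻}, i.e. p(z) ≺ 1 + sinh⁻¹ z. -/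
open Metric Set MeasureTheory intervalIntegral

noncomputable def Complex.abs : AbsoluteValue ℂ ℝ :=
  IsAbsoluteValue.toAbsoluteValue (norm : ℂ → ℝ)

theorem Complex.norm_eq_abs (z : ℂ) : ‖z‖ = Complex.abs z := rfl

@[simp]
theorem Complex.abs_ofReal (r : ℝ) : Complex.abs (r : ℂ) = |r| := Complex.norm_real r

@[simp]
theorem Complex.abs_two : Complex.abs 2 = 2 := by
  rw [← Complex.norm_eq_abs]; norm_num

namespace Stmt14Aux


lemma exp3 (x : ℂ) (hx : Complex.abs x ≤ 1) :
    Complex.abs (Complex.exp x - (1 + x + x ^ 2 / 2)) ≤ 2 / 9 * Complex.abs x ^ 3 := by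
  have h := Complex.exp_bound hx (n := 3) (by norm_num)
  have hs : (∑ m ∈ Finset.range 3, x ^ m / m.factorial) = 1 + x + x ^ 2 / 2 := by
    simp [Finset.sum_range_succ, Nat.factorial]
  rw [hs] at h
  refine h.trans_eq ?_
  have : ((3:ℕ).succ : ℝ) * (((3:ℕ).factorial : ℕ) * (3:ℕ) : ℝ)⁻¹ = 2 / 9 := by
    norm_num [Nat.factorial]
  rw [this, Complex.norm_eq_abs]; ring

lemma expm1_lt (x : ℂ) (hx : Complex.abs x < 1) :
    Complex.abs (Complex.exp x - 1) < 7 / 4 := by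
  have h := exp3 x hx.le
  have hx0 : (0:ℝ) ≤ Complex.abs x := Complex.abs.nonneg x
  have h2 : Complex.abs x ^ 2 ≤ Complex.abs x := by nlinarith
  have h3 : Complex.abs x ^ 3 ≤ Complex.abs x := by nlinarith
  have key : Complex.abs (Complex.exp x - 1)
      ≤ Complex.abs (Complex.exp x - (1 + x + x ^ 2 / 2)) + (Complex.abs x + Complex.abs x ^ 2 / 2) := by
    have := Complex.abs.add_le (Complex.exp x - (1 + x + x ^ 2 / 2)) (x + x ^ 2 / 2)
    have e : Complex.exp x - (1 + x + x ^ 2 / 2) + (x + x ^ 2 / 2) = Complex.exp x - 1 := by ring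
    rw [e] at this
    refine this.trans (add_le_add_right ?_ _)
    refine (Complex.abs.add_le _ _).trans ?_
    simp [map_div₀, map_pow]
  nlinarith

lemma sinh_bound (u : ℂ) (hu : Complex.abs u ≤ 1) :
    Complex.abs (Complex.sinh u) ≤ Complex.abs u + 2 / 9 * Complex.abs u ^ 3 := by
  have h1 := exp3 u hu
  have h2 := exp3 (-u) (by simpa using hu)
  have e : Complex.sinh u - u =
      ((Complex.exp u - (1 + u + u ^ 2 / 2)) - (Complex.exp (-u) - (1 + (-u) + (-u) ^ 2 / 2))) / 2 := by
    rw [Complex.sinh]; ring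
  have hd : Complex.abs (Complex.sinh u - u) ≤ 2 / 9 * Complex.abs u ^ 3 := by
    rw [e]
    rw [map_div₀]
    have := (Complex.abs.sub_le_add (Complex.exp u - (1 + u + u ^ 2 / 2))
      (Complex.exp (-u) - (1 + (-u) + (-u) ^ 2 / 2)))
    have habs : Complex.abs (-u) = Complex.abs u := by simp
    rw [habs] at h2
    simp only [Complex.abs_two]
    linarith
  calc Complex.abs (Complex.sinh u) = Complex.abs (u + (Complex.sinh u - u)) := by ring_nf
    _ ≤ Complex.abs u + Complex.abs (Complex.sinh u - u) := Complex.abs.add_le _ _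
    _ ≤ _ := by linarith

lemma sq_half (a : ℂ) (ha : 0 < a.re) : (a ^ 2) ^ ((1:ℂ)/2) = a := by
  set b := (a ^ 2) ^ ((1:ℂ)/2) with hb
  have hbsq : b ^ 2 = a ^ 2 := by
    have := Complex.cpow_nat_inv_pow (a ^ 2) (n := 2) (by norm_num)
    rw [hb, show ((1:ℂ)/2) = (((2:ℕ):ℂ))⁻¹ by norm_num]
    exact this
  have hbre : 0 ≤ b.re := by
    rw [hb, show ((1:ℂ)/2) = ((2:ℂ))⁻¹ by norm_num, Complex.cpow_inv_two_re]
    exact Real.sqrt_nonneg _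
  have hfac : (b - a) * (b + a) = 0 := by ring_nf; linear_combination hbsq
  rcases mul_eq_zero.mp hfac with h | h
  · exact sub_eq_zero.mp h
  · exfalso
    have hba : b = -a := eq_neg_of_add_eq_zero_left h
    rw [hba] at hbre
    simp only [Complex.neg_re] at hbre
    linarith



lemma vbound (β₁ β₂ : ℝ) (hβ₁ : 0 < β₁) (hβ₂ : 0 < β₂)
    (p : ℂ → ℂ) (hp : AnalyticOnNhd ℂ p (ball 0 1))
    (hsch : ∀ t ∈ ball (0:ℂ) 1,
      Complex.abs ((β₁:ℂ) * t * deriv p t + (β₂:ℂ) * t ^ 2 * deriv (deriv p) t)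
        ≤ 7/4 * Complex.abs t) :
    ∀ z ∈ ball (0:ℂ) 1, Complex.abs (z * deriv p z) ≤ 7/4 * Complex.abs z / β₁ := by
  intro z hz
  have hzb : Complex.abs z < 1 := by simpa [mem_ball, dist_zero_right, Complex.norm_eq_abs] using hz
  set c : ℝ := β₁ / β₂ - 1 with hc
  have hc1 : c + 1 = β₁ / β₂ := by ring
  have hc1pos : 0 < c + 1 := by rw [hc1]; positivity
  have hmem : ∀ s : ℝ, 0 ≤ s → s ≤ 1 → (s:ℂ) * z ∈ ball (0:ℂ) 1 := by
    intro s h0 h1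
    rw [mem_ball_zero_iff, norm_mul, Complex.norm_real, Real.norm_of_nonneg h0,
      Complex.norm_eq_abs]
    calc s * Complex.abs z ≤ 1 * Complex.abs z := by
          apply mul_le_mul_of_nonneg_right h1 (Complex.abs.nonneg z)
      _ < 1 := by simpa using hzb
  have hd1 : AnalyticOnNhd ℂ (deriv p) (ball 0 1) := hp.deriv
  have hd2 : AnalyticOnNhd ℂ (deriv (deriv p)) (ball 0 1) := hd1.deriv
  have hray : ContinuousOn (fun s : ℝ => (s:ℂ) * z) (Icc 0 1) :=
    (Complex.continuous_ofReal.continuousOn.mul continuousOn_const)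
  have hmapsTo : MapsTo (fun s : ℝ => (s:ℂ) * z) (Icc 0 1) (ball (0:ℂ) 1) :=
    fun s hs => hmem s hs.1 hs.2
  have hcontp' : ContinuousOn (fun s : ℝ => deriv p ((s:ℂ) * z)) (Icc 0 1) :=
    hd1.continuousOn.comp hray hmapsTo
  have hcontp'' : ContinuousOn (fun s : ℝ => deriv (deriv p) ((s:ℂ) * z)) (Icc 0 1) :=
    hd2.continuousOn.comp hray hmapsTo
  obtain ⟨M, hM⟩ := isCompact_Icc.exists_bound_of_continuousOn hcontp'
  have hM0 : 0 ≤ M := le_trans (norm_nonneg _) (hM 0 ⟨le_refl 0, zero_le_one⟩)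
  have key : ∀ ε : ℝ, ε ∈ Ioc (0:ℝ) 1 →
      Complex.abs (z * deriv p z) ≤ ε ^ (c+1) * (M * Complex.abs z) + 7/4 * Complex.abs z / β₁ := by
    intro ε hε
    obtain ⟨hε0, hε1⟩ := hε
    set G : ℝ → ℂ := fun s => (s:ℂ) * z * deriv p ((s:ℂ) * z) with hG
    set F : ℝ → ℂ := fun s => ((s ^ c : ℝ) : ℂ) * G s with hF
    set φ : ℝ → ℂ := fun s => ((s ^ (c - 1) : ℝ) : ℂ) *
      (((β₁:ℂ) * ((s:ℂ)*z) * deriv p ((s:ℂ)*z)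
        + (β₂:ℂ) * ((s:ℂ)*z) ^ 2 * deriv (deriv p) ((s:ℂ)*z)) / (β₂:ℂ)) with hφ
    have hβ₂c : ((β₂:ℝ):ℂ) ≠ 0 := by
      simp only [ne_eq, Complex.ofReal_eq_zero]; exact hβ₂.ne'
    have hFderiv : ∀ s ∈ Set.uIcc ε 1, HasDerivAt F (φ s) s := by
      intro s hs
      rw [Set.uIcc_of_le hε1] at hs
      have hs0 : 0 < s := lt_of_lt_of_le hε0 hs.1
      have hsz : (s:ℂ) * z ∈ ball (0:ℂ) 1 := hmem s hs0.le hs.2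
      have h1 : HasDerivAt (fun t : ℝ => t ^ c) (c * s ^ (c-1)) s :=
        Real.hasDerivAt_rpow_const (Or.inl hs0.ne')
      have h1' : HasDerivAt (fun t : ℝ => ((t ^ c : ℝ) : ℂ)) ((c * s ^ (c-1) : ℝ) : ℂ) s :=
        h1.ofReal_comp
      have hA : HasDerivAt (fun w : ℂ => w * z) ((1:ℂ) * z) ((s:ℂ)) :=
        (hasDerivAt_id _).mul_const z
      have hB : HasDerivAt (deriv p) (deriv (deriv p) ((s:ℂ)*z)) ((s:ℂ)*z) :=
        ((hd1 _ hsz).differentiableAt).hasDerivAt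
      have hC : HasDerivAt (fun w : ℂ => deriv p (w * z))
          (deriv (deriv p) ((s:ℂ)*z) * ((1:ℂ)*z)) (s:ℂ) := by
        exact HasDerivAt.comp (𝕜 := ℂ) ((s:ℂ)) hB hA
      have hGc : HasDerivAt (fun w : ℂ => w * z * deriv p (w * z))
          ((1:ℂ)*z * deriv p ((s:ℂ)*z) + (s:ℂ)*z * (deriv (deriv p) ((s:ℂ)*z) * ((1:ℂ)*z)))
          (s:ℂ) := hA.mul hC
      have hG' : HasDerivAt G
          ((1:ℂ)*z * deriv p ((s:ℂ)*z) + (s:ℂ)*z * (deriv (deriv p) ((s:ℂ)*z) * ((1:ℂ)*z))) s :=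
        hGc.comp_ofReal
      have hprod : HasDerivAt F (((c * s ^ (c-1) : ℝ) : ℂ) * G s + ((s ^ c : ℝ) : ℂ) *
          ((1:ℂ)*z * deriv p ((s:ℂ)*z) + (s:ℂ)*z * (deriv (deriv p) ((s:ℂ)*z) * ((1:ℂ)*z)))) s :=
        h1'.mul hG'
      convert hprod using 1
      have hsc : (s:ℝ) ^ c = s ^ (c-1) * s := by
        rw [show c = (c - 1) + 1 by ring, Real.rpow_add_one hs0.ne']
        ring_nf
      have hcc : ((c:ℝ):ℂ) = (β₁:ℂ)/(β₂:ℂ) - 1 := by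
        rw [hc]; push_cast; ring
      simp only [hφ, hG, hsc]
      push_cast
      rw [hcc]
      field_simp
      ring
    have hφcont : ContinuousOn φ (Set.uIcc ε 1) := by
      rw [Set.uIcc_of_le hε1]
      have hsub : Icc ε 1 ⊆ Icc (0:ℝ) 1 := Icc_subset_Icc hε0.le le_rfl
      have hrp : ContinuousOn (fun s : ℝ => ((s ^ (c-1) : ℝ) : ℂ)) (Icc ε 1) := by
        apply Complex.continuous_ofReal.comp_continuousOn
        intro s hs
        exact (Real.continuousAt_rpow_const s (c-1)
          (Or.inl (ne_of_gt (lt_of_lt_of_le hε0 hs.1)))).continuousWithinAt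
      apply hrp.mul
      apply ContinuousOn.div_const
      apply ContinuousOn.add
      · exact (continuousOn_const.mul (hray.mono hsub)).mul (hcontp'.mono hsub)
      · exact (continuousOn_const.mul ((hray.mono hsub).pow 2)).mul (hcontp''.mono hsub)
    have hFTC : ∫ s in ε..1, φ s = F 1 - F ε :=
      integral_eq_sub_of_hasDerivAt hFderiv hφcont.intervalIntegrable
    -- bound the integral
    have hbound : ∀ s ∈ Set.Ioc ε 1, ‖φ s‖ ≤ (7/4 * Complex.abs z / β₂) * s ^ c := by
      intro s hs
      have hs0 : 0 < s := lt_trans hε0 hs.1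
      have hsz : (s:ℂ) * z ∈ ball (0:ℂ) 1 := hmem s hs0.le hs.2
      have habs : Complex.abs ((s:ℂ) * z) = s * Complex.abs z := by
        rw [map_mul, Complex.abs_ofReal, abs_of_nonneg hs0.le]
      have hh := hsch ((s:ℂ)*z) hsz
      rw [habs] at hh
      have hrp : (0:ℝ) ≤ s ^ (c-1) := Real.rpow_nonneg hs0.le _
      calc ‖φ s‖ = s ^ (c-1) * (Complex.abs ((β₁:ℂ) * ((s:ℂ)*z) * deriv p ((s:ℂ)*z)
              + (β₂:ℂ) * ((s:ℂ)*z) ^ 2 * deriv (deriv p) ((s:ℂ)*z)) / β₂) := by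
            simp only [hφ, Complex.norm_eq_abs, map_mul, map_div₀, Complex.abs_ofReal,
              abs_of_nonneg hrp, abs_of_nonneg hβ₂.le]
      _ ≤ s ^ (c-1) * ((7/4 * (s * Complex.abs z)) / β₂) := by
            apply mul_le_mul_of_nonneg_left _ hrp
            gcongr
      _ = (7/4 * Complex.abs z / β₂) * (s ^ (c-1) * s) := by ring
      _ = (7/4 * Complex.abs z / β₂) * s ^ c := by
            rw [show c = (c - 1) + 1 by ring, Real.rpow_add_one hs0.ne']
            ring_nf
    have hgint : IntervalIntegrable (fun s : ℝ => (7/4 * Complex.abs z / β₂) * s ^ c)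
        volume ε 1 := by
      apply ContinuousOn.intervalIntegrable
      rw [Set.uIcc_of_le hε1]
      apply continuousOn_const.mul
      intro s hs
      exact (Real.continuousAt_rpow_const s c
        (Or.inl (ne_of_gt (lt_of_lt_of_le hε0 hs.1)))).continuousWithinAt
    have hεle : ε ^ (c+1) ≤ 1 := Real.rpow_le_one hε0.le hε1 hc1pos.le
    have hnorm : ‖∫ s in ε..1, φ s‖ ≤ (7/4 * Complex.abs z / β₂) * ((1 - ε ^ (c+1)) / (c+1)) := by
      have hval : (∫ s in ε..1, (7/4 * Complex.abs z / β₂) * s ^ c)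
          = (7/4 * Complex.abs z / β₂) * ((1 - ε ^ (c+1)) / (c+1)) := by
        rw [intervalIntegral.integral_const_mul,
          integral_rpow (Or.inl (by linarith : (-1:ℝ) < c)), Real.one_rpow]
      have hmain := intervalIntegral.norm_integral_le_abs_of_norm_le (μ := volume) (a := ε) (b := 1)
        (f := φ) (g := fun s => (7/4 * Complex.abs z / β₂) * s ^ c) ?_ hgint
      · rw [hval] at hmain
        refine hmain.trans ?_
        rw [abs_of_nonneg]
        exact mul_nonneg (by positivity) (div_nonneg (by linarith) hc1pos.le)
      · rw [Set.uIoc_of_le hε1]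
        exact (ae_restrict_iff' measurableSet_Ioc).mpr (Filter.Eventually.of_forall hbound)
    have hF1 : F 1 = z * deriv p z := by
      simp only [hF, hG]
      norm_num [Real.one_rpow]
    have hFε : Complex.abs (F ε) ≤ ε ^ (c+1) * (M * Complex.abs z) := by
      have hMε := hM ε ⟨hε0.le, hε1⟩
      have habs : Complex.abs ((ε:ℂ) * z) = ε * Complex.abs z := by
        rw [map_mul, Complex.abs_ofReal, abs_of_nonneg hε0.le]
      calc Complex.abs (F ε) = ε ^ c * (Complex.abs ((ε:ℂ)*z) * Complex.abs (deriv p ((ε:ℂ)*z))) := by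
            simp only [hF, hG, map_mul, Complex.abs_ofReal,
              abs_of_nonneg (Real.rpow_nonneg hε0.le c)]
      _ ≤ ε ^ c * ((ε * Complex.abs z) * M) := by
            apply mul_le_mul_of_nonneg_left _ (Real.rpow_nonneg hε0.le c)
            rw [habs]
            apply mul_le_mul_of_nonneg_left _ (by positivity)
            exact hMε
      _ = (ε ^ c * ε) * (M * Complex.abs z) := by ring
      _ = ε ^ (c+1) * (M * Complex.abs z) := by rw [Real.rpow_add_one hε0.ne']
    -- combine
    have hcomb : Complex.abs (z * deriv p z) ≤ Complex.abs (F ε) + ‖∫ s in ε..1, φ s‖ := by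
      rw [← hF1]
      have : F 1 = F ε + ∫ s in ε..1, φ s := by rw [hFTC]; ring
      rw [this]
      exact Complex.abs.add_le _ _
    have hfrac : (7/4 * Complex.abs z / β₂) * ((1 - ε ^ (c+1)) / (c+1))
        ≤ 7/4 * Complex.abs z / β₁ := by
      have hεpow : 0 ≤ ε ^ (c+1) := Real.rpow_nonneg hε0.le _
      have hβprod : β₂ * (c+1) = β₁ := by rw [hc1]; field_simp
      have heq : (7/4 * Complex.abs z / β₂) * (1 / (c+1)) = 7/4 * Complex.abs z / β₁ := by
        rw [← hβprod]; field_simp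
      calc (7/4 * Complex.abs z / β₂) * ((1 - ε ^ (c+1)) / (c+1))
          ≤ (7/4 * Complex.abs z / β₂) * (1 / (c+1)) := by gcongr; linarith
        _ = 7/4 * Complex.abs z / β₁ := heq
    calc Complex.abs (z * deriv p z) ≤ Complex.abs (F ε) + ‖∫ s in ε..1, φ s‖ := hcomb
      _ ≤ ε ^ (c+1) * (M * Complex.abs z) + (7/4 * Complex.abs z / β₂) * ((1 - ε ^ (c+1)) / (c+1)) :=
          add_le_add hFε hnorm
      _ ≤ ε ^ (c+1) * (M * Complex.abs z) + 7/4 * Complex.abs z / β₁ := by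
          exact add_le_add_right hfrac _
  -- limit ε → 0⁺
  have h0 : Filter.Tendsto (fun ε : ℝ => ε ^ (c+1)) (nhdsWithin 0 (Ioi 0)) (nhds 0) := by
    have hcw := (Real.continuousAt_rpow_const 0 (c+1) (Or.inr hc1pos.le)).continuousWithinAt
      (s := Ioi (0:ℝ))
    have hc0 : (0:ℝ) ^ (c+1) = 0 := Real.zero_rpow hc1pos.ne'
    simpa [ContinuousWithinAt, hc0] using hcw
  have hlim : Filter.Tendsto
      (fun ε : ℝ => ε ^ (c+1) * (M * Complex.abs z) + 7/4 * Complex.abs z / β₁)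
      (nhdsWithin 0 (Ioi 0)) (nhds (7/4 * Complex.abs z / β₁)) := by
    have := (h0.mul_const (M * Complex.abs z)).add_const (7/4 * Complex.abs z / β₁)
    simpa using this
  refine ge_of_tendsto hlim ?_
  filter_upwards [Ioc_mem_nhdsGT_of_mem (Set.left_mem_Ico.mpr one_pos)] with ε hε
  exact key ε hε

lemma gbound (β₁ β₂ : ℝ) (hβ₁ : 0 < β₁) (hβ₂ : 0 < β₂)
    (p : ℂ → ℂ) (hp : AnalyticOnNhd ℂ p (ball 0 1)) (hp0 : p 0 = 1)
    (hsch : ∀ t ∈ ball (0:ℂ) 1,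
      Complex.abs ((β₁:ℂ) * t * deriv p t + (β₂:ℂ) * t ^ 2 * deriv (deriv p) t)
        ≤ 7/4 * Complex.abs t) :
    ∀ z ∈ ball (0:ℂ) 1, Complex.abs (p z - 1) ≤ 7/4 * Complex.abs z / β₁ := by
  intro z hz
  have hzb : Complex.abs z < 1 := by simpa [mem_ball, dist_zero_right, Complex.norm_eq_abs] using hz
  have hmem : ∀ s : ℝ, 0 ≤ s → s ≤ 1 → (s:ℂ) * z ∈ ball (0:ℂ) 1 := by
    intro s h0 h1
    rw [mem_ball_zero_iff, norm_mul, Complex.norm_real, Real.norm_of_nonneg h0,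
      Complex.norm_eq_abs]
    calc s * Complex.abs z ≤ 1 * Complex.abs z := by
          apply mul_le_mul_of_nonneg_right h1 (Complex.abs.nonneg z)
      _ < 1 := by simpa using hzb
  have hv := vbound β₁ β₂ hβ₁ hβ₂ p hp hsch
  have hψ : ∀ s ∈ Set.uIcc (0:ℝ) 1,
      HasDerivAt (fun s : ℝ => p ((s:ℂ)*z)) (z * deriv p ((s:ℂ)*z)) s := by
    intro s hs
    rw [Set.uIcc_of_le zero_le_one] at hs
    have hsz := hmem s hs.1 hs.2
    have hA : HasDerivAt (fun w : ℂ => w * z) ((1:ℂ)*z) (s:ℂ) := (hasDerivAt_id _).mul_const z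
    have hB : HasDerivAt p (deriv p ((s:ℂ)*z)) ((s:ℂ)*z) :=
      ((hp _ hsz).differentiableAt).hasDerivAt
    have hcomp : HasDerivAt (fun s : ℝ => p ((s:ℂ)*z)) (deriv p ((s:ℂ)*z) * ((1:ℂ)*z)) s :=
      (HasDerivAt.comp (𝕜 := ℂ) ((s:ℂ)) hB hA).comp_ofReal
    convert hcomp using 1
    ring
  have hray : ContinuousOn (fun s : ℝ => (s:ℂ) * z) (Icc 0 1) :=
    (Complex.continuous_ofReal.continuousOn.mul continuousOn_const)
  have hmapsTo : MapsTo (fun s : ℝ => (s:ℂ) * z) (Icc 0 1) (ball (0:ℂ) 1) :=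
    fun s hs => hmem s hs.1 hs.2
  have hcontp' : ContinuousOn (fun s : ℝ => deriv p ((s:ℂ) * z)) (Icc 0 1) :=
    hp.deriv.continuousOn.comp hray hmapsTo
  have hint : IntervalIntegrable (fun s : ℝ => z * deriv p ((s:ℂ)*z)) volume 0 1 := by
    apply ContinuousOn.intervalIntegrable
    rw [Set.uIcc_of_le zero_le_one]
    exact continuousOn_const.mul hcontp'
  have hFTC : ∫ s in (0:ℝ)..1, z * deriv p ((s:ℂ)*z) = p z - 1 := by
    rw [integral_eq_sub_of_hasDerivAt hψ hint]
    norm_num [hp0]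
  have hC : ∀ s ∈ Set.uIoc (0:ℝ) 1, ‖z * deriv p ((s:ℂ)*z)‖ ≤ 7/4 * Complex.abs z / β₁ := by
    intro s hs
    rw [Set.uIoc_of_le zero_le_one] at hs
    have hs0 : 0 < s := hs.1
    have hsz := hmem s hs0.le hs.2
    have hvs := hv ((s:ℂ)*z) hsz
    have habs : Complex.abs ((s:ℂ) * z) = s * Complex.abs z := by
      rw [map_mul, Complex.abs_ofReal, abs_of_nonneg hs0.le]
    have hassoc : Complex.abs ((s:ℂ)*z * deriv p ((s:ℂ)*z))
        = s * Complex.abs (z * deriv p ((s:ℂ)*z)) := by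
      rw [mul_assoc, map_mul, Complex.abs_ofReal, abs_of_nonneg hs0.le]
    rw [hassoc, habs] at hvs
    rw [Complex.norm_eq_abs]
    have : s * Complex.abs (z * deriv p ((s:ℂ)*z)) ≤ s * (7/4 * Complex.abs z / β₁) := by
      calc s * Complex.abs (z * deriv p ((s:ℂ)*z)) ≤ 7/4 * (s * Complex.abs z) / β₁ := hvs
        _ = s * (7/4 * Complex.abs z / β₁) := by ring
    exact le_of_mul_le_mul_left this hs0
  have := intervalIntegral.norm_integral_le_of_norm_le_const hC
  rw [hFTC] at this
  simpa [Complex.norm_eq_abs] using this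


end Stmt14Aux

open Metric
theorem stmt14 (β₁ β₂ : ℝ) (hβ₁ : 0 < β₁) (hβ₂ : 0 < β₂)
    (hcond : (2 * β₁ - β₂) ≥ 2 * Real.sqrt 2 * (Real.exp 1 - 1))
    (p : ℂ → ℂ) (hp : AnalyticOnNhd ℂ p (ball 0 1)) (hp0 : p 0 = 1)
    (hsub : ∀ z ∈ ball (0 : ℂ) 1,
      (1 + (β₁ : ℂ) * z * deriv p z + (β₂ : ℂ) * z ^ 2 * deriv (deriv p) z) ≠ 0 ∧ ‖Complex.log (1 + (β₁ : ℂ) * z * deriv p z + (β₂ : ℂ) * z ^ 2 * deriv (deriv p) z)‖ < 1) :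
    ∀ z ∈ ball (0 : ℂ) 1, ∃ w ∈ ball (0 : ℂ) 1, p z = 1 + Complex.log (w + (1 + w ^ 2) ^ ((1 : ℂ) / 2)) := by
  intro z hz
  set h : ℂ → ℂ := fun t => (β₁:ℂ)*t*deriv p t + (β₂:ℂ)*t^2*deriv (deriv p) t with hh
  have han : AnalyticOnNhd ℂ h (ball 0 1) := fun t ht =>
    ((analyticAt_const.mul analyticAt_id).mul (hp.deriv t ht)).add
      ((analyticAt_const.mul (analyticAt_id.pow 2)).mul (hp.deriv.deriv t ht))
  have hd : DifferentiableOn ℂ h (ball 0 1) := han.differentiableOn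
  have h0 : h 0 = 0 := by simp [hh]
  have hlt : ∀ t ∈ ball (0:ℂ) 1, Complex.abs (h t) < 7/4 := by
    intro t ht
    obtain ⟨hne, hlog⟩ := hsub t ht
    have h1 : h t = Complex.exp (Complex.log
        (1 + (β₁:ℂ)*t*deriv p t + (β₂:ℂ)*t^2*deriv (deriv p) t)) - 1 := by
      rw [Complex.exp_log hne]; simp only [hh]; ring
    rw [h1]
    exact Stmt14Aux.expm1_lt _ hlog
  have hmaps : MapsTo h (ball (0:ℂ) 1) (ball (h 0) (7/4)) := by
    intro t ht
    rw [h0, mem_ball_zero_iff, Complex.norm_eq_abs]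
    exact hlt t ht
  have hsch : ∀ t ∈ ball (0:ℂ) 1, Complex.abs (h t) ≤ 7/4 * Complex.abs t := by
    intro t ht
    have := Complex.dist_le_div_mul_dist_of_mapsTo_ball hd (hmaps.mono_right ball_subset_closedBall) ht
    rw [h0] at this
    simpa [Complex.dist_eq, Complex.norm_eq_abs] using this
  have hg := Stmt14Aux.gbound β₁ β₂ hβ₁ hβ₂ p hp hp0 hsch z hz
  -- numerics
  have hzb : Complex.abs z < 1 := by simpa [mem_ball, dist_zero_right, Complex.norm_eq_abs] using hz
  have hsq : Real.sqrt 2 ^ 2 = 2 := Real.sq_sqrt (by norm_num)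
  have hsqnn : 0 ≤ Real.sqrt 2 := Real.sqrt_nonneg 2
  have hsqrt2 : (1.414:ℝ) ≤ Real.sqrt 2 := by nlinarith
  have he : (2.7182818:ℝ) < Real.exp 1 := by
    have := Real.exp_one_gt_d9; linarith
  have hβ : (2.42:ℝ) < β₁ := by nlinarith
  set u := p z - 1 with hu
  have hub : Complex.abs u < 0.73 := by
    have h1 : 7/4 * Complex.abs z / β₁ ≤ 7/4 / β₁ := by
      gcongr
      nlinarith [Complex.abs.nonneg z]
    have h2 : 7/4 / β₁ < 0.73 := by
      rw [div_lt_iff₀ (by linarith)]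
      nlinarith
    calc Complex.abs u ≤ 7/4 * Complex.abs z / β₁ := hg
      _ ≤ 7/4 / β₁ := h1
      _ < 0.73 := h2
  -- construct w
  set w := Complex.sinh u with hw
  have hu1 : Complex.abs u ≤ 1 := by linarith
  have hwb : Complex.abs w < 1 := by
    have := Stmt14Aux.sinh_bound u hu1
    have h3 : Complex.abs u ^ 3 < 0.73 ^ 3 :=
      pow_lt_pow_left₀ hub (Complex.abs.nonneg u) (by norm_num)
    calc Complex.abs w ≤ Complex.abs u + 2/9 * Complex.abs u ^ 3 := this
      _ < 0.73 + 2/9 * 0.73 ^ 3 := by nlinarith [Complex.abs.nonneg u]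
      _ < 1 := by norm_num
  have him : |u.im| < 0.73 := lt_of_le_of_lt (Complex.abs_im_le_norm u) hub
  have hure : |u.re| < 0.73 := lt_of_le_of_lt (Complex.abs_re_le_norm u) hub
  have hpi : (3.141592:ℝ) < Real.pi := by
    have := Real.pi_gt_d6; linarith
  have hcosh : Complex.cosh u = (Complex.exp u + Complex.exp (-u)) / 2 := by
    rw [← Complex.two_cosh]; ring
  have hcoshre : 0 < (Complex.cosh u).re := by
    rw [hcosh]
    rw [Complex.div_ofNat_re, Complex.add_re, Complex.exp_re, Complex.exp_re]
    have hcos : 0 < Real.cos u.im := by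
      apply Real.cos_pos_of_mem_Ioo
      constructor
      · nlinarith [abs_lt.mp him]
      · nlinarith [abs_lt.mp him]
    have : Real.cos (-u).im = Real.cos u.im := by
      rw [Complex.neg_im, Real.cos_neg]
    rw [this]
    have e1 := Real.exp_pos u.re
    have e2 := Real.exp_pos (-u).re
    positivity
  have hsqrt : (1 + w ^ 2) ^ ((1:ℂ)/2) = Complex.cosh u := by
    have : (1:ℂ) + w ^ 2 = Complex.cosh u ^ 2 := by
      rw [hw, Complex.cosh_sq]; ring
    rw [this]
    exact Stmt14Aux.sq_half _ hcoshre
  have hexp : w + (1 + w ^ 2) ^ ((1:ℂ)/2) = Complex.exp u := by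
    rw [hsqrt, hw, Complex.sinh_add_cosh]
  refine ⟨w, ?_, ?_⟩
  · rw [mem_ball_zero_iff, Complex.norm_eq_abs]; exact hwb
  · rw [hexp, Complex.log_exp (by nlinarith [abs_lt.mp him]) (by nlinarith [abs_lt.mp him])]
    rw [hu]; ring
end
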